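/- arXiv:2501.15556 — 5 statements merged into one kernel-verified Lean document; each statement's English description precedes it below -/
import Mathlib

section
/- Let v₁, v₂ : ℝⁿ → ℝⁿ be continuously differentiable vector fields with flows Φ₁, Φ₂ (i.e. Φₐ(0,x) = x and ∂Φₐ/∂t(t,x) = vₐ(Φₐ(t,x)) for t near 0). Then for each fixed x, as (t₁,t₂) → (0,0), Φ₂(t₂, Φ₁(t₁, x)) = x + t₁·v₁(x) + t₂·v₂(x) + t₁t₂·Dv₂(x)v₁(x) + (t₁²/2)·Dv₁(x)v₁(x) + (t₂²/2)·Dv₂(x)v₂(x) + o(t₁² + t₂²). -/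
open Asymptotics Topology Set

lemma escape_bound {E : Type*} [NormedAddCommGroup E] [NormedSpace ℝ E]
    (f : ℝ → E) (f' : ℝ → E) (δ M ρ : ℝ) (hM : 0 < M) (hMδ : M * δ ≤ ρ)
    (hf : ∀ t ∈ Set.Icc 0 δ, HasDerivAt f (f' t) t)
    (hb : ∀ t ∈ Set.Icc 0 δ, ‖f t - f 0‖ ≤ ρ → ‖f' t‖ ≤ M) :
    ∀ t ∈ Set.Icc 0 δ, ‖f t - f 0‖ ≤ M * t := by
  by_contra hcon
  push_neg at hcon
  obtain ⟨t₀, ht₀, ht₀'⟩ := hcon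
  set B : Set ℝ := {u | u ∈ Icc 0 δ ∧ M * u < ‖f u - f 0‖} with hB
  have hBne : B.Nonempty := ⟨t₀, ht₀, ht₀'⟩
  have hBbd : BddBelow B := ⟨0, fun u hu => hu.1.1⟩
  set T := sInf B with hT
  have hTlb : ∀ u ∈ B, T ≤ u := fun u hu => csInf_le hBbd hu
  have hTmem : T ∈ Icc 0 δ := by
    constructor
    · exact le_csInf hBne fun u hu => hu.1.1
    · exact le_trans (hTlb t₀ ⟨ht₀, ht₀'⟩) ht₀.2
  have hgood : ∀ u ∈ Icc 0 δ, u < T → ‖f u - f 0‖ ≤ M * u := by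
    intro u hu hlt
    by_contra h
    exact absurd (hTlb u ⟨hu, lt_of_not_ge h⟩) (not_le.2 hlt)
  have hcontf : ∀ u ∈ Icc 0 δ, ContinuousAt f u := fun u hu => (hf u hu).continuousAt
  have hTgood : ‖f T - f 0‖ ≤ M * T := by
    rcases eq_or_lt_of_le hTmem.1 with h0 | h0
    · simp [← h0]
    · have h1 : Filter.Tendsto (fun u => ‖f u - f 0‖) (nhdsWithin T (Iio T))
          (nhds ‖f T - f 0‖) :=
        (((hcontf T hTmem).sub continuousAt_const).norm).continuousWithinAt
      have h2 : Filter.Tendsto (fun u => M * u) (nhdsWithin T (Iio T)) (nhds (M * T)) :=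
        ((continuous_const.mul continuous_id).continuousAt).continuousWithinAt
      have hev : ∀ᶠ u in nhdsWithin T (Iio T), ‖f u - f 0‖ ≤ M * u := by
        filter_upwards [Ioo_mem_nhdsLT_of_mem (⟨h0, le_refl T⟩ : T ∈ Ioc 0 T)] with u hu
        exact hgood u ⟨hu.1.le, hu.2.le.trans hTmem.2⟩ hu.2
      exact le_of_tendsto_of_tendsto h1 h2 hev
  have hTlt : T < δ := by
    rcases lt_or_eq_of_le hTmem.2 with h | h
    · exact h
    · exfalso
      have h1 : t₀ = T := le_antisymm (h ▸ ht₀.2) (hTlb t₀ ⟨ht₀, ht₀'⟩)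
      rw [h1] at ht₀'
      exact absurd hTgood (not_le.2 ht₀')
  have hTρ : ‖f T - f 0‖ < ρ :=
    lt_of_le_of_lt hTgood (lt_of_lt_of_le (mul_lt_mul_of_pos_left hTlt hM) hMδ)
  have hev : ∀ᶠ u in nhds T, ‖f u - f 0‖ < ρ :=
    (((hcontf T hTmem).sub continuousAt_const).norm).eventually_lt_const hTρ
  obtain ⟨ε, hε, hεb⟩ := Metric.eventually_nhds_iff.1 hev
  set η := min (ε / 2) ((δ - T) / 2) with hη
  have hη0 : 0 < η := lt_min (half_pos hε) (half_pos (sub_pos.2 hTlt))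
  have hηδ : T + η ≤ δ := by
    have : η ≤ (δ - T) / 2 := min_le_right _ _
    linarith
  have hbnd : ∀ u ∈ Icc 0 (T + η), ‖f' u‖ ≤ M := by
    intro u hu
    have huδ : u ∈ Icc 0 δ := ⟨hu.1, hu.2.trans hηδ⟩
    rcases lt_or_ge u T with h | h
    · exact hb u huδ ((hgood u huδ h).trans (le_trans
        (mul_le_mul_of_nonneg_left huδ.2 hM.le) hMδ))
    · refine hb u huδ (le_of_lt (hεb ?_))
      rw [Real.dist_eq, abs_lt]
      have hh : η ≤ ε / 2 := min_le_left _ _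
      constructor <;> linarith [hu.2]
  have hmvt := norm_image_sub_le_of_norm_deriv_le_segment'
    (f' := f') (a := 0) (b := T + η) (C := M)
    (fun u hu => (hf u ⟨hu.1, hu.2.trans hηδ⟩).hasDerivWithinAt)
    (fun u hu => hbnd u (Ico_subset_Icc_self hu))
  have hlbB : ∀ u ∈ B, T + η ≤ u := by
    intro u hu
    by_contra h
    push_neg at h
    have := hmvt u ⟨hu.1.1, h.le⟩
    rw [sub_zero] at this
    exact absurd this (not_le.2 hu.2)
  have := le_csInf hBne hlbB
  rw [← hT] at this
  linarith

lemma flow_apriori {E : Type*} [NormedAddCommGroup E] [NormedSpace ℝ E]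
    (v : E → E) (Φ : ℝ → E) (y : E) (δ M ρ : ℝ) (hM : 0 < M) (hMδ : M * δ ≤ ρ)
    (hΦ0 : Φ 0 = y)
    (hd : ∀ t : ℝ, |t| ≤ δ → HasDerivAt Φ (v (Φ t)) t)
    (hv : ∀ z, ‖z - y‖ ≤ ρ → ‖v z‖ ≤ M) :
    ∀ t : ℝ, |t| ≤ δ → ‖Φ t - y‖ ≤ M * |t| := by
  intro t ht
  rcases le_or_gt 0 t with h0 | h0
  · have := escape_bound Φ (fun s => v (Φ s)) δ M ρ hM hMδ
      (fun s hs => hd s (by rw [abs_of_nonneg hs.1]; exact hs.2))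
      (fun s hs hb => hv _ (by rwa [hΦ0] at hb))
      t ⟨h0, by rwa [abs_of_nonneg h0] at ht⟩
    rw [hΦ0] at this
    rwa [abs_of_nonneg h0]
  · have key := escape_bound (fun s => Φ (-s)) (fun s => (-1 : ℝ) • v (Φ (-s))) δ M ρ hM hMδ
      (fun s hs => ((hd (-s) (by rw [abs_neg, abs_of_nonneg hs.1]; exact hs.2)).scomp s
        (hasDerivAt_neg s)))
      (fun s hs hb => by
        rw [norm_smul]
        simp only [norm_neg, norm_one]
        rw [one_mul]
        refine hv _ ?_
        simpa [hΦ0] using hb)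
      (-t) ⟨by linarith, by rwa [abs_of_neg h0] at ht⟩
    simp only [neg_neg, neg_zero, hΦ0] at key
    rw [abs_of_neg h0]
    exact key


section KeyIntegral
open MeasureTheory intervalIntegral

lemma key_integral_bound {E : Type*} [NormedAddCommGroup E] [NormedSpace ℝ E] [CompleteSpace E]
    {w : E → E} (hw : Continuous w) (f : ℝ → E) (t : ℝ) (c₀ c₁ : E) (C : ℝ)
    (hf : ∀ s ∈ Set.uIcc 0 t, HasDerivAt f (w (f s)) s)
    (hC : ∀ s ∈ Set.uIcc 0 t, ‖w (f s) - (c₀ + s • c₁)‖ ≤ C) :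
    ‖f t - f 0 - t • c₀ - (t ^ 2 / 2) • c₁‖ ≤ C * |t| := by
  have hcont : ContinuousOn (fun s => w (f s)) (Set.uIcc 0 t) :=
    fun s hs => (hw.continuousAt.comp (hf s hs).continuousAt).continuousWithinAt
  have hint : IntervalIntegrable (fun s => w (f s)) volume 0 t := hcont.intervalIntegrable
  have hint2 : IntervalIntegrable (fun s : ℝ => c₀ + s • c₁) volume 0 t :=
    (continuous_const.add (continuous_id.smul continuous_const)).intervalIntegrable 0 t
  have hftc : ∫ s in (0:ℝ)..t, w (f s) = f t - f 0 :=
    integral_eq_sub_of_hasDerivAt hf hint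
  have haff : ∫ s in (0:ℝ)..t, (c₀ + s • c₁) = t • c₀ + (t ^ 2 / 2) • c₁ := by
    rw [integral_add (f := fun _ : ℝ => c₀) (g := fun s : ℝ => s • c₁)
      intervalIntegrable_const
      ((continuous_id.smul continuous_const).intervalIntegrable 0 t),
      intervalIntegral.integral_smul_const, intervalIntegral.integral_const, integral_id]
    norm_num
  have heq : f t - f 0 - t • c₀ - (t ^ 2 / 2) • c₁
      = ∫ s in (0:ℝ)..t, (w (f s) - (c₀ + s • c₁)) := by
    rw [integral_sub hint hint2, hftc, haff]; abel
  rw [heq]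
  have := intervalIntegral.norm_integral_le_of_norm_le_const
    (C := C) (f := fun s => w (f s) - (c₀ + s • c₁)) (a := 0) (b := t)
    (fun s hs => hC s (Set.uIoc_subset_uIcc hs))
  simpa using this

end KeyIntegral

set_option maxHeartbeats 2000000 in
/-- Second-order Taylor expansion of the composition of two flows:
`Φ₂(t₂, Φ₁(t₁, x)) = x + t₁·v₁(x) + t₂·v₂(x) + t₁t₂·Dv₂(x)v₁(x)
  + (t₁²/2)·Dv₁(x)v₁(x) + (t₂²/2)·Dv₂(x)v₂(x) + o(t₁² + t₂²)`
as `(t₁, t₂) → (0, 0)`, for each fixed `x`. -/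
theorem flow_composition_second_order_expansion {n : ℕ}
    (v₁ v₂ : EuclideanSpace ℝ (Fin n) → EuclideanSpace ℝ (Fin n))
    (hv₁ : ContDiff ℝ 1 v₁) (hv₂ : ContDiff ℝ 1 v₂)
    (Φ₁ Φ₂ : ℝ → EuclideanSpace ℝ (Fin n) → EuclideanSpace ℝ (Fin n))
    (hΦ₁0 : ∀ x, Φ₁ 0 x = x) (hΦ₂0 : ∀ x, Φ₂ 0 x = x)
    (hΦ₁ : ∃ r > (0 : ℝ), ∀ x, ∀ t : ℝ, |t| < r →
      HasDerivAt (fun s => Φ₁ s x) (v₁ (Φ₁ t x)) t)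
    (hΦ₂ : ∃ r > (0 : ℝ), ∀ x, ∀ t : ℝ, |t| < r →
      HasDerivAt (fun s => Φ₂ s x) (v₂ (Φ₂ t x)) t)
    (x : EuclideanSpace ℝ (Fin n)) :
    (fun p : ℝ × ℝ =>
        Φ₂ p.2 (Φ₁ p.1 x) - x - p.1 • v₁ x - p.2 • v₂ x
          - (p.1 * p.2) • (fderiv ℝ v₂ x (v₁ x))
          - (p.1 ^ 2 / 2) • (fderiv ℝ v₁ x (v₁ x))
          - (p.2 ^ 2 / 2) • (fderiv ℝ v₂ x (v₂ x)))
      =o[𝓝 0] fun p : ℝ × ℝ => p.1 ^ 2 + p.2 ^ 2 := by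
  obtain ⟨r₁, hr₁, hd₁⟩ := hΦ₁
  obtain ⟨r₂, hr₂, hd₂⟩ := hΦ₂
  have hA : HasFDerivAt v₁ (fderiv ℝ v₁ x) x := (hv₁.differentiable one_ne_zero x).hasFDerivAt
  have hBm : HasFDerivAt v₂ (fderiv ℝ v₂ x) x := (hv₂.differentiable one_ne_zero x).hasFDerivAt
  set a := v₁ x with ha
  set b := v₂ x with hb
  set A := fderiv ℝ v₁ x with hAdef
  set Bm := fderiv ℝ v₂ x with hBdef
  -- Lipschitz constants
  obtain ⟨K₁, s₁, hs₁, hl₁⟩ := (hv₁.contDiffAt (x := x)).exists_lipschitzOnWith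
  obtain ⟨K₂, s₂, hs₂, hl₂⟩ := (hv₂.contDiffAt (x := x)).exists_lipschitzOnWith
  obtain ⟨ρ₁, hρ₁, hball₁⟩ := Metric.mem_nhds_iff.1 hs₁
  obtain ⟨ρ₂, hρ₂, hball₂⟩ := Metric.mem_nhds_iff.1 hs₂
  set ρ : ℝ := min ρ₁ ρ₂ / 3 with hρdef
  have hρ : 0 < ρ := div_pos (lt_min hρ₁ hρ₂) (by norm_num)
  set K : ℝ := max (K₁ : ℝ) (K₂ : ℝ) with hKdef
  have hK0 : 0 ≤ K := le_trans K₁.coe_nonneg (le_max_left _ _)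
  -- Lipschitz bounds on the ball of radius 2ρ
  have hmem : ∀ z : EuclideanSpace ℝ (Fin n), ‖z - x‖ ≤ 2 * ρ → z ∈ s₁ ∩ s₂ := by
    intro z hz
    constructor
    · apply hball₁
      rw [Metric.mem_ball, dist_eq_norm]
      calc ‖z - x‖ ≤ 2 * ρ := hz
        _ < ρ₁ := by rw [hρdef]; rcases min_le_left ρ₁ ρ₂ with h; linarith [min_le_left ρ₁ ρ₂]
    · apply hball₂
      rw [Metric.mem_ball, dist_eq_norm]
      calc ‖z - x‖ ≤ 2 * ρ := hz
        _ < ρ₂ := by rw [hρdef]; linarith [min_le_right ρ₁ ρ₂]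
  have hlip₁ : ∀ z w : EuclideanSpace ℝ (Fin n), ‖z - x‖ ≤ 2 * ρ → ‖w - x‖ ≤ 2 * ρ →
      ‖v₁ z - v₁ w‖ ≤ K * ‖z - w‖ := by
    intro z w hz hw
    have := hl₁.dist_le_mul z (hmem z hz).1 w (hmem w hw).1
    rw [dist_eq_norm, dist_eq_norm] at this
    exact this.trans (mul_le_mul_of_nonneg_right (le_max_left _ _) (norm_nonneg _))
  have hlip₂ : ∀ z w : EuclideanSpace ℝ (Fin n), ‖z - x‖ ≤ 2 * ρ → ‖w - x‖ ≤ 2 * ρ →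
      ‖v₂ z - v₂ w‖ ≤ K * ‖z - w‖ := by
    intro z w hz hw
    have := hl₂.dist_le_mul z (hmem z hz).2 w (hmem w hw).2
    rw [dist_eq_norm, dist_eq_norm] at this
    exact this.trans (mul_le_mul_of_nonneg_right (le_max_right _ _) (norm_nonneg _))
  -- bound M on the velocity fields
  set M : ℝ := max ‖a‖ ‖b‖ + K * (2 * ρ) + 1 with hMdef
  have hM : 0 < M := by
    have h1 : 0 ≤ max ‖a‖ ‖b‖ := le_trans (norm_nonneg a) (le_max_left _ _)
    have h2 : 0 ≤ K * (2 * ρ) := mul_nonneg hK0 (by linarith)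
    linarith
  have hxx : ‖x - x‖ ≤ 2 * ρ := by simp; linarith
  have hMb₁ : ∀ z : EuclideanSpace ℝ (Fin n), ‖z - x‖ ≤ 2 * ρ → ‖v₁ z‖ ≤ M := by
    intro z hz
    have h1 : ‖v₁ z - v₁ x‖ ≤ K * ‖z - x‖ := hlip₁ z x hz hxx
    have h2 : K * ‖z - x‖ ≤ K * (2 * ρ) := mul_le_mul_of_nonneg_left hz hK0
    have h3 : ‖v₁ z‖ ≤ ‖v₁ x‖ + ‖v₁ z - v₁ x‖ := by
      have := norm_add_le (v₁ x) (v₁ z - v₁ x); simpa using this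
    have h4 : ‖v₁ x‖ ≤ max ‖a‖ ‖b‖ := le_max_left _ _
    rw [hMdef]; linarith
  have hMb₂ : ∀ z : EuclideanSpace ℝ (Fin n), ‖z - x‖ ≤ 2 * ρ → ‖v₂ z‖ ≤ M := by
    intro z hz
    have h1 : ‖v₂ z - v₂ x‖ ≤ K * ‖z - x‖ := hlip₂ z x hz hxx
    have h2 : K * ‖z - x‖ ≤ K * (2 * ρ) := mul_le_mul_of_nonneg_left hz hK0
    have h3 : ‖v₂ z‖ ≤ ‖v₂ x‖ + ‖v₂ z - v₂ x‖ := by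
      have := norm_add_le (v₂ x) (v₂ z - v₂ x); simpa using this
    have h4 : ‖v₂ x‖ ≤ max ‖a‖ ‖b‖ := le_max_right _ _
    rw [hMdef]; linarith
  -- the basic time scale
  set δ : ℝ := min (ρ / M) (min r₁ r₂ / 2) with hδdef
  have hδ0 : 0 < δ := lt_min (div_pos hρ hM) (by positivity)
  have hδr₁ : ∀ t : ℝ, |t| ≤ δ → |t| < r₁ := by
    intro t ht
    have := min_le_right (ρ / M) (min r₁ r₂ / 2)
    have h2 := min_le_left r₁ r₂
    linarith
  have hδr₂ : ∀ t : ℝ, |t| ≤ δ → |t| < r₂ := by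
    intro t ht
    have := min_le_right (ρ / M) (min r₁ r₂ / 2)
    have h2 := min_le_right r₁ r₂
    linarith
  have hMδ : M * δ ≤ ρ := by
    have h1 : δ ≤ ρ / M := min_le_left _ _
    calc M * δ ≤ M * (ρ / M) := mul_le_mul_of_nonneg_left h1 hM.le
      _ = ρ := by field_simp
  -- a priori bounds
  have hF1 : ∀ t : ℝ, |t| ≤ δ → ‖Φ₁ t x - x‖ ≤ M * |t| :=
    flow_apriori v₁ (fun s => Φ₁ s x) x δ M ρ hM hMδ (hΦ₁0 x)
      (fun t ht => hd₁ x t (hδr₁ t ht))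
      (fun z hz => hMb₁ z (by linarith))
  have hF2 : ∀ y : EuclideanSpace ℝ (Fin n), ‖y - x‖ ≤ ρ →
      ∀ t : ℝ, |t| ≤ δ → ‖Φ₂ t y - y‖ ≤ M * |t| := by
    intro y hy
    refine flow_apriori v₂ (fun s => Φ₂ s y) y δ M ρ hM hMδ (hΦ₂0 y)
      (fun t ht => hd₂ y t (hδr₂ t ht)) (fun z hz => hMb₂ z ?_)
    have : ‖z - x‖ ≤ ‖z - y‖ + ‖y - x‖ := by
      have := norm_add_le (z - y) (y - x); simpa using this
    linarith
  -- |s| ≤ |t| inside uIcc 0 t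
  have habs : ∀ t s : ℝ, s ∈ Set.uIcc 0 t → |s| ≤ |t| := by
    intro t s hs
    rw [Set.uIcc_eq_union] at hs
    rcases hs with hs | hs
    · rw [abs_of_nonneg hs.1]; exact le_trans hs.2 (le_abs_self t)
    · rw [abs_of_nonpos hs.2]; linarith [neg_le_abs t, hs.1]
  -- first-order expansions with quadratic error
  have hsq : ∀ t s : ℝ, |s| ≤ |t| → s ^ 2 ≤ t ^ 2 := by
    intro t s h
    rw [← sq_abs s, ← sq_abs t]
    exact pow_le_pow_left₀ (abs_nonneg s) h 2
  have hO1 : ∀ t : ℝ, |t| ≤ δ → ‖Φ₁ t x - x - t • a‖ ≤ K * M * t ^ 2 := by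
    intro t ht
    have key := key_integral_bound hv₁.continuous (fun s => Φ₁ s x) t a 0 (K * M * |t|)
      (fun s hs => hd₁ x s (hδr₁ s ((habs t s hs).trans ht)))
      (fun s hs => by
        have hsδ : |s| ≤ δ := (habs t s hs).trans ht
        have hΦs : ‖Φ₁ s x - x‖ ≤ M * |s| := hF1 s hsδ
        have hin : ‖Φ₁ s x - x‖ ≤ 2 * ρ := by
          have h2 : M * |s| ≤ M * δ := mul_le_mul_of_nonneg_left hsδ hM.le
          linarith
        have hl := hlip₁ (Φ₁ s x) x hin hxx
        have h3 : K * ‖Φ₁ s x - x‖ ≤ K * (M * |s|) := mul_le_mul_of_nonneg_left hΦs hK0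
        have h4 : K * (M * |s|) ≤ K * (M * |t|) :=
          mul_le_mul_of_nonneg_left (mul_le_mul_of_nonneg_left (habs t s hs) hM.le) hK0
        simp only [smul_zero, add_zero]
        calc ‖v₁ (Φ₁ s x) - a‖ ≤ K * ‖Φ₁ s x - x‖ := hl
          _ ≤ K * M * |t| := by rw [mul_assoc]; exact h3.trans h4)
    simp only [hΦ₁0 x, smul_zero, sub_zero] at key
    have heq : K * M * |t| * |t| = K * M * t ^ 2 := by
      rw [mul_assoc (K * M), abs_mul_abs_self, sq]
    rw [heq] at key
    exact key
  have hO2 : ∀ y : EuclideanSpace ℝ (Fin n), ‖y - x‖ ≤ ρ →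
      ∀ t : ℝ, |t| ≤ δ → ‖Φ₂ t y - y - t • v₂ y‖ ≤ K * M * t ^ 2 := by
    intro y hy t ht
    have hy2 : ‖y - x‖ ≤ 2 * ρ := by linarith
    have key := key_integral_bound hv₂.continuous (fun s => Φ₂ s y) t (v₂ y) 0 (K * M * |t|)
      (fun s hs => hd₂ y s (hδr₂ s ((habs t s hs).trans ht)))
      (fun s hs => by
        have hsδ : |s| ≤ δ := (habs t s hs).trans ht
        have hΦs : ‖Φ₂ s y - y‖ ≤ M * |s| := hF2 y hy s hsδ
        have hin : ‖Φ₂ s y - x‖ ≤ 2 * ρ := by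
          have h2 : M * |s| ≤ M * δ := mul_le_mul_of_nonneg_left hsδ hM.le
          have h5 : ‖Φ₂ s y - x‖ ≤ ‖Φ₂ s y - y‖ + ‖y - x‖ := by
            have := norm_add_le (Φ₂ s y - y) (y - x); simpa using this
          linarith
        have hl := hlip₂ (Φ₂ s y) y hin hy2
        have h3 : K * ‖Φ₂ s y - y‖ ≤ K * (M * |s|) := mul_le_mul_of_nonneg_left hΦs hK0
        have h4 : K * (M * |s|) ≤ K * (M * |t|) :=
          mul_le_mul_of_nonneg_left (mul_le_mul_of_nonneg_left (habs t s hs) hM.le) hK0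
        simp only [smul_zero, add_zero]
        calc ‖v₂ (Φ₂ s y) - v₂ y‖ ≤ K * ‖Φ₂ s y - y‖ := hl
          _ ≤ K * M * |t| := by rw [mul_assoc]; exact h3.trans h4)
    simp only [hΦ₂0 y, smul_zero, sub_zero] at key
    have heq : K * M * |t| * |t| = K * M * t ^ 2 := by
      rw [mul_assoc (K * M), abs_mul_abs_self, sq]
    rw [heq] at key
    exact key
  -- the little-o argument
  rw [Asymptotics.isLittleO_iff]
  intro c hc
  set ε : ℝ := c / (6 * (M + 1)) with hεdef
  have hε0 : 0 < ε := by positivity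
  have hlinA := Asymptotics.isLittleO_iff.1 hA.isLittleO hε0
  have hlinB := Asymptotics.isLittleO_iff.1 hBm.isLittleO hε0
  obtain ⟨η₁, hη₁, hlin₁⟩ := Metric.eventually_nhds_iff.1 hlinA
  obtain ⟨η₂, hη₂, hlin₂⟩ := Metric.eventually_nhds_iff.1 hlinB
  set P : ℝ := ‖A‖ with hPdef
  set Q : ℝ := ‖Bm‖ with hQdef
  have hP0 : 0 ≤ P := norm_nonneg _
  have hQ0 : 0 ≤ Q := norm_nonneg _
  set η : ℝ := min (min δ (c / (2 * ((P + 2 * Q) * K * M + 1))))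
      (min (η₁ / (M + 1)) (η₂ / (2 * M + 1))) with hηdef
  have hη0 : 0 < η := by
    refine lt_min (lt_min hδ0 (by positivity)) (lt_min (by positivity) (by positivity))
  have hηδ : η ≤ δ := le_trans (min_le_left _ _) (min_le_left _ _)
  have hηc : η * (2 * ((P + 2 * Q) * K * M + 1)) ≤ c := by
    have h1 : η ≤ c / (2 * ((P + 2 * Q) * K * M + 1)) :=
      le_trans (min_le_left _ _) (min_le_right _ _)
    have h2 : (0:ℝ) < 2 * ((P + 2 * Q) * K * M + 1) := by positivity
    calc η * (2 * ((P + 2 * Q) * K * M + 1))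
        ≤ c / (2 * ((P + 2 * Q) * K * M + 1)) * (2 * ((P + 2 * Q) * K * M + 1)) :=
          mul_le_mul_of_nonneg_right h1 h2.le
      _ = c := div_mul_cancel₀ c h2.ne'
  have hηA : (M + 1) * η ≤ η₁ := by
    have h1 : η ≤ η₁ / (M + 1) := le_trans (min_le_right _ _) (min_le_left _ _)
    have h2 : (0:ℝ) < M + 1 := by linarith
    calc (M + 1) * η ≤ (M + 1) * (η₁ / (M + 1)) := mul_le_mul_of_nonneg_left h1 h2.le
      _ = η₁ := by field_simp
  have hηB : (2 * M + 1) * η ≤ η₂ := by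
    have h1 : η ≤ η₂ / (2 * M + 1) := le_trans (min_le_right _ _) (min_le_right _ _)
    have h2 : (0:ℝ) < 2 * M + 1 := by linarith
    calc (2 * M + 1) * η ≤ (2 * M + 1) * (η₂ / (2 * M + 1)) := mul_le_mul_of_nonneg_left h1 h2.le
      _ = η₂ := by field_simp
  rw [Metric.eventually_nhds_iff]
  refine ⟨η, hη0, ?_⟩
  intro p hp
  obtain ⟨t₁, t₂⟩ := p
  simp only [Prod.dist_eq, Prod.fst_zero, Prod.snd_zero] at hp
  have ht₁ : |t₁| < η := by
    have h1 := lt_of_le_of_lt (le_max_left (dist t₁ (0:ℝ)) (dist t₂ (0:ℝ))) hp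
    rwa [Real.dist_eq, sub_zero] at h1
  have ht₂ : |t₂| < η := by
    have h1 := lt_of_le_of_lt (le_max_right (dist t₁ (0:ℝ)) (dist t₂ (0:ℝ))) hp
    rwa [Real.dist_eq, sub_zero] at h1
  have ht₁δ : |t₁| ≤ δ := le_trans ht₁.le hηδ
  have ht₂δ : |t₂| ≤ δ := le_trans ht₂.le hηδ
  set y := Φ₁ t₁ x with hydef
  have hyx : ‖y - x‖ ≤ M * |t₁| := hF1 t₁ ht₁δ
  have hyρ : ‖y - x‖ ≤ ρ := by
    have h2 : M * |t₁| ≤ M * δ := mul_le_mul_of_nonneg_left ht₁δ hM.le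
    linarith
  -- second-order expansion of Φ₁ at x
  have hS1 : ‖Φ₁ t₁ x - x - t₁ • a - (t₁ ^ 2 / 2) • (A a)‖
      ≤ (ε * M * |t₁| + P * (K * M * t₁ ^ 2)) * |t₁| := by
    have key := key_integral_bound hv₁.continuous (fun s => Φ₁ s x) t₁ a (A a)
      (ε * M * |t₁| + P * (K * M * t₁ ^ 2))
      (fun s hs => hd₁ x s (hδr₁ s ((habs t₁ s hs).trans ht₁δ))) ?_
    · simp only [hΦ₁0] at key
      exact key
    · intro s hs
      have hst : |s| ≤ |t₁| := habs t₁ s hs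
      have hsδ : |s| ≤ δ := hst.trans ht₁δ
      have hΦs : ‖Φ₁ s x - x‖ ≤ M * |s| := hF1 s hsδ
      have hdist : dist (Φ₁ s x) x < η₁ := by
        rw [dist_eq_norm]
        have h1 : M * |s| ≤ M * η := mul_le_mul_of_nonneg_left (hst.trans ht₁.le) hM.le
        have : M * η < (M + 1) * η := by linarith only [hη0]
        linarith [hηA]
      have hfirst : ‖v₁ (Φ₁ s x) - v₁ x - A (Φ₁ s x - x)‖ ≤ ε * ‖Φ₁ s x - x‖ := hlin₁ hdist
      have hsecond : ‖A (Φ₁ s x - x - s • a)‖ ≤ P * (K * M * t₁ ^ 2) := by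
        refine le_trans (A.le_opNorm _) ?_
        have h1 : ‖Φ₁ s x - x - s • a‖ ≤ K * M * s ^ 2 := hO1 s hsδ
        have h2 : K * M * s ^ 2 ≤ K * M * t₁ ^ 2 :=
          mul_le_mul_of_nonneg_left (hsq t₁ s hst) (by positivity)
        exact mul_le_mul_of_nonneg_left (h1.trans h2) hP0
      have hdec : v₁ (Φ₁ s x) - (a + s • A a)
          = (v₁ (Φ₁ s x) - v₁ x - A (Φ₁ s x - x)) + A (Φ₁ s x - x - s • a) := by
        simp only [map_sub, map_smul, ha]
        abel
      rw [hdec]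
      refine le_trans (norm_add_le _ _) ?_
      have h3 : ε * ‖Φ₁ s x - x‖ ≤ ε * M * |t₁| := by
        have := hΦs.trans (mul_le_mul_of_nonneg_left hst hM.le)
        rw [mul_assoc]
        exact mul_le_mul_of_nonneg_left this hε0.le
      linarith [hfirst.trans h3, hsecond]
  -- second-order expansion of the composed flow
  have hS2 : ‖Φ₂ t₂ y - y - t₂ • (b + t₁ • Bm a) - (t₂ ^ 2 / 2) • (Bm b)‖
      ≤ (ε * M * (|t₁| + |t₂|) + Q * (K * M * (t₁ ^ 2 + t₂ ^ 2 + |t₁| * |t₂|))) * |t₂| := by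
    have key := key_integral_bound hv₂.continuous (fun s => Φ₂ s y) t₂ (b + t₁ • Bm a) (Bm b)
      (ε * M * (|t₁| + |t₂|) + Q * (K * M * (t₁ ^ 2 + t₂ ^ 2 + |t₁| * |t₂|)))
      (fun s hs => hd₂ y s (hδr₂ s ((habs t₂ s hs).trans ht₂δ))) ?_
    · simp only [hΦ₂0] at key
      exact key
    · intro s hs
      have hst : |s| ≤ |t₂| := habs t₂ s hs
      have hsδ : |s| ≤ δ := hst.trans ht₂δ
      have hΦs : ‖Φ₂ s y - y‖ ≤ M * |s| := hF2 y hyρ s hsδ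
      have hsx : ‖Φ₂ s y - x‖ ≤ M * |s| + M * |t₁| := by
        have h5 : ‖Φ₂ s y - x‖ ≤ ‖Φ₂ s y - y‖ + ‖y - x‖ := by
          have := norm_add_le (Φ₂ s y - y) (y - x); simpa using this
        linarith
      have hdist : dist (Φ₂ s y) x < η₂ := by
        rw [dist_eq_norm]
        have h1 : M * |s| ≤ M * η := mul_le_mul_of_nonneg_left (hst.trans ht₂.le) hM.le
        have h2 : M * |t₁| ≤ M * η := mul_le_mul_of_nonneg_left ht₁.le hM.le
        have : 2 * M * η < (2 * M + 1) * η := by linarith only [hη0]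
        linarith [hηB]
      have hfirst : ‖v₂ (Φ₂ s y) - v₂ x - Bm (Φ₂ s y - x)‖ ≤ ε * ‖Φ₂ s y - x‖ := hlin₂ hdist
      have hvy : ‖v₂ y - b‖ ≤ K * (M * |t₁|) := by
        have h1 : ‖v₂ y - v₂ x‖ ≤ K * ‖y - x‖ := hlip₂ y x (by linarith) hxx
        exact h1.trans (mul_le_mul_of_nonneg_left hyx hK0)
      have hsecond : ‖Bm (Φ₂ s y - x - t₁ • a - s • b)‖
          ≤ Q * (K * M * (t₁ ^ 2 + t₂ ^ 2 + |t₁| * |t₂|)) := by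
        refine le_trans (Bm.le_opNorm _) ?_
        refine mul_le_mul_of_nonneg_left ?_ hQ0
        have hiden : Φ₂ s y - x - t₁ • a - s • b
            = (Φ₂ s y - y - s • (v₂ y)) + (y - x - t₁ • a) + s • (v₂ y - b) := by
          rw [smul_sub]
          abel
        rw [hiden]
        have hn1 : ‖Φ₂ s y - y - s • (v₂ y)‖ ≤ K * M * s ^ 2 := hO2 y hyρ s hsδ
        have hn1' : K * M * s ^ 2 ≤ K * M * t₂ ^ 2 :=
          mul_le_mul_of_nonneg_left (hsq t₂ s hst) (by positivity)
        have hn2 : ‖y - x - t₁ • a‖ ≤ K * M * t₁ ^ 2 := hO1 t₁ ht₁δ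
        have hn3 : ‖s • (v₂ y - b)‖ ≤ K * M * (|t₁| * |t₂|) := by
          rw [norm_smul, Real.norm_eq_abs]
          calc |s| * ‖v₂ y - b‖ ≤ |t₂| * (K * (M * |t₁|)) :=
              mul_le_mul hst hvy (norm_nonneg _) (abs_nonneg _)
            _ = K * M * (|t₁| * |t₂|) := by ring
        calc ‖(Φ₂ s y - y - s • (v₂ y)) + (y - x - t₁ • a) + s • (v₂ y - b)‖
            ≤ ‖(Φ₂ s y - y - s • (v₂ y)) + (y - x - t₁ • a)‖ + ‖s • (v₂ y - b)‖ :=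
              norm_add_le _ _
          _ ≤ ‖Φ₂ s y - y - s • (v₂ y)‖ + ‖y - x - t₁ • a‖ + ‖s • (v₂ y - b)‖ := by
              linarith [norm_add_le (Φ₂ s y - y - s • (v₂ y)) (y - x - t₁ • a)]
          _ ≤ K * M * (t₁ ^ 2 + t₂ ^ 2 + |t₁| * |t₂|) := by
              have := hn1.trans hn1'
              linarith only [this, hn2, hn3]
      have hdec : v₂ (Φ₂ s y) - ((b + t₁ • Bm a) + s • Bm b)
          = (v₂ (Φ₂ s y) - v₂ x - Bm (Φ₂ s y - x)) + Bm (Φ₂ s y - x - t₁ • a - s • b) := by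
        simp only [map_sub, map_smul, ha, hb]
        abel
      rw [hdec]
      refine le_trans (norm_add_le _ _) ?_
      have h3 : ε * ‖Φ₂ s y - x‖ ≤ ε * M * (|t₁| + |t₂|) := by
        have h4 : ‖Φ₂ s y - x‖ ≤ M * (|t₁| + |t₂|) := by
          have := mul_le_mul_of_nonneg_left hst hM.le
          linarith only [hsx, this]
        rw [mul_assoc]
        exact mul_le_mul_of_nonneg_left h4 hε0.le
      linarith [hfirst.trans h3, hsecond]
  -- assemble
  have hsplit : Φ₂ t₂ (Φ₁ t₁ x) - x - t₁ • a - t₂ • b - (t₁ * t₂) • (Bm a)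
        - (t₁ ^ 2 / 2) • (A a) - (t₂ ^ 2 / 2) • (Bm b)
      = (Φ₂ t₂ y - y - t₂ • (b + t₁ • Bm a) - (t₂ ^ 2 / 2) • (Bm b))
        + (Φ₁ t₁ x - x - t₁ • a - (t₁ ^ 2 / 2) • (A a)) := by
    have h1 : t₂ • (b + t₁ • Bm a) = t₂ • b + (t₁ * t₂) • Bm a := by
      rw [smul_add, smul_smul, mul_comm]
    rw [h1, hydef]
    abel
  have hnorm : ‖Φ₂ t₂ (Φ₁ t₁ x) - x - t₁ • a - t₂ • b - (t₁ * t₂) • (Bm a)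
        - (t₁ ^ 2 / 2) • (A a) - (t₂ ^ 2 / 2) • (Bm b)‖
      ≤ (ε * M * (|t₁| + |t₂|) + Q * (K * M * (t₁ ^ 2 + t₂ ^ 2 + |t₁| * |t₂|))) * |t₂|
        + (ε * M * |t₁| + P * (K * M * t₁ ^ 2)) * |t₁| := by
    rw [hsplit]
    exact le_trans (norm_add_le _ _) (add_le_add hS2 hS1)
  have hRHS : ‖t₁ ^ 2 + t₂ ^ 2‖ = t₁ ^ 2 + t₂ ^ 2 := by
    rw [Real.norm_eq_abs, abs_of_nonneg (by positivity)]
  simp only []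
  rw [hRHS]
  refine hnorm.trans ?_
  -- final arithmetic
  set u : ℝ := |t₁| with hu
  set w : ℝ := |t₂| with hw
  have hu0 : 0 ≤ u := abs_nonneg _
  have hw0 : 0 ≤ w := abs_nonneg _
  have hu2 : t₁ ^ 2 = u ^ 2 := (sq_abs t₁).symm
  have hw2 : t₂ ^ 2 = w ^ 2 := (sq_abs t₂).symm
  rw [hu2, hw2]
  have hS0 : (0:ℝ) ≤ u ^ 2 + w ^ 2 := by positivity
  have huw : u * w ≤ (u ^ 2 + w ^ 2) / 2 := by linarith only [sq_nonneg (u - w)]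
  have huS : u ^ 2 ≤ u ^ 2 + w ^ 2 := by linarith only [sq_nonneg w]
  have huη : u ≤ η := ht₁.le
  have hwη : w ≤ η := ht₂.le
  have hcε : c = ε * (6 * (M + 1)) := by
    rw [hεdef]; field_simp
  clear_value M K P Q ε η u w
  have hT1 : (ε * M * (u + w) + Q * (K * M * (u ^ 2 + w ^ 2 + u * w))) * w
      ≤ (3 / 2) * ε * M * (u ^ 2 + w ^ 2) + Q * K * M * (3 / 2) * (u ^ 2 + w ^ 2) * η := by
    have q1 : (u + w) * w ≤ (3 / 2) * (u ^ 2 + w ^ 2) := by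
      linarith only [huw, sq_nonneg u]
    have q2 : (0:ℝ) ≤ ε * M := mul_nonneg hε0.le hM.le
    have e1 : (ε * M * (u + w)) * w ≤ (3 / 2) * ε * M * (u ^ 2 + w ^ 2) := by
      calc (ε * M * (u + w)) * w = (ε * M) * ((u + w) * w) := by ring
        _ ≤ (ε * M) * ((3 / 2) * (u ^ 2 + w ^ 2)) := mul_le_mul_of_nonneg_left q1 q2
        _ = (3 / 2) * ε * M * (u ^ 2 + w ^ 2) := by ring
    have e2 : (Q * (K * M * (u ^ 2 + w ^ 2 + u * w))) * w
        ≤ Q * K * M * (3 / 2) * (u ^ 2 + w ^ 2) * η := by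
      have g1 : u ^ 2 + w ^ 2 + u * w ≤ (3 / 2) * (u ^ 2 + w ^ 2) := by linarith only [huw]
      have g2 : (0:ℝ) ≤ Q * K * M := mul_nonneg (mul_nonneg hQ0 hK0) hM.le
      have g3 : (u ^ 2 + w ^ 2 + u * w) * w ≤ ((3 / 2) * (u ^ 2 + w ^ 2)) * η := by
        refine mul_le_mul g1 hwη hw0 (by linarith only [hS0])
      calc (Q * (K * M * (u ^ 2 + w ^ 2 + u * w))) * w
          = (Q * K * M) * ((u ^ 2 + w ^ 2 + u * w) * w) := by ring
        _ ≤ (Q * K * M) * (((3 / 2) * (u ^ 2 + w ^ 2)) * η) := mul_le_mul_of_nonneg_left g3 g2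
        _ = Q * K * M * (3 / 2) * (u ^ 2 + w ^ 2) * η := by ring
    linarith only [e1, e2]
  have hT2 : (ε * M * u + P * (K * M * u ^ 2)) * u
      ≤ ε * M * (u ^ 2 + w ^ 2) + P * K * M * (u ^ 2 + w ^ 2) * η := by
    have q2 : (0:ℝ) ≤ ε * M := mul_nonneg hε0.le hM.le
    have e1 : (ε * M * u) * u ≤ ε * M * (u ^ 2 + w ^ 2) := by
      calc (ε * M * u) * u = (ε * M) * (u * u) := by ring
        _ ≤ (ε * M) * (u ^ 2 + w ^ 2) := mul_le_mul_of_nonneg_left (by linarith only [huS]) q2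
        _ = ε * M * (u ^ 2 + w ^ 2) := by ring
    have e2 : (P * (K * M * u ^ 2)) * u ≤ P * K * M * (u ^ 2 + w ^ 2) * η := by
      have g2 : (0:ℝ) ≤ P * K * M := mul_nonneg (mul_nonneg hP0 hK0) hM.le
      have g3 : u ^ 2 * u ≤ (u ^ 2 + w ^ 2) * η := mul_le_mul huS huη hu0 hS0
      calc (P * (K * M * u ^ 2)) * u = (P * K * M) * (u ^ 2 * u) := by ring
        _ ≤ (P * K * M) * ((u ^ 2 + w ^ 2) * η) := mul_le_mul_of_nonneg_left g3 g2
        _ = P * K * M * (u ^ 2 + w ^ 2) * η := by ring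
    linarith only [e1, e2]
  have hhalf1 : (3 / 2) * ε * M * (u ^ 2 + w ^ 2) + ε * M * (u ^ 2 + w ^ 2)
      ≤ (c / 2) * (u ^ 2 + w ^ 2) := by
    have h5 : (5 / 2) * ε * M ≤ c / 2 := by
      linarith only [hcε, hε0.le, mul_nonneg hε0.le hM.le]
    have h6 := mul_le_mul_of_nonneg_right h5 hS0
    linarith only [h6]
  have hhalf2 : Q * K * M * (3 / 2) * (u ^ 2 + w ^ 2) * η + P * K * M * (u ^ 2 + w ^ 2) * η
      ≤ (c / 2) * (u ^ 2 + w ^ 2) := by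
    have g1 : (P + (3 / 2) * Q) * K * M * η ≤ c / 2 := by
      linarith only [hηc, hη0.le, mul_nonneg (mul_nonneg (mul_nonneg hQ0 hK0) hM.le) hη0.le]
    have g2 := mul_le_mul_of_nonneg_right g1 hS0
    linarith only [g2]
  linarith only [hT1, hT2, hhalf1, hhalf2]
end

section
/- Let v₁, v₂ : ℝⁿ → ℝⁿ be continuously differentiable vector fields with global flows Φ₁, Φ₂ (i.e. Φₐ(0,x) = x and ∂Φₐ/∂t(t,x) = vₐ(Φₐ(t,x)) for all t ∈ ℝ and x ∈ ℝⁿ). If the flows commute, i.e. Φ₁(t₁, Φ₂(t₂, x)) = Φ₂(t₂, Φ₁(t₁, x)) for all t₁, t₂ ∈ ℝ and x ∈ ℝⁿ, then the Lie bracket vanishes identically: Dv₂(x)v₁(x) − Dv₁(x)v₂(x) = 0 for all x ∈ ℝⁿ. -/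
open Topology Metric Set Real

variable {E : Type*} [NormedAddCommGroup E] [NormedSpace ℝ E] [ProperSpace E]

lemma lip_on_ball {v : E → E} (hv : ContDiff ℝ 1 v) (R : ℝ) :
    ∃ K : NNReal, LipschitzOnWith K v (closedBall (0:E) R) := by
  have hcont : ContinuousOn (fun y => ‖fderiv ℝ v y‖) (closedBall (0:E) R) :=
    ((hv.continuous_fderiv one_ne_zero).norm).continuousOn
  obtain ⟨C, hC⟩ := (isCompact_closedBall (0:E) R).exists_bound_of_continuousOn hcont
  refine ⟨⟨max C 0, le_max_right _ _⟩, ?_⟩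
  apply Convex.lipschitzOnWith_of_nnnorm_fderiv_le
    (fun y _ => (hv.differentiable one_ne_zero).differentiableAt) ?_ (convex_closedBall _ _)
  intro y hy
  have h1 := hC y hy; rw [norm_norm] at h1
  have : ‖fderiv ℝ v y‖ ≤ max C 0 := le_trans h1 (le_max_left _ _)
  exact_mod_cast this

lemma forward_dep {v : E → E} (hv : ContDiff ℝ 1 v) {g : ℝ → E}
    (hg : ∀ s, HasDerivAt g (v (g s)) s) {a b : ℝ} (hab : a ≤ b) {ε : ℝ} (hε : 0 < ε) :
    ∃ δ > 0, ∀ f : ℝ → E, (∀ s, HasDerivAt f (v (f s)) s) →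
      dist (f a) (g a) < δ → ∀ s ∈ Icc a b, dist (f s) (g s) < ε := by
  have hgc : Continuous g := continuous_iff_continuousAt.2 fun s => (hg s).continuousAt
  obtain ⟨C, hC⟩ := (isCompact_Icc (a := a) (b := b)).exists_bound_of_continuousOn
    hgc.continuousOn (f := g)
  obtain ⟨K, hK⟩ := lip_on_ball hv (C + 1)
  set m := min ε 1 with hm
  have hm0 : 0 < m := lt_min hε one_pos
  have hm1 : m ≤ 1 := min_le_right _ _
  set X := Real.exp (K * (b - a)) with hX
  have hX1 : 1 ≤ X := Real.one_le_exp (mul_nonneg K.2 (by linarith))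
  set δ := m / 2 / X with hδ
  have hδ0 : 0 < δ := div_pos (by linarith) (by linarith)
  have hδhalf : δ ≤ m / 2 := by
    rw [hδ, div_le_iff₀ (by linarith)]; nlinarith
  refine ⟨δ, hδ0, fun f hf hfa => ?_⟩
  have hfc : Continuous f := continuous_iff_continuousAt.2 fun s => (hf s).continuousAt
  have hd : Continuous fun s => dist (f s) (g s) := (hfc.dist hgc)
  -- Gronwall helper
  have gron : ∀ c ∈ Icc a b, (∀ σ ∈ Icc a c, dist (f σ) (g σ) ≤ 1) →
      ∀ s ∈ Icc a c, dist (f s) (g s) ≤ δ * Real.exp (K * (s - a)) := by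
    intro c hc hstay
    apply dist_le_of_trajectories_ODE_of_mem
      (v := fun _ y => v y) (s := fun _ => closedBall (0:E) (C + 1)) (K := K)
      (fun _ _ => hK) hfc.continuousOn
      (fun t _ => (hf t).hasDerivWithinAt) ?_ hgc.continuousOn
      (fun t _ => (hg t).hasDerivWithinAt) ?_ hfa.le
    · intro t ht
      have ht' : t ∈ Icc a c := Ico_subset_Icc_self ht
      have hgb : ‖g t‖ ≤ C := hC t ⟨ht'.1, le_trans ht'.2 hc.2⟩
      have : ‖f t‖ ≤ ‖g t‖ + dist (f t) (g t) := by
        rw [dist_eq_norm]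
        calc ‖f t‖ = ‖g t + (f t - g t)‖ := by congr 1; abel
          _ ≤ ‖g t‖ + ‖f t - g t‖ := norm_add_le _ _
      rw [mem_closedBall_zero_iff]
      have := hstay t ht'
      linarith [this, hgb, ‹‖f t‖ ≤ _›]
    · intro t ht
      rw [mem_closedBall_zero_iff]
      have := hC t ⟨ht.1, le_trans ht.2.le hc.2⟩
      linarith
  have hbound : ∀ s ∈ Icc a b, δ * Real.exp (K * (s - a)) ≤ m / 2 := by
    intro s hs
    have : Real.exp (K * (s - a)) ≤ X :=
      Real.exp_le_exp.2 (mul_le_mul_of_nonneg_left (by linarith [hs.2]) K.2)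
    calc δ * Real.exp (K * (s - a)) ≤ δ * X := by nlinarith [hδ0.le]
      _ = m / 2 := by rw [hδ]; field_simp
  -- the set S
  set S := {c | c ∈ Icc a b ∧ ∀ σ ∈ Icc a c, dist (f σ) (g σ) ≤ 1} with hSdef
  have haS : a ∈ S := by
    refine ⟨⟨le_refl a, hab⟩, fun σ hσ => ?_⟩
    have : σ = a := le_antisymm hσ.2 hσ.1
    rw [this]; linarith [hfa, hδhalf, hm1]
  have hSbdd : BddAbove S := ⟨b, fun c hc => hc.1.2⟩
  set c := sSup S with hc
  have hac : a ≤ c := le_csSup hSbdd haS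
  have hcb : c ≤ b := csSup_le ⟨a, haS⟩ fun s hs => hs.1.2
  have hcS : c ∈ S := by
    refine ⟨⟨hac, hcb⟩, fun σ hσ => ?_⟩
    rcases lt_or_eq_of_le hσ.2 with hlt | heq
    · obtain ⟨s, hsS, hss⟩ := exists_lt_of_lt_csSup ⟨a, haS⟩ hlt
      exact hsS.2 σ ⟨hσ.1, hss.le⟩
    · -- σ = c : closure argument
      rw [heq]
      have haσ : a ≤ c := hac
      rcases eq_or_lt_of_le haσ with heq2 | hlt2
      · rw [← heq2]; linarith [hfa, hδhalf, hm1]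
      · have hT : IsClosed {σ : ℝ | dist (f σ) (g σ) ≤ 1} :=
          isClosed_le hd continuous_const
        have hsub : Ico a c ⊆ {σ : ℝ | dist (f σ) (g σ) ≤ 1} := by
          intro τ hτ
          obtain ⟨s, hsS, hss⟩ := exists_lt_of_lt_csSup ⟨a, haS⟩ hτ.2
          exact hsS.2 τ ⟨hτ.1, hss.le⟩
        have hIcc : Icc a c ⊆ {σ : ℝ | dist (f σ) (g σ) ≤ 1} := by
          rw [← closure_Ico (ne_of_lt hlt2)]
          exact hT.closure_subset_iff.2 hsub
        exact hIcc ⟨haσ, le_refl _⟩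
  have hgronc := gron c ⟨hac, hcb⟩ hcS.2
  have hcb' : c = b := by
    by_contra hne
    have hclt : c < b := lt_of_le_of_ne hcb hne
    have hdc : dist (f c) (g c) ≤ m / 2 :=
      le_trans (hgronc c ⟨hac, le_refl _⟩) (hbound c ⟨hac, hcb⟩)
    have : ContinuousAt (fun s => dist (f s) (g s)) c := hd.continuousAt
    rw [Metric.continuousAt_iff] at this
    obtain ⟨η, hη0, hη⟩ := this (1/4) (by norm_num)
    set c' := min b (c + η / 2) with hc'
    have hcc' : c < c' := lt_min hclt (by linarith)
    have hc'S : c' ∈ S := by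
      refine ⟨⟨le_trans hac hcc'.le, min_le_left _ _⟩, fun σ hσ => ?_⟩
      rcases le_or_gt σ c with h1 | h1
      · exact hcS.2 σ ⟨hσ.1, h1⟩
      · have h2 : σ ≤ c + η / 2 := le_trans hσ.2 (min_le_right _ _)
        have h3 : dist σ c < η := by
          rw [Real.dist_eq, abs_lt]; constructor <;> linarith
        have := hη h3
        rw [Real.dist_eq] at this
        have habs := abs_lt.1 this
        have : dist (f σ) (g σ) < dist (f c) (g c) + 1/4 := by linarith [habs.2]
        linarith [hdc, hm1]
    linarith [le_csSup hSbdd hc'S]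
  intro s hs
  have := le_trans (hgronc s (by rw [hcb']; exact hs)) (hbound s hs)
  have : dist (f s) (g s) ≤ m / 2 := this
  calc dist (f s) (g s) ≤ m / 2 := this
    _ < m := by linarith
    _ ≤ ε := min_le_left _ _

lemma two_sided_dep {v : E → E} (hv : ContDiff ℝ 1 v) {g : ℝ → E}
    (hg : ∀ s, HasDerivAt g (v (g s)) s) (a : ℝ) {L ε : ℝ} (hL : 0 ≤ L) (hε : 0 < ε) :
    ∃ δ > 0, ∀ f : ℝ → E, (∀ s, HasDerivAt f (v (f s)) s) →
      dist (f a) (g a) < δ → ∀ s ∈ Icc (a - L) (a + L), dist (f s) (g s) < ε := by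
  have hab : a ≤ a + L := by linarith
  obtain ⟨δ₁, hδ₁0, h₁⟩ := forward_dep hv hg hab hε
  have hrev : ∀ (h : ℝ → E), (∀ s, HasDerivAt h (v (h s)) s) →
      ∀ s, HasDerivAt (fun σ => h (2 * a - σ)) (-v (h (2 * a - s))) s := by
    intro h hh s
    have hin : HasDerivAt (fun σ : ℝ => 2 * a - σ) (-1) s := by
      simpa using (hasDerivAt_id s).const_sub (2 * a)
    have := (hh (2 * a - s)).scomp s hin
    simpa [Function.comp_def] using this
  have hgrev : ∀ s, HasDerivAt (fun σ => g (2 * a - σ))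
      ((fun y => -v y) ((fun σ => g (2 * a - σ)) s)) s := fun s => hrev g hg s
  obtain ⟨δ₂, hδ₂0, h₂⟩ := forward_dep hv.neg hgrev hab hε
  refine ⟨min δ₁ δ₂, lt_min hδ₁0 hδ₂0, fun f hf hfa s hs => ?_⟩
  rcases le_or_gt a s with h | h
  · exact h₁ f hf (lt_of_lt_of_le hfa (min_le_left _ _)) s ⟨h, hs.2⟩
  · have hfrev : ∀ σ, HasDerivAt (fun σ => f (2 * a - σ))
        ((fun y => -v y) ((fun σ => f (2 * a - σ)) σ)) σ := fun σ => hrev f hf σ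
    have key := h₂ (fun σ => f (2 * a - σ)) hfrev
      (by show dist (f (2 * a - a)) (g (2 * a - a)) < δ₂
          rw [show 2 * a - a = a by ring]; exact lt_of_lt_of_le hfa (min_le_right _ _))
      (2 * a - s) ⟨by linarith, by linarith [hs.1]⟩
    have key' : dist (f (2 * a - (2 * a - s))) (g (2 * a - (2 * a - s))) < ε := key
    rw [show 2 * a - (2 * a - s) = s by ring] at key'
    exact key'


/-- If the global flows of two C¹ vector fields commute, then their Lie bracket
`Dv₂(x)v₁(x) − Dv₁(x)v₂(x)` vanishes identically. -/
theorem lie_bracket_vanishes_of_commuting_flows {n : ℕ}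
    (v₁ v₂ : EuclideanSpace ℝ (Fin n) → EuclideanSpace ℝ (Fin n))
    (hv₁ : ContDiff ℝ 1 v₁) (hv₂ : ContDiff ℝ 1 v₂)
    (Φ₁ Φ₂ : ℝ → EuclideanSpace ℝ (Fin n) → EuclideanSpace ℝ (Fin n))
    (hΦ₁0 : ∀ x, Φ₁ 0 x = x) (hΦ₂0 : ∀ x, Φ₂ 0 x = x)
    (hΦ₁ : ∀ x, ∀ t : ℝ, HasDerivAt (fun s => Φ₁ s x) (v₁ (Φ₁ t x)) t)
    (hΦ₂ : ∀ x, ∀ t : ℝ, HasDerivAt (fun s => Φ₂ s x) (v₂ (Φ₂ t x)) t)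
    (hcomm : ∀ t₁ t₂ : ℝ, ∀ x, Φ₁ t₁ (Φ₂ t₂ x) = Φ₂ t₂ (Φ₁ t₁ x)) :
    ∀ x, fderiv ℝ v₂ x (v₁ x) - fderiv ℝ v₁ x (v₂ x) = 0 := by
  intro x
  set A : ℝ × ℝ → EuclideanSpace ℝ (Fin n) := fun p => Φ₁ p.1 (Φ₂ p.2 x) with hA
  have hAs : ∀ p : ℝ × ℝ, HasDerivAt (fun s => A (s, p.2)) (v₁ (A p)) p.1 :=
    fun p => hΦ₁ (Φ₂ p.2 x) p.1
  have hAt : ∀ p : ℝ × ℝ, HasDerivAt (fun t => A (p.1, t)) (v₂ (A p)) p.2 := by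
    intro p
    have h1 : (fun t => A (p.1, t)) = fun t => Φ₂ t (Φ₁ p.1 x) :=
      funext fun t => hcomm p.1 t x
    have h2 : v₂ (A p) = v₂ (Φ₂ p.2 (Φ₁ p.1 x)) := congrArg v₂ (hcomm p.1 p.2 x)
    rw [h1, h2]
    exact hΦ₂ (Φ₁ p.1 x) p.2
  -- joint continuity
  have hAcont : Continuous A := by
    rw [continuous_iff_continuousAt]
    intro p₀
    rw [Metric.continuousAt_iff]
    intro ε hε
    obtain ⟨δ, hδ0, hdep⟩ := two_sided_dep hv₁ (g := fun s => A (s, p₀.2))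
      (fun s => hAs (s, p₀.2)) p₀.1 (L := 1) zero_le_one (half_pos hε)
    obtain ⟨η₁, hη₁0, hη₁⟩ := Metric.continuousAt_iff.1 (hAt p₀).continuousAt δ hδ0
    obtain ⟨η₂, hη₂0, hη₂⟩ := Metric.continuousAt_iff.1 (hAs p₀).continuousAt (ε/2) (half_pos hε)
    refine ⟨min 1 (min η₁ η₂), by positivity, fun {p} hp => ?_⟩
    rw [Prod.dist_eq] at hp
    have hp1 : dist p.1 p₀.1 < min 1 (min η₁ η₂) := lt_of_le_of_lt (le_max_left _ _) hp
    have hp2 : dist p.2 p₀.2 < min 1 (min η₁ η₂) := lt_of_le_of_lt (le_max_right _ _) hp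
    have step1 : dist (A (p.1, p.2)) (A (p.1, p₀.2)) < ε / 2 := by
      apply hdep (fun s => A (s, p.2)) (fun s => hAs (s, p.2))
      · exact hη₁ (lt_of_lt_of_le hp2 (le_trans (min_le_right _ _) (min_le_left _ _)))
      · constructor
        · have := lt_of_lt_of_le hp1 (min_le_left _ _)
          rw [Real.dist_eq] at this
          linarith [abs_lt.1 this]
        · have := lt_of_lt_of_le hp1 (min_le_left _ _)
          rw [Real.dist_eq] at this
          linarith [abs_lt.1 this]
    have step2 : dist (A (p.1, p₀.2)) (A (p₀.1, p₀.2)) < ε / 2 :=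
      hη₂ (lt_of_lt_of_le hp1 (le_trans (min_le_right _ _) (min_le_right _ _)))
    calc dist (A p) (A p₀) ≤ dist (A (p.1, p.2)) (A (p.1, p₀.2))
          + dist (A (p.1, p₀.2)) (A (p₀.1, p₀.2)) := dist_triangle _ _ _
      _ < ε / 2 + ε / 2 := add_lt_add step1 step2
      _ = ε := by ring
  -- total derivative
  set L : ℝ × ℝ → (ℝ × ℝ →L[ℝ] EuclideanSpace ℝ (Fin n)) := fun p =>
    (ContinuousLinearMap.fst ℝ ℝ ℝ).smulRight (v₁ (A p)) +
      (ContinuousLinearMap.snd ℝ ℝ ℝ).smulRight (v₂ (A p)) with hLdef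
  have hA' : ∀ p, HasFDerivAt A (L p) p := by
    intro p₀
    rw [hasFDerivAt_iff_isLittleO_nhds_zero]
    set u := v₁ (A p₀) with hu
    set w := v₂ (A p₀) with hw
    have part2 : (fun h : ℝ × ℝ => A (p₀.1, p₀.2 + h.2) - A p₀ - h.2 • w)
        =o[𝓝 0] (fun h : ℝ × ℝ => h) := by
      have h0 : (fun t : ℝ => A (p₀.1, p₀.2 + t) - A (p₀.1, p₀.2) - t • w)
          =o[𝓝 0] (fun t : ℝ => t) :=
        hasDerivAt_iff_isLittleO_nhds_zero.1 (hAt p₀)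
      have hcomp := h0.comp_tendsto
        (continuous_snd.tendsto' (0 : ℝ × ℝ) 0 rfl)
      exact hcomp.trans_isBigO (Asymptotics.isBigO_of_le _ fun h => norm_snd_le h)
    have part1 : (fun h : ℝ × ℝ => A (p₀.1 + h.1, p₀.2 + h.2) - A (p₀.1, p₀.2 + h.2) - h.1 • u)
        =o[𝓝 0] (fun h : ℝ × ℝ => h) := by
      rw [Asymptotics.isLittleO_iff]
      intro c hc
      obtain ⟨r, hr0, hr⟩ := Metric.continuousAt_iff.1
        ((hv₁.continuous.comp hAcont).continuousAt (x := p₀)) c hc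
      filter_upwards [Metric.ball_mem_nhds (0 : ℝ × ℝ) hr0] with h hh
      have hnorm : ‖h‖ < r := by rwa [Metric.mem_ball, dist_zero_right] at hh
      set t := p₀.2 + h.2 with ht
      have hball : ∀ σ : ℝ, |σ - p₀.1| ≤ |h.1| → ‖v₁ (A (σ, t)) - u‖ ≤ c := by
        intro σ hσ
        have hd : dist (σ, t) p₀ < r := by
          rw [Prod.dist_eq]
          apply max_lt
          · exact lt_of_le_of_lt (by rwa [Real.dist_eq]) (lt_of_le_of_lt (norm_fst_le h) hnorm)
          · have : dist t p₀.2 = |h.2| := by rw [Real.dist_eq, ht]; ring_nf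
            rw [this]
            exact lt_of_le_of_lt (norm_snd_le h) hnorm
        have := hr hd
        rw [dist_eq_norm] at this
        exact this.le
      have hF : ∀ σ : ℝ, HasDerivAt (fun σ => A (σ, t) - σ • u) (v₁ (A (σ, t)) - u) σ := by
        intro σ
        exact (hAs (σ, t)).sub (by simpa using (hasDerivAt_id σ).smul_const u)
      have key : ‖A (p₀.1 + h.1, t) - A (p₀.1, t) - h.1 • u‖ ≤ c * |h.1| := by
        rcases le_or_gt 0 h.1 with hpos | hneg
        · have := norm_image_sub_le_of_norm_deriv_le_segment'
            (f := fun σ => A (σ, t) - σ • u) (f' := fun σ => v₁ (A (σ, t)) - u)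
            (a := p₀.1) (b := p₀.1 + h.1) (C := c)
            (fun σ _ => (hF σ).hasDerivWithinAt) ?_ (p₀.1 + h.1) ?_
          · have heq : A (p₀.1 + h.1, t) - (p₀.1 + h.1) • u - (A (p₀.1, t) - p₀.1 • u)
                = A (p₀.1 + h.1, t) - A (p₀.1, t) - h.1 • u := by
              rw [add_smul]; abel
            rw [heq] at this
            calc ‖_‖ ≤ c * (p₀.1 + h.1 - p₀.1) := this
              _ = c * |h.1| := by rw [abs_of_nonneg hpos]; ring_nf
          · intro σ hσ
            exact hball σ (by rw [abs_of_nonneg (by linarith [hσ.1]), abs_of_nonneg hpos]; linarith [hσ.2.le])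
          · exact ⟨by linarith, le_refl _⟩
        · have := norm_image_sub_le_of_norm_deriv_le_segment'
            (f := fun σ => A (σ, t) - σ • u) (f' := fun σ => v₁ (A (σ, t)) - u)
            (a := p₀.1 + h.1) (b := p₀.1) (C := c)
            (fun σ _ => (hF σ).hasDerivWithinAt) ?_ p₀.1 ?_
          · have heq : A (p₀.1, t) - p₀.1 • u - (A (p₀.1 + h.1, t) - (p₀.1 + h.1) • u)
                = -(A (p₀.1 + h.1, t) - A (p₀.1, t) - h.1 • u) := by
              rw [add_smul]; abel
            rw [heq, norm_neg] at this
            calc ‖_‖ ≤ c * (p₀.1 - (p₀.1 + h.1)) := this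
              _ = c * |h.1| := by rw [abs_of_neg hneg]; ring_nf
          · intro σ hσ
            refine hball σ ?_
            rw [abs_of_neg hneg]
            rw [abs_le]
            constructor
            · linarith [hσ.1]
            · linarith [hσ.2.le, hneg.le]
          · exact ⟨by linarith, le_refl _⟩
      calc ‖A (p₀.1 + h.1, t) - A (p₀.1, t) - h.1 • u‖ ≤ c * |h.1| := key
        _ ≤ c * ‖h‖ := by
          apply mul_le_mul_of_nonneg_left (norm_fst_le h) hc.le
    have hsum := part1.add part2
    apply hsum.congr' ?_ (Filter.EventuallyEq.refl _ _)
    apply Filter.Eventually.of_forall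
    intro h
    have hL : L p₀ h = h.1 • u + h.2 • w := by
      simp [hLdef, ContinuousLinearMap.smulRight_apply, hu, hw]
    show A (p₀.1 + h.1, p₀.2 + h.2) - A (p₀.1, p₀.2 + h.2) - h.1 • u
        + (A (p₀.1, p₀.2 + h.2) - A p₀ - h.2 • w)
      = A (p₀ + h) - A p₀ - (L p₀) h
    rw [hL, show p₀ + h = (p₀.1 + h.1, p₀.2 + h.2) from rfl]
    abel
  -- second derivative
  have hA00 : A (0, 0) = x := by
    show Φ₁ 0 (Φ₂ 0 x) = x
    rw [hΦ₂0, hΦ₁0]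
  set R₁ : EuclideanSpace ℝ (Fin n) →L[ℝ] (ℝ × ℝ →L[ℝ] EuclideanSpace ℝ (Fin n)) :=
    ContinuousLinearMap.smulRightL ℝ (ℝ × ℝ) (EuclideanSpace ℝ (Fin n))
      (ContinuousLinearMap.fst ℝ ℝ ℝ) with hR₁
  set R₂ : EuclideanSpace ℝ (Fin n) →L[ℝ] (ℝ × ℝ →L[ℝ] EuclideanSpace ℝ (Fin n)) :=
    ContinuousLinearMap.smulRightL ℝ (ℝ × ℝ) (EuclideanSpace ℝ (Fin n))
      (ContinuousLinearMap.snd ℝ ℝ ℝ) with hR₂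
  have hLfun : L = fun p => R₁ (v₁ (A p)) + R₂ (v₂ (A p)) := rfl
  have hdv₁ : HasFDerivAt v₁ (fderiv ℝ v₁ x) x :=
    ((hv₁.differentiable one_ne_zero) x).hasFDerivAt
  have hdv₂ : HasFDerivAt v₂ (fderiv ℝ v₂ x) x :=
    ((hv₂.differentiable one_ne_zero) x).hasFDerivAt
  have h1 : HasFDerivAt (fun p => v₁ (A p)) ((fderiv ℝ v₁ x).comp (L (0, 0))) ((0, 0) : ℝ × ℝ) := by
    apply HasFDerivAt.comp
    · rw [hA00]; exact hdv₁
    · exact hA' (0, 0)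
  have h2 : HasFDerivAt (fun p => v₂ (A p)) ((fderiv ℝ v₂ x).comp (L (0, 0))) ((0, 0) : ℝ × ℝ) := by
    apply HasFDerivAt.comp
    · rw [hA00]; exact hdv₂
    · exact hA' (0, 0)
  set M : (ℝ × ℝ) →L[ℝ] ((ℝ × ℝ) →L[ℝ] EuclideanSpace ℝ (Fin n)) :=
    R₁.comp ((fderiv ℝ v₁ x).comp (L (0, 0))) + R₂.comp ((fderiv ℝ v₂ x).comp (L (0, 0))) with hM
  have hLderiv : HasFDerivAt L M ((0, 0) : ℝ × ℝ) := by
    rw [hLfun, hM]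
    exact ((R₁.hasFDerivAt.comp _ h1).add (R₂.hasFDerivAt.comp _ h2))
  have hsymm := second_derivative_symmetric_of_eventually
    (Filter.Eventually.of_forall hA') hLderiv ((1, 0) : ℝ × ℝ) ((0, 1) : ℝ × ℝ)
  have hA00' : A (0 : ℝ × ℝ) = x := hA00
  have hL10 : L (0 : ℝ × ℝ) ((1, 0) : ℝ × ℝ) = v₁ x := by
    simp [hLdef, hA00']
  have hL01 : L (0 : ℝ × ℝ) ((0, 1) : ℝ × ℝ) = v₂ x := by
    simp [hLdef, hA00']
  have e1 : M ((1, 0) : ℝ × ℝ) ((0, 1) : ℝ × ℝ) = fderiv ℝ v₂ x (v₁ x) := by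
    rw [hM]
    simp [hR₁, hR₂, ContinuousLinearMap.smulRightL, hL10]
    exact congrArg _ hL10
  have e2 : M ((0, 1) : ℝ × ℝ) ((1, 0) : ℝ × ℝ) = fderiv ℝ v₁ x (v₂ x) := by
    rw [hM]
    simp [hR₁, hR₂, ContinuousLinearMap.smulRightL, hL01]
    exact congrArg _ hL01
  rw [← e1, ← e2, hsymm, sub_self]
end

section
/- Let u₁, u₂ : ℝⁿ → ℝⁿ be continuously differentiable vector fields and L : ℝⁿ → ℝ continuously differentiable. Let Φ₁, Φ₂, Φ̄ be flows of u₁, u₂ and of the averaged field (u₁+u₂)/2 respectively (i.e. each Φ satisfies Φ(0,x) = x and ∂Φ/∂t(t,x) equal to the respective field evaluated at Φ(t,x), for t near 0). Then for each fixed x, as ε → 0⁺, L(Φ₂(ε, Φ₁(ε, x))) − L(Φ̄(2ε, x)) = (ε²/2)·⟨Du₂(x)u₁(x) − Du₁(x)u₂(x), ∇L(x)⟩ + o(ε²). -/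
open Asymptotics Topology
open scoped RealInnerProductSpace

section Auxiliary

open Metric Set Filter


set_option maxHeartbeats 1000000 in
lemma flow_taylor_quant
    {E : Type*} [NormedAddCommGroup E] [NormedSpace ℝ E] [FiniteDimensional ℝ E]
    (u : E → E) (hu : ContDiff ℝ 1 u)
    (Φ : ℝ → E → E) (hΦ0 : ∀ y, Φ 0 y = y)
    {r : ℝ} (hr : 0 < r)
    (hΦ : ∀ y, ∀ t : ℝ, |t| < r → HasDerivAt (fun s => Φ s y) (u (Φ t y)) t)
    (x : E) {δ : ℝ} (hδ : 0 < δ) :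
    ∃ ε₀ > 0, ∀ t : ℝ, 0 < t → t ≤ ε₀ → ∀ y ∈ closedBall x ε₀,
      ‖Φ t y - y - t • u y - (t ^ 2 / 2) • (fderiv ℝ u y) (u y)‖ ≤ δ * t ^ 2 := by
  have hud : Differentiable ℝ u := hu.differentiable one_ne_zero
  have hcu : Continuous u := hud.continuous
  have hcdu : Continuous (fderiv ℝ u) := hu.continuous_fderiv one_ne_zero
  obtain ⟨M0, hM0⟩ := (isCompact_closedBall x 2).exists_bound_of_continuousOn hcu.continuousOn
  set M : ℝ := max M0 0 with hMdef
  have hMnn : 0 ≤ M := le_max_right _ _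
  have hMb : ∀ z ∈ closedBall x 2, ‖u z‖ ≤ M := fun z hz => (hM0 z hz).trans (le_max_left _ _)
  obtain ⟨K0, hK0⟩ := (isCompact_closedBall x 2).exists_bound_of_continuousOn hcdu.continuousOn
  set K : ℝ := max K0 0 with hKdef
  have hKnn : 0 ≤ K := le_max_right _ _
  have hKb : ∀ z ∈ closedBall x 2, ‖fderiv ℝ u z‖ ≤ K :=
    fun z hz => (hK0 z hz).trans (le_max_left _ _)
  have hLip : ∀ a ∈ closedBall x 2, ∀ b ∈ closedBall x 2, ‖u a - u b‖ ≤ K * ‖a - b‖ := by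
    intro a ha b hb
    exact Convex.norm_image_sub_le_of_norm_fderiv_le (fun z _ => hud z) hKb
      (convex_closedBall x 2) hb ha
  set δ₁ : ℝ := δ / (2 * (M + 1)) with hδ₁def
  have hδ₁pos : 0 < δ₁ := by positivity
  obtain ⟨η, hηpos, hηb⟩ := Metric.uniformContinuousOn_iff.1
    ((isCompact_closedBall x 2).uniformContinuousOn_of_continuous hcdu.continuousOn) δ₁ hδ₁pos
  set η' : ℝ := min η 1 with hη'def
  have hη'pos : 0 < η' := lt_min hηpos one_pos
  have hη'le1 : η' ≤ 1 := min_le_right _ _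
  have hη'leη : η' ≤ η := min_le_left _ _
  set ε₀ : ℝ := min (min (r / 2) (η' / (2 * (M + 1)))) (min (1 / (M + 1)) (δ / (2 * (K ^ 2 * M + 1)))) with hε₀def
  have hε₀pos : 0 < ε₀ := by positivity
  refine ⟨ε₀, hε₀pos, ?_⟩
  have hε₀r : ε₀ ≤ r / 2 := le_trans (min_le_left _ _) (min_le_left _ _)
  have hε₀η : ε₀ ≤ η' / (2 * (M + 1)) := le_trans (min_le_left _ _) (min_le_right _ _)
  have hε₀M : ε₀ ≤ 1 / (M + 1) := le_trans (min_le_right _ _) (min_le_left _ _)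
  have hε₀δ : ε₀ ≤ δ / (2 * (K ^ 2 * M + 1)) := le_trans (min_le_right _ _) (min_le_right _ _)
  have hMpos : (0:ℝ) < M + 1 := by linarith
  have hε₀le1 : ε₀ ≤ 1 := hε₀M.trans (by rw [div_le_one hMpos]; linarith)
  have hMε₀ : (M + 1) * ε₀ ≤ η' / 2 := by
    rw [le_div_iff₀ (by norm_num : (0:ℝ) < 2)]
    calc (M + 1) * ε₀ * 2 ≤ (M + 1) * (η' / (2 * (M + 1))) * 2 := by
          have := mul_le_mul_of_nonneg_left hε₀η (le_of_lt hMpos)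
          nlinarith
      _ = η' := by field_simp
  have hMε₀1 : (M + 1) * ε₀ ≤ 1 := by
    have : (M + 1) * ε₀ ≤ (M + 1) * (1 / (M + 1)) := mul_le_mul_of_nonneg_left hε₀M hMpos.le
    rwa [mul_one_div, div_self hMpos.ne'] at this
  intro t ht htε y hy
  rw [mem_closedBall] at hy
  have hyB : y ∈ closedBall x 2 := by
    rw [mem_closedBall]; exact hy.trans (hε₀le1.trans (by norm_num))
  set ψ : ℝ → E := fun s => Φ s y with hψdef
  have hψ0 : ψ 0 = y := hΦ0 y
  have hψd : ∀ s ∈ Icc (0:ℝ) t, HasDerivAt ψ (u (ψ s)) s := by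
    intro s hs
    apply hΦ y s
    rw [abs_of_nonneg hs.1]
    have : s ≤ t := hs.2
    linarith
  -- trajectory stays in the ball of radius 2
  have hstay : ∀ s ∈ Icc (0:ℝ) t, ψ s ∈ closedBall x 2 := by
    by_contra hbad
    push_neg at hbad
    obtain ⟨s₀, hs₀, hs₀2⟩ := hbad
    set bad : Set ℝ := {s | s ∈ Icc (0:ℝ) t ∧ 2 ≤ dist (ψ s) x} with hbaddef
    have hbadne : bad.Nonempty := by
      refine ⟨s₀, hs₀, ?_⟩
      rw [mem_closedBall, not_le] at hs₀2
      exact hs₀2.le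
    have hbdd : BddBelow bad := ⟨0, fun s hs => hs.1.1⟩
    set T := sInf bad with hTdef
    have hT0 : 0 ≤ T := le_csInf hbadne fun s hs => hs.1.1
    have hTt : T ≤ t := (csInf_le hbdd hbadne.choose_spec).trans
      hbadne.choose_spec.1.2
    have hTr : |T| < r := by
      rw [abs_of_nonneg hT0]; linarith [htε, hε₀r]
    have hψcT : ContinuousAt ψ T := (hΦ y T hTr).continuousAt
    have hTcl : T ∈ closure bad := csInf_mem_closure hbadne hbdd
    have hne : (𝓝[bad] T).NeBot := mem_closure_iff_nhdsWithin_neBot.1 hTcl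
    have h2T : 2 ≤ dist (ψ T) x := by
      have hev : ∀ᶠ s in 𝓝[bad] T, 2 ≤ dist (ψ s) x :=
        eventually_nhdsWithin_of_forall fun s hs => hs.2
      exact ge_of_tendsto ((hψcT.dist continuousAt_const).mono_left
        nhdsWithin_le_nhds) hev
    -- derivative bound on [0, T)
    have hbound : ∀ s ∈ Ico (0:ℝ) T, ‖u (ψ s)‖ ≤ M := by
      intro s hs
      have hsnotbad : s ∉ bad := fun h => absurd (csInf_le hbdd h) (not_le.2 hs.2)
      have hsIcc : s ∈ Icc (0:ℝ) t := ⟨hs.1, hs.2.le.trans hTt⟩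
      have : dist (ψ s) x < 2 := by
        by_contra h
        exact hsnotbad ⟨hsIcc, not_lt.1 h⟩
      exact hMb _ (mem_closedBall.2 this.le)
    have hmvt := norm_image_sub_le_of_norm_deriv_le_segment'
      (f := ψ) (f' := fun s => u (ψ s)) (C := M) (a := 0) (b := T)
      (fun s hs => ((hψd s ⟨hs.1, hs.2.trans hTt⟩).hasDerivWithinAt)) hbound
      T (right_mem_Icc.2 hT0)
    rw [hψ0, sub_zero] at hmvt
    have hdistT : dist (ψ T) x ≤ M * T + ε₀ := by
      calc dist (ψ T) x ≤ dist (ψ T) y + dist y x := dist_triangle _ _ _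
        _ ≤ M * T + ε₀ := by
            rw [dist_eq_norm]
            exact add_le_add hmvt hy
    have hMT : M * T ≤ M * ε₀ := mul_le_mul_of_nonneg_left (hTt.trans htε) hMnn
    nlinarith
  have hbound1 : ∀ s ∈ Icc (0:ℝ) t, ‖ψ s - y‖ ≤ M * s := by
    have := norm_image_sub_le_of_norm_deriv_le_segment'
      (f := ψ) (f' := fun s => u (ψ s)) (C := M) (a := 0) (b := t)
      (fun s hs => (hψd s hs).hasDerivWithinAt)
      (fun s hs => hMb _ (hstay s (Ico_subset_Icc_self hs)))
    intro s hs
    have h := this s hs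
    rwa [hψ0, sub_zero] at h
  have hbound2 : ∀ s ∈ Icc (0:ℝ) t, ‖ψ s - y - s • u y‖ ≤ K * M * t * s := by
    have hg : ∀ s ∈ Icc (0:ℝ) t,
        HasDerivWithinAt (fun s => ψ s - y - s • u y) (u (ψ s) - u y) (Icc 0 t) s := by
      intro s hs
      have h1 : HasDerivAt (fun s => ψ s - y - s • u y) (u (ψ s) - (1:ℝ) • u y) s :=
        ((hψd s hs).sub_const y).sub ((hasDerivAt_id s).smul_const (u y))
      rw [one_smul] at h1
      exact h1.hasDerivWithinAt
    have hb : ∀ s ∈ Ico (0:ℝ) t, ‖u (ψ s) - u y‖ ≤ K * M * t := by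
      intro s hs
      have h1 := hLip _ (hstay s (Ico_subset_Icc_self hs)) _ hyB
      have h2 := hbound1 s (Ico_subset_Icc_self hs)
      calc ‖u (ψ s) - u y‖ ≤ K * ‖ψ s - y‖ := h1
        _ ≤ K * (M * s) := mul_le_mul_of_nonneg_left h2 hKnn
        _ = K * M * s := by ring
        _ ≤ K * M * t := mul_le_mul_of_nonneg_left hs.2.le (mul_nonneg hKnn hMnn)
    have := norm_image_sub_le_of_norm_deriv_le_segment' hg hb
    intro s hs
    have h := this s hs
    simpa [hψ0] using h
  -- final estimate
  set w : E := (fderiv ℝ u y) (u y) with hwdef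
  have hq : ∀ s ∈ Icc (0:ℝ) t,
      HasDerivWithinAt (fun s => ψ s - y - s • u y - (s ^ 2 / 2) • w)
        (u (ψ s) - u y - s • w) (Icc 0 t) s := by
    intro s hs
    have h2 : HasDerivAt (fun s : ℝ => (s ^ 2 / 2) • w) (s • w) s := by
      have h3 := ((hasDerivAt_pow 2 s).div_const 2).smul_const w
      have h4 : ((2:ℕ):ℝ) * s ^ (2-1) / 2 = s := by norm_num
      rwa [h4] at h3
    have h1 : HasDerivAt (fun s => ψ s - y - s • u y) (u (ψ s) - (1:ℝ) • u y) s :=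
      ((hψd s hs).sub_const y).sub ((hasDerivAt_id s).smul_const (u y))
    rw [one_smul] at h1
    exact (h1.sub h2).hasDerivWithinAt
  have hballmem : ∀ s ∈ Icc (0:ℝ) t, ψ s ∈ closedBall y ((M + 1) * ε₀) := by
    intro s hs
    rw [mem_closedBall, dist_eq_norm]
    calc ‖ψ s - y‖ ≤ M * s := hbound1 s hs
      _ ≤ M * ε₀ := mul_le_mul_of_nonneg_left (hs.2.trans htε) hMnn
      _ ≤ (M + 1) * ε₀ := by nlinarith
  have hballsub : closedBall y ((M + 1) * ε₀) ⊆ closedBall x 2 := by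
    intro ξ hξ
    rw [mem_closedBall] at hξ ⊢
    calc dist ξ x ≤ dist ξ y + dist y x := dist_triangle _ _ _
      _ ≤ (M + 1) * ε₀ + ε₀ := add_le_add hξ hy
      _ ≤ η' / 2 + 1 := add_le_add hMε₀ hε₀le1
      _ ≤ 2 := by linarith [hη'le1]
  have hderivnear : ∀ ξ ∈ closedBall y ((M + 1) * ε₀),
      ‖fderiv ℝ u ξ - fderiv ℝ u y‖ ≤ δ₁ := by
    intro ξ hξ
    have hξB : ξ ∈ closedBall x 2 := hballsub hξ
    have hd : dist ξ y < η := by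
      rw [mem_closedBall] at hξ
      calc dist ξ y ≤ (M + 1) * ε₀ := hξ
        _ ≤ η' / 2 := hMε₀
        _ < η := by linarith [hη'leη, hη'pos]
    have := hηb ξ hξB y hyB hd
    rw [dist_eq_norm] at this
    exact this.le
  have hqb : ∀ s ∈ Ico (0:ℝ) t, ‖u (ψ s) - u y - s • w‖ ≤ δ₁ * (M * t) + K ^ 2 * M * t ^ 2 := by
    intro s hs
    have hsI : s ∈ Icc (0:ℝ) t := Ico_subset_Icc_self hs
    have hmean : ‖u (ψ s) - u y - (fderiv ℝ u y) (ψ s - y)‖ ≤ δ₁ * ‖ψ s - y‖ := by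
      refine Convex.norm_image_sub_le_of_norm_fderiv_le' (fun z hz => hud z)
        hderivnear (convex_closedBall _ _) ?_ (hballmem s hsI)
      exact mem_closedBall_self (by positivity)
    have h1 : ‖u (ψ s) - u y - (fderiv ℝ u y) (ψ s - y)‖ ≤ δ₁ * (M * t) := by
      refine hmean.trans (mul_le_mul_of_nonneg_left ?_ hδ₁pos.le)
      calc ‖ψ s - y‖ ≤ M * s := hbound1 s hsI
        _ ≤ M * t := mul_le_mul_of_nonneg_left hs.2.le hMnn
    have h2 : ‖(fderiv ℝ u y) (ψ s - y - s • u y)‖ ≤ K ^ 2 * M * t ^ 2 := by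
      calc ‖(fderiv ℝ u y) (ψ s - y - s • u y)‖
          ≤ ‖fderiv ℝ u y‖ * ‖ψ s - y - s • u y‖ := (fderiv ℝ u y).le_opNorm _
        _ ≤ K * (K * M * t * s) := by
            refine mul_le_mul (hKb _ hyB) (hbound2 s hsI) (norm_nonneg _) hKnn
        _ = K ^ 2 * M * t * s := by ring
        _ ≤ K ^ 2 * M * t * t := mul_le_mul_of_nonneg_left hs.2.le (by positivity)
        _ = K ^ 2 * M * t ^ 2 := by ring
    have e1 : (fderiv ℝ u y) (ψ s - y - s • u y)
        = (fderiv ℝ u y) (ψ s - y) - s • (fderiv ℝ u y) (u y) := by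
      rw [map_sub, map_smul]
    have hsplit : u (ψ s) - u y - s • w
        = (u (ψ s) - u y - (fderiv ℝ u y) (ψ s - y))
            + (fderiv ℝ u y) (ψ s - y - s • u y) := by
      rw [hwdef, e1]; abel
    calc ‖u (ψ s) - u y - s • w‖
        = ‖(u (ψ s) - u y - (fderiv ℝ u y) (ψ s - y))
            + (fderiv ℝ u y) (ψ s - y - s • u y)‖ := by rw [hsplit]
      _ ≤ ‖u (ψ s) - u y - (fderiv ℝ u y) (ψ s - y)‖
            + ‖(fderiv ℝ u y) (ψ s - y - s • u y)‖ := norm_add_le _ _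
      _ ≤ δ₁ * (M * t) + K ^ 2 * M * t ^ 2 := add_le_add h1 h2
  have hfinal := norm_image_sub_le_of_norm_deriv_le_segment' hq hqb t (right_mem_Icc.2 ht.le)
  have hzero : ψ 0 - y - (0:ℝ) • u y - ((0:ℝ) ^ 2 / 2) • w = 0 := by
    rw [hψ0, zero_smul, show ((0:ℝ) ^ 2 / 2) = 0 by norm_num, zero_smul,
      sub_zero, sub_zero, sub_self]
  rw [hzero, sub_zero, sub_zero] at hfinal
  refine hfinal.trans ?_
  have e1 : δ₁ * M ≤ δ / 2 := by
    rw [hδ₁def]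
    rw [div_mul_eq_mul_div, div_le_div_iff₀ (by positivity) (by norm_num)]
    nlinarith
  have e2 : K ^ 2 * M * t ≤ δ / 2 := by
    have h3 : ε₀ * (2 * (K ^ 2 * M + 1)) ≤ δ := by
      rw [le_div_iff₀ (by positivity)] at hε₀δ
      linarith
    have h4 : K ^ 2 * M * t ≤ K ^ 2 * M * ε₀ :=
      mul_le_mul_of_nonneg_left htε (by positivity)
    nlinarith [sq_nonneg K, hε₀pos.le]
  calc (δ₁ * (M * t) + K ^ 2 * M * t ^ 2) * t
      = (δ₁ * M) * t ^ 2 + (K ^ 2 * M * t) * t ^ 2 := by ring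
    _ ≤ (δ / 2) * t ^ 2 + (δ / 2) * t ^ 2 := by
        refine add_le_add ?_ ?_
        · nlinarith [sq_nonneg t]
        · nlinarith [sq_nonneg t]
    _ = δ * t ^ 2 := by ring

lemma flow_taylor_littleO
    {E : Type*} [NormedAddCommGroup E] [NormedSpace ℝ E] [FiniteDimensional ℝ E]
    (u : E → E) (hu : ContDiff ℝ 1 u)
    (Φ : ℝ → E → E) (hΦ0 : ∀ y, Φ 0 y = y)
    {r : ℝ} (hr : 0 < r)
    (hΦ : ∀ y, ∀ t : ℝ, |t| < r → HasDerivAt (fun s => Φ s y) (u (Φ t y)) t)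
    (x : E) {c : ℝ} (hc : 0 < c) (y : ℝ → E)
    (hy : Filter.Tendsto y (𝓝[>] (0:ℝ)) (𝓝 x)) :
    (fun ε => Φ (c * ε) (y ε) - y ε - (c * ε) • u (y ε)
        - ((c * ε) ^ 2 / 2) • (fderiv ℝ u (y ε)) (u (y ε)))
      =o[𝓝[>] (0:ℝ)] fun ε => ε ^ 2 := by
  rw [isLittleO_iff]
  intro C hC
  obtain ⟨ε₀, hε₀, hq⟩ := flow_taylor_quant u hu Φ hΦ0 hr hΦ x (δ := C / c ^ 2)
    (by positivity)
  have h1 : Set.Ioo (0:ℝ) (ε₀ / c) ∈ 𝓝[>] (0:ℝ) :=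
    Ioo_mem_nhdsGT_of_mem ⟨le_rfl, by positivity⟩
  have h2 : ∀ᶠ ε in 𝓝[>] (0:ℝ), y ε ∈ closedBall x ε₀ := hy (closedBall_mem_nhds x hε₀)
  filter_upwards [h1, h2] with ε hε hyε
  have hct : 0 < c * ε := mul_pos hc hε.1
  have hctε : c * ε ≤ ε₀ := by
    have h3 := hε.2
    rw [lt_div_iff₀ hc] at h3
    nlinarith
  refine (hq (c * ε) hct hctε (y ε) hyε).trans (le_of_eq ?_)
  rw [Real.norm_of_nonneg (by positivity : (0:ℝ) ≤ ε ^ 2)]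
  field_simp

end Auxiliary

open Metric Set Filter in
set_option maxHeartbeats 1000000 in
/-- Training for time `ε` on field `u₁` followed by time `ε` on field `u₂`,
compared against training for time `2ε` on the averaged field `(u₁+u₂)/2`:
`L(Φ₂(ε, Φ₁(ε, x))) − L(Φ̄(2ε, x))
  = (ε²/2)·⟨Du₂(x)u₁(x) − Du₁(x)u₂(x), ∇L(x)⟩ + o(ε²)` as `ε → 0⁺`. -/
theorem ordering_excess_loss {n : ℕ}
    (u₁ u₂ : EuclideanSpace ℝ (Fin n) → EuclideanSpace ℝ (Fin n))
    (hu₁ : ContDiff ℝ 1 u₁) (hu₂ : ContDiff ℝ 1 u₂)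
    (L : EuclideanSpace ℝ (Fin n) → ℝ) (hL : ContDiff ℝ 1 L)
    (Φ₁ Φ₂ Φavg : ℝ → EuclideanSpace ℝ (Fin n) → EuclideanSpace ℝ (Fin n))
    (hΦ₁0 : ∀ x, Φ₁ 0 x = x) (hΦ₂0 : ∀ x, Φ₂ 0 x = x)
    (hΦavg0 : ∀ x, Φavg 0 x = x)
    (hΦ₁ : ∃ r > (0 : ℝ), ∀ x, ∀ t : ℝ, |t| < r →
      HasDerivAt (fun s => Φ₁ s x) (u₁ (Φ₁ t x)) t)
    (hΦ₂ : ∃ r > (0 : ℝ), ∀ x, ∀ t : ℝ, |t| < r →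
      HasDerivAt (fun s => Φ₂ s x) (u₂ (Φ₂ t x)) t)
    (hΦavg : ∃ r > (0 : ℝ), ∀ x, ∀ t : ℝ, |t| < r →
      HasDerivAt (fun s => Φavg s x) ((2⁻¹ : ℝ) • (u₁ (Φavg t x) + u₂ (Φavg t x))) t)
    (x : EuclideanSpace ℝ (Fin n)) :
    (fun ε : ℝ =>
        L (Φ₂ ε (Φ₁ ε x)) - L (Φavg (2 * ε) x)
          - (ε ^ 2 / 2) *
              ⟪fderiv ℝ u₂ x (u₁ x) - fderiv ℝ u₁ x (u₂ x), gradient L x⟫)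
      =o[𝓝[>] 0] fun ε : ℝ => ε ^ 2 := by
  obtain ⟨r₁, hr₁, hΦ₁'⟩ := hΦ₁
  obtain ⟨r₂, hr₂, hΦ₂'⟩ := hΦ₂
  obtain ⟨r₃, hr₃, hΦa'⟩ := hΦavg
  set l : Filter ℝ := 𝓝[>] (0:ℝ) with hldef
  set g : ℝ → ℝ := fun ε => ε ^ 2 with hgdef
  have hd₁ : Differentiable ℝ u₁ := hu₁.differentiable one_ne_zero
  have hd₂ : Differentiable ℝ u₂ := hu₂.differentiable one_ne_zero
  set D₁ : EuclideanSpace ℝ (Fin n) →L[ℝ] EuclideanSpace ℝ (Fin n) := fderiv ℝ u₁ x with hD₁def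
  set D₂ : EuclideanSpace ℝ (Fin n) →L[ℝ] EuclideanSpace ℝ (Fin n) := fderiv ℝ u₂ x with hD₂def
  set DL : EuclideanSpace ℝ (Fin n) →L[ℝ] ℝ := fderiv ℝ L x with hDLdef
  set ub : EuclideanSpace ℝ (Fin n) → EuclideanSpace ℝ (Fin n) := fun z => (2⁻¹ : ℝ) • (u₁ z + u₂ z) with hubdef
  have hub : ContDiff ℝ 1 ub := (hu₁.add hu₂).const_smul _
  set y : ℝ → EuclideanSpace ℝ (Fin n) := fun ε => Φ₁ ε x with hydef
  set v : EuclideanSpace ℝ (Fin n) := (2⁻¹ : ℝ) • (D₂ (u₁ x) - D₁ (u₂ x)) with hvdef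
  set w : EuclideanSpace ℝ (Fin n) := D₂ (u₁ x) - D₁ (u₂ x) with hwdef
  -- basic limits
  have hg0 : Tendsto g l (𝓝 0) := by
    have h1 : Tendsto g (𝓝 0) (𝓝 ((0:ℝ) ^ 2)) := (continuous_pow 2).tendsto 0
    norm_num at h1
    exact h1.mono_left nhdsWithin_le_nhds
  have hy_tendsto : Tendsto y l (𝓝 x) := by
    have hc0 : ContinuousAt (fun s => Φ₁ s x) 0 :=
      (hΦ₁' x 0 (by simpa using hr₁)).continuousAt
    have h1 : Tendsto (fun s => Φ₁ s x) (𝓝 0) (𝓝 (Φ₁ 0 x)) := hc0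
    rw [hΦ₁0 x] at h1
    exact h1.mono_left nhdsWithin_le_nhds
  -- the three flow expansions
  have hE1 : (fun ε => y ε - x - ε • u₁ x - (ε ^ 2 / 2) • D₁ (u₁ x)) =o[l] g := by
    have h := flow_taylor_littleO u₁ hu₁ Φ₁ hΦ₁0 hr₁ hΦ₁' x one_pos (fun _ => x)
      tendsto_const_nhds
    simpa only [one_mul] using h
  have hE2 : (fun ε => Φavg (2 * ε) x - x - (2 * ε) • ub x
      - ((2 * ε) ^ 2 / 2) • (fderiv ℝ ub x) (ub x)) =o[l] g :=
    flow_taylor_littleO ub hub Φavg hΦavg0 hr₃ hΦa' x two_pos (fun _ => x)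
      tendsto_const_nhds
  have hE3 : (fun ε => Φ₂ ε (y ε) - y ε - ε • u₂ (y ε)
      - (ε ^ 2 / 2) • (fderiv ℝ u₂ (y ε)) (u₂ (y ε))) =o[l] g := by
    have h := flow_taylor_littleO u₂ hu₂ Φ₂ hΦ₂0 hr₂ hΦ₂' x one_pos y hy_tendsto
    simpa only [one_mul] using h
  -- elementary big-O facts
  have hε2 : (fun ε : ℝ => ε ^ 2) =O[l] (fun ε => ε) := by
    rw [isBigO_iff]
    refine ⟨1, ?_⟩
    filter_upwards [Ioo_mem_nhdsGT_of_mem ⟨le_refl (0:ℝ), one_pos⟩] with ε hε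
    rw [Real.norm_of_nonneg (by positivity : (0:ℝ) ≤ ε ^ 2),
      Real.norm_of_nonneg hε.1.le, one_mul]
    nlinarith [hε.1, hε.2]
  have hε2o : (fun ε : ℝ => ε ^ 2) =o[l] (fun ε => ε) := by
    rw [isLittleO_iff]
    intro C hC
    filter_upwards [Ioo_mem_nhdsGT_of_mem ⟨le_refl (0:ℝ), hC⟩] with ε hε
    rw [Real.norm_of_nonneg (by positivity : (0:ℝ) ≤ ε ^ 2),
      Real.norm_of_nonneg hε.1.le]
    nlinarith [hε.1, hε.2]
  have hlin : ∀ z : EuclideanSpace ℝ (Fin n), (fun ε : ℝ => ε • z) =O[l] (fun ε => ε) := by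
    intro z
    rw [isBigO_iff]
    exact ⟨‖z‖, Eventually.of_forall fun ε => by
      rw [norm_smul, mul_comm]⟩
  have hsq : ∀ z : EuclideanSpace ℝ (Fin n), (fun ε : ℝ => (ε ^ 2 / 2) • z) =O[l] g := by
    intro z
    rw [isBigO_iff]
    refine ⟨‖z‖, Eventually.of_forall fun ε => ?_⟩
    rw [norm_smul]
    rw [hgdef]
    have : ‖ε ^ 2 / 2‖ ≤ ‖ε ^ 2‖ := by
      rw [Real.norm_eq_abs, Real.norm_eq_abs, abs_div]
      rw [abs_of_nonneg (by norm_num : (0:ℝ) ≤ 2)]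
      have := abs_nonneg (ε ^ 2)
      linarith [half_le_self this]
    calc ‖ε ^ 2 / 2‖ * ‖z‖ ≤ ‖ε ^ 2‖ * ‖z‖ :=
          mul_le_mul_of_nonneg_right this (norm_nonneg _)
      _ = ‖z‖ * ‖ε ^ 2‖ := mul_comm _ _
  have hsq2 : ∀ z : EuclideanSpace ℝ (Fin n), (fun ε : ℝ => ε ^ 2 • z) =O[l] g := by
    intro z
    rw [isBigO_iff]
    exact ⟨‖z‖, Eventually.of_forall fun ε => by
      rw [norm_smul, mul_comm]⟩
  -- y ε - x = O(ε)
  have hyO : (fun ε => y ε - x) =O[l] (fun ε => ε) := by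
    have heq : (fun ε => y ε - x) = fun ε =>
        (y ε - x - ε • u₁ x - (ε ^ 2 / 2) • D₁ (u₁ x))
          + (ε • u₁ x + (ε ^ 2 / 2) • D₁ (u₁ x)) := by
      funext ε; abel
    rw [heq]
    exact (hE1.isBigO.trans hε2).add ((hlin (u₁ x)).add ((hsq (D₁ (u₁ x))).trans hε2))
  have hyx2O : (fun ε => y ε - x - ε • u₁ x) =O[l] g := by
    have heq : (fun ε => y ε - x - ε • u₁ x) = fun ε =>
        (y ε - x - ε • u₁ x - (ε ^ 2 / 2) • D₁ (u₁ x)) + (ε ^ 2 / 2) • D₁ (u₁ x) := by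
      funext ε; abel
    rw [heq]
    exact hE1.isBigO.add (hsq (D₁ (u₁ x)))
  -- first-order expansion of u₂ along y
  have hw2 : (fun ε => u₂ (y ε) - u₂ x - ε • D₂ (u₁ x)) =o[l] (fun ε => ε) := by
    have hpart1 : (fun ε => u₂ (y ε) - u₂ x - D₂ (y ε - x)) =o[l] (fun ε => ε) := by
      have hfd : HasFDerivAt u₂ D₂ x := (hd₂ x).hasFDerivAt
      have h1 := hfd.isLittleO.comp_tendsto hy_tendsto
      exact h1.trans_isBigO hyO
    have hpart2 : (fun ε => D₂ (y ε - x - ε • u₁ x)) =o[l] (fun ε => ε) :=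
      (D₂.isBigO_comp _ l).trans_isLittleO (hyx2O.trans_isLittleO hε2o)
    have heq : (fun ε => u₂ (y ε) - u₂ x - ε • D₂ (u₁ x)) = fun ε =>
        (u₂ (y ε) - u₂ x - D₂ (y ε - x)) + D₂ (y ε - x - ε • u₁ x) := by
      funext ε
      simp only [map_sub, map_smul]
      abel
    rw [heq]
    exact hpart1.add hpart2
  have hsmulw2 : (fun ε => ε • (u₂ (y ε) - u₂ x - ε • D₂ (u₁ x))) =o[l] g := by
    have h := (isBigO_refl (fun ε : ℝ => ε) l).smul_isLittleO hw2
    have heq : (fun ε : ℝ => ε • ε) = g := by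
      funext ε; rw [smul_eq_mul, hgdef]; ring
    rwa [heq] at h
  -- continuity term
  have hφ : Tendsto (fun ε => (fderiv ℝ u₂ (y ε)) (u₂ (y ε)) - D₂ (u₂ x)) l (𝓝 0) := by
    have hcont : Continuous fun z => (fderiv ℝ u₂ z) (u₂ z) :=
      (hu₂.continuous_fderiv one_ne_zero).clm_apply hd₂.continuous
    have h1 : Tendsto (fun ε => (fderiv ℝ u₂ (y ε)) (u₂ (y ε))) l (𝓝 (D₂ (u₂ x))) :=
      (hcont.tendsto x).comp hy_tendsto
    exact tendsto_sub_nhds_zero_iff.2 h1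
  have hφo : (fun ε => (ε ^ 2 / 2) • ((fderiv ℝ u₂ (y ε)) (u₂ (y ε)) - D₂ (u₂ x)))
      =o[l] g := by
    have hhalf : (fun ε : ℝ => ε ^ 2 / 2) =O[l] g := by
      rw [isBigO_iff]
      refine ⟨1, Eventually.of_forall fun ε => ?_⟩
      rw [one_mul, Real.norm_eq_abs, Real.norm_eq_abs, abs_div,
        abs_of_nonneg (by norm_num : (0:ℝ) ≤ 2)]
      linarith [half_le_self (abs_nonneg (ε ^ 2))]
    have h := hhalf.smul_isLittleO ((isLittleO_one_iff ℝ).2 hφ)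
    have heq : (fun ε : ℝ => g ε • (1:ℝ)) = g := by
      funext ε; rw [smul_eq_mul, mul_one]
    rwa [heq] at h
  -- derivative of the averaged field
  have hDub : fderiv ℝ ub x = (2⁻¹ : ℝ) • (D₁ + D₂) := by
    rw [hubdef]
    rw [fderiv_fun_const_smul (f := fun z => u₁ z + u₂ z) ((hd₁ x).add (hd₂ x))]
    rw [fderiv_fun_add (hd₁ x) (hd₂ x)]
  -- the key combination
  have hKey : (fun ε => Φ₂ ε (y ε) - Φavg (2 * ε) x - ε ^ 2 • v) =o[l] g := by
    have hident : ∀ ε : ℝ, Φ₂ ε (y ε) - Φavg (2 * ε) x - ε ^ 2 • v =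
        (Φ₂ ε (y ε) - y ε - ε • u₂ (y ε) - (ε ^ 2 / 2) • (fderiv ℝ u₂ (y ε)) (u₂ (y ε)))
        + (y ε - x - ε • u₁ x - (ε ^ 2 / 2) • D₁ (u₁ x))
        - (Φavg (2 * ε) x - x - (2 * ε) • ub x - ((2 * ε) ^ 2 / 2) • (fderiv ℝ ub x) (ub x))
        + ε • (u₂ (y ε) - u₂ x - ε • D₂ (u₁ x))
        + (ε ^ 2 / 2) • ((fderiv ℝ u₂ (y ε)) (u₂ (y ε)) - D₂ (u₂ x)) := by
      intro ε
      have hubx : ub x = (2⁻¹ : ℝ) • (u₁ x + u₂ x) := rfl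
      rw [hDub, hubx, hvdef]
      simp only [ContinuousLinearMap.smul_apply, ContinuousLinearMap.add_apply,
        map_smul, map_add]
      module
    have heq : (fun ε => Φ₂ ε (y ε) - Φavg (2 * ε) x - ε ^ 2 • v) = fun ε =>
        (Φ₂ ε (y ε) - y ε - ε • u₂ (y ε) - (ε ^ 2 / 2) • (fderiv ℝ u₂ (y ε)) (u₂ (y ε)))
        + (y ε - x - ε • u₁ x - (ε ^ 2 / 2) • D₁ (u₁ x))
        - (Φavg (2 * ε) x - x - (2 * ε) • ub x - ((2 * ε) ^ 2 / 2) • (fderiv ℝ ub x) (ub x))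
        + ε • (u₂ (y ε) - u₂ x - ε • D₂ (u₁ x))
        + (ε ^ 2 / 2) • ((fderiv ℝ u₂ (y ε)) (u₂ (y ε)) - D₂ (u₂ x)) :=
      funext hident
    rw [heq]
    exact (((hE3.add hE1).sub hE2).add hsmulw2).add hφo
  -- big-O and limits for the two endpoints
  have hab : (fun ε => Φ₂ ε (y ε) - Φavg (2 * ε) x) =O[l] g := by
    have heq : (fun ε => Φ₂ ε (y ε) - Φavg (2 * ε) x) = fun ε =>
        (Φ₂ ε (y ε) - Φavg (2 * ε) x - ε ^ 2 • v) + ε ^ 2 • v := by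
      funext ε; abel
    rw [heq]
    exact hKey.isBigO.add (hsq2 v)
  have htb : Tendsto (fun ε => Φavg (2 * ε) x) l (𝓝 x) := by
    have hc0 : ContinuousAt (fun s => Φavg s x) 0 :=
      (hΦa' x 0 (by simpa using hr₃)).continuousAt
    have h2ε : Tendsto (fun ε : ℝ => 2 * ε) l (𝓝 0) := by
      have h1 : Tendsto (fun ε : ℝ => 2 * ε) (𝓝 0) (𝓝 (2 * 0)) :=
        (continuous_const.mul continuous_id).tendsto 0
      norm_num at h1
      exact h1.mono_left nhdsWithin_le_nhds
    have h1 : Tendsto (fun s => Φavg s x) (𝓝 0) (𝓝 (Φavg 0 x)) := hc0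
    rw [hΦavg0 x] at h1
    exact h1.comp h2ε
  have hta : Tendsto (fun ε => Φ₂ ε (y ε)) l (𝓝 x) := by
    have h1 : Tendsto (fun ε => Φ₂ ε (y ε) - Φavg (2 * ε) x) l (𝓝 0) :=
      hab.trans_tendsto hg0
    have h2 := h1.add htb
    rw [zero_add] at h2
    have heq : (fun ε => Φ₂ ε (y ε) - Φavg (2 * ε) x + Φavg (2 * ε) x)
        = fun ε => Φ₂ ε (y ε) := by
      funext ε; abel
    rwa [heq] at h2
  -- mean value estimate for L
  have hMV : (fun ε => L (Φ₂ ε (y ε)) - L (Φavg (2 * ε) x)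
      - DL (Φ₂ ε (y ε) - Φavg (2 * ε) x)) =o[l] g := by
    rw [isLittleO_iff]
    intro C hC
    obtain ⟨c', hc', habw⟩ := hab.exists_pos
    have hcL : ContinuousAt (fderiv ℝ L) x := ((hL.continuous_fderiv one_ne_zero).tendsto x)
    have hCc' : 0 < C / c' := by positivity
    have hball := Metric.continuousAt_iff.1 hcL (C / c') hCc'
    obtain ⟨η, hη, hballb⟩ := hball
    filter_upwards [habw.bound, hta (ball_mem_nhds x hη), htb (ball_mem_nhds x hη)]
      with ε h1 h2 h3
    have hkey : ‖L (Φ₂ ε (y ε)) - L (Φavg (2 * ε) x)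
        - DL (Φ₂ ε (y ε) - Φavg (2 * ε) x)‖ ≤ (C / c') * ‖Φ₂ ε (y ε) - Φavg (2 * ε) x‖ := by
      refine Convex.norm_image_sub_le_of_norm_fderiv_le' (f := L) (φ := DL)
        (s := ball x η) (fun z _ => hL.differentiable one_ne_zero z) ?_
        (convex_ball x η) h3 h2
      intro z hz
      have := hballb (mem_ball.1 hz)
      rw [dist_eq_norm] at this
      exact this.le
    refine hkey.trans ?_
    calc (C / c') * ‖Φ₂ ε (y ε) - Φavg (2 * ε) x‖ ≤ (C / c') * (c' * ‖g ε‖) :=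
          mul_le_mul_of_nonneg_left h1 hCc'.le
      _ = C * ‖g ε‖ := by field_simp
  -- gradient identity
  have hgrad : ∀ z : EuclideanSpace ℝ (Fin n), ⟪z, gradient L x⟫ = DL z := by
    intro z
    rw [real_inner_comm, gradient, InnerProductSpace.toDual_symm_apply]
  -- linear image of the key term
  have hDLo : (fun ε => DL (Φ₂ ε (y ε) - Φavg (2 * ε) x - ε ^ 2 • v)) =o[l] g :=
    (DL.isBigO_comp _ l).trans_isLittleO hKey
  -- final assembly
  have hfin : (fun ε : ℝ => L (Φ₂ ε (y ε)) - L (Φavg (2 * ε) x)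
      - (ε ^ 2 / 2) * ⟪w, gradient L x⟫) =o[l] g := by
    have heq : (fun ε : ℝ => L (Φ₂ ε (y ε)) - L (Φavg (2 * ε) x)
        - (ε ^ 2 / 2) * ⟪w, gradient L x⟫) = fun ε =>
        (L (Φ₂ ε (y ε)) - L (Φavg (2 * ε) x) - DL (Φ₂ ε (y ε) - Φavg (2 * ε) x))
        + DL (Φ₂ ε (y ε) - Φavg (2 * ε) x - ε ^ 2 • v) := by
      funext ε
      simp only [map_sub, map_smul]
      rw [hvdef, map_smul, ← hgrad w]
      simp only [smul_eq_mul]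
      ring
    rw [heq]
    exact hMV.add hDLo
  exact hfin
end

section
/- Let u₁, u₂ : ℝⁿ → ℝⁿ be continuously differentiable vector fields and L : ℝⁿ → ℝ continuously differentiable. Let Φ₁, Φ₂, Φ̄ be flows of u₁, u₂ and of the averaged field (u₁+u₂)/2 respectively. Then for each fixed x, as ε → 0⁺, the effects of the two opposite orderings cancel to second order: L(Φ₂(ε, Φ₁(ε, x))) + L(Φ₁(ε, Φ₂(ε, x))) − 2·L(Φ̄(2ε, x)) = o(ε²). -/
open Asymptotics Topology Metric Set Filter

section helpers
variable {E : Type*} [NormedAddCommGroup E] [NormedSpace ℝ E]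


/-- Second-order Taylor expansion with Peano remainder for a curve whose derivative is
differentiable at 0. -/
lemma taylor2 {h g : ℝ → E} {g' : E} {r : ℝ} (hr : 0 < r)
    (hd : ∀ t : ℝ, |t| < r → HasDerivAt h (g t) t) (hg : HasDerivAt g g' 0) :
    (fun ε : ℝ => h ε - h 0 - ε • g 0 - (ε ^ 2 / 2) • g') =o[𝓝[>] (0:ℝ)] fun ε => ε ^ 2 := by
  rw [isLittleO_iff]
  intro c hc
  have hgo := (hasDerivAt_iff_isLittleO.mp hg)
  rw [isLittleO_iff] at hgo
  have h1 := hgo hc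
  rw [Metric.eventually_nhds_iff] at h1
  obtain ⟨δ, hδ, hδb⟩ := h1
  have key : ∀ ε : ℝ, 0 < ε → ε < min δ r → ‖h ε - h 0 - ε • g 0 - (ε ^ 2 / 2) • g'‖ ≤ c * ‖ε ^ 2‖ := by
    intro ε hε hεm
    have hεδ : ε < δ := lt_of_lt_of_le hεm (min_le_left _ _)
    have hεr : ε < r := lt_of_lt_of_le hεm (min_le_right _ _)
    set φ : ℝ → E := fun s => h s - s • g 0 - (s ^ 2 / 2) • g' with hφ
    have hφd : ∀ s ∈ Icc (0:ℝ) ε, HasDerivWithinAt φ (g s - g 0 - s • g') (Icc 0 ε) s := by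
      intro s hs
      have habs : |s| < r := by
        rw [abs_lt]; constructor <;> nlinarith [hs.1, hs.2]
      have h2 : HasDerivAt (fun t : ℝ => t • g 0) ((1:ℝ) • g 0) s := (hasDerivAt_id s).smul_const _
      have h3 : HasDerivAt (fun t : ℝ => (t ^ 2 / 2) • g') ((2 * s ^ 1 / 2) • g') s := by
        exact (((hasDerivAt_pow 2 s).div_const 2).smul_const g')
      have := ((hd s habs).sub h2).sub h3
      simp only [one_smul, pow_one] at this
      have h4 : (2 * s / 2 : ℝ) = s := by ring
      rw [h4] at this
      exact this.hasDerivWithinAt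
    have hbd : ∀ s ∈ Ico (0:ℝ) ε, ‖g s - g 0 - s • g'‖ ≤ c * ε := by
      intro s hs
      have : dist s 0 < δ := by
        simp only [Real.dist_eq, sub_zero, abs_of_nonneg hs.1]; linarith [hs.2]
      have hb := hδb this
      simp only [sub_zero] at hb
      calc ‖g s - g 0 - s • g'‖ ≤ c * ‖s‖ := hb
        _ ≤ c * ε := by
            rw [Real.norm_eq_abs, abs_of_nonneg hs.1]
            exact mul_le_mul_of_nonneg_left (le_of_lt hs.2) hc.le
    have := norm_image_sub_le_of_norm_deriv_le_segment' hφd hbd ε (right_mem_Icc.mpr hε.le)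
    have hφ0 : φ 0 = h 0 := by simp [hφ]
    rw [hφ0] at this
    calc ‖h ε - h 0 - ε • g 0 - (ε ^ 2 / 2) • g'‖ = ‖φ ε - h 0‖ := by
          simp only [hφ]; congr 1; abel
      _ ≤ c * ε * (ε - 0) := this
      _ = c * ‖ε ^ 2‖ := by
          rw [Real.norm_eq_abs, abs_of_nonneg (by positivity : (0:ℝ) ≤ ε ^ 2)]; ring
  filter_upwards [Ioo_mem_nhdsGT_of_mem (Set.left_mem_Ico.mpr (by positivity : (0:ℝ) < min δ r))] with ε hε
  exact key ε hε.1 hε.2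


/-- A trajectory with speed ≤ M (while it is in the unit ball around x) starting near x
stays in the ball of radius 1/2 for a short time. -/
lemma stay' {x : E} {ψ w : ℝ → E} {T M : ℝ} (hM : 0 < M)
    (hderiv : ∀ s ∈ Icc (0:ℝ) T, HasDerivAt ψ (w s) s)
    (hbound : ∀ s ∈ Icc (0:ℝ) T, ψ s ∈ closedBall x 1 → ‖w s‖ ≤ M)
    (h0 : ψ 0 ∈ closedBall x (1/5)) (hTM : M * T ≤ 1/5) :
    ∀ s ∈ Icc (0:ℝ) T, ψ s ∈ closedBall x (1/2) := by
  by_contra hcon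
  push_neg at hcon
  obtain ⟨s₀, hs₀, hs₀b⟩ := hcon
  set B : Set ℝ := {s | s ∈ Icc (0:ℝ) T ∧ ψ s ∉ closedBall x (1/2)} with hB
  have hBne : B.Nonempty := ⟨s₀, hs₀, hs₀b⟩
  have hBbdd : BddBelow B := ⟨0, fun b hb => hb.1.1⟩
  set σ := sInf B with hσ
  have hσ0 : 0 ≤ σ := le_csInf hBne fun b hb => hb.1.1
  have hσT : σ ≤ T := (csInf_le hBbdd hBne.choose_spec).trans_eq' rfl |>.trans hBne.choose_spec.1.2
  have hσIcc : σ ∈ Icc (0:ℝ) T := ⟨hσ0, hσT⟩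
  have hgood : ∀ τ, 0 ≤ τ → τ < σ → ψ τ ∈ closedBall x (1/2) := by
    intro τ hτ0 hτσ
    by_contra hτb
    exact absurd (csInf_le hBbdd ⟨⟨hτ0, hτσ.le.trans hσT⟩, hτb⟩) (not_le.mpr hτσ)
  -- mean value on [0, σ]
  have hmvt : ‖ψ σ - ψ 0‖ ≤ M * (σ - 0) := by
    refine norm_image_sub_le_of_norm_deriv_le_segment'
      (fun s hs => (hderiv s ⟨hs.1, hs.2.trans hσT⟩).hasDerivWithinAt) ?_ σ (right_mem_Icc.mpr hσ0)
    intro s hs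
    exact hbound s ⟨hs.1, hs.2.le.trans hσT⟩
      (closedBall_subset_closedBall (by norm_num) (hgood s hs.1 hs.2))
  have hψσ : dist (ψ σ) x < 1/2 := by
    have h1 : dist (ψ σ) (ψ 0) ≤ M * σ := by rw [dist_eq_norm]; simpa using hmvt
    have h2 : M * σ ≤ 1/5 := le_trans (mul_le_mul_of_nonneg_left hσT hM.le) hTM
    calc dist (ψ σ) x ≤ dist (ψ σ) (ψ 0) + dist (ψ 0) x := dist_triangle _ _ _
      _ ≤ 1/5 + 1/5 := add_le_add (h1.trans h2) (mem_closedBall.mp h0)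
      _ < 1/2 := by norm_num
  have hcont : ContinuousAt ψ σ := (hderiv σ hσIcc).continuousAt
  have hev : ∀ᶠ s in 𝓝 σ, ψ s ∈ ball x (1/2) :=
    hcont.preimage_mem_nhds (isOpen_ball.mem_nhds (mem_ball.mpr hψσ))
  rw [Metric.eventually_nhds_iff] at hev
  obtain ⟨δ, hδ, hδb⟩ := hev
  obtain ⟨s, hsB, hsδ⟩ := exists_lt_of_csInf_lt hBne (lt_add_of_pos_right σ hδ)
  have hσs : σ ≤ s := csInf_le hBbdd hsB
  have : dist s σ < δ := by rw [Real.dist_eq, abs_of_nonneg (by linarith)]; linarith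
  exact hsB.2 (ball_subset_closedBall (hδb this))

set_option maxHeartbeats 1600000 in
/-- Uniform second-order expansion of a flow near a point. -/
lemma flow_unif [ProperSpace E] {v : E → E} (hv : ContDiff ℝ 1 v) {Φ : ℝ → E → E}
    (hΦ0 : ∀ y, Φ 0 y = y) {r : ℝ} (hr : 0 < r)
    (hΦ : ∀ y, ∀ t : ℝ, |t| < r → HasDerivAt (fun s => Φ s y) (v (Φ t y)) t)
    (x : E) {c : ℝ} (hc : 0 < c) :
    ∃ δ > 0, ∀ y ∈ closedBall x δ, ∀ t ∈ Icc (0:ℝ) δ,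
      ‖Φ t y - y - t • v y - (t ^ 2 / 2) • fderiv ℝ v y (v y)‖ ≤ c * t ^ 2 := by
  have hvc : Continuous v := hv.continuous
  have hvd : Differentiable ℝ v := hv.differentiable one_ne_zero
  have hDc : Continuous (fderiv ℝ v) := hv.continuous_fderiv one_ne_zero
  have hK : IsCompact (closedBall x 1) := isCompact_closedBall x 1
  obtain ⟨M₀, hM₀⟩ := hK.exists_bound_of_continuousOn hvc.continuousOn
  obtain ⟨M₁, hM₁⟩ := hK.exists_bound_of_continuousOn hDc.continuousOn
  set M : ℝ := max M₀ 1 with hMdef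
  have hM : 0 < M := lt_of_lt_of_le one_pos (le_max_right _ _)
  have hM1 : (1:ℝ) ≤ M := le_max_right _ _
  have hMb : ∀ z ∈ closedBall x 1, ‖v z‖ ≤ M := fun z hz => (hM₀ z hz).trans (le_max_left _ _)
  set M' : ℝ := max M₁ 0 with hM'def
  have hM' : 0 ≤ M' := le_max_right _ _
  have hM'b : ∀ z ∈ closedBall x 1, ‖fderiv ℝ v z‖ ≤ M' := fun z hz =>
    (hM₁ z hz).trans (le_max_left _ _)
  -- uniform continuity of the derivative
  set c₁ : ℝ := c / M with hc₁def
  have hc₁ : 0 < c₁ := div_pos hc hM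
  obtain ⟨η₀, hη₀, hηb⟩ := Metric.uniformContinuousOn_iff.mp
    (hK.uniformContinuousOn_of_continuous hDc.continuousOn) c₁ hc₁
  set η : ℝ := min η₀ (1/4) with hηdef
  have hη : 0 < η := lt_min hη₀ (by norm_num)
  -- choice of δ
  set δ : ℝ := min (min (1/(5*M)) (r/2)) (min (η/(2*M)) (c/(M'^2*M+1))) with hδdef
  have hδ : 0 < δ := by
    refine lt_min (lt_min (by positivity) (by positivity)) (lt_min (by positivity) ?_)
    have : (0:ℝ) < M'^2*M+1 := by positivity
    positivity
  have hδ5M : δ ≤ 1/(5*M) := le_trans (min_le_left _ _) (min_le_left _ _)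
  have hδr : δ < r := lt_of_le_of_lt (le_trans (min_le_left _ _) (min_le_right _ _)) (by linarith)
  have hδη : δ ≤ η/(2*M) := le_trans (min_le_right _ _) (min_le_left _ _)
  have hδc : δ ≤ c/(M'^2*M+1) := le_trans (min_le_right _ _) (min_le_right _ _)
  have hδ1 : δ ≤ 1/5 := by
    have h5 : (5:ℝ) ≤ 5*M := by nlinarith
    have : 1/(5*M) ≤ 1/5 := one_div_le_one_div_of_le (by norm_num) h5
    linarith [hδ5M]
  refine ⟨δ, hδ, fun y hy t ht => ?_⟩
  set ψ : ℝ → E := fun s => Φ s y with hψdef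
  have hψ0 : ψ 0 = y := hΦ0 y
  have hψd : ∀ s ∈ Icc (0:ℝ) δ, HasDerivAt ψ (v (ψ s)) s := by
    intro s hs
    exact hΦ y s (by rw [abs_lt]; constructor <;> nlinarith [hs.1, hs.2])
  -- the trajectory stays inside the ball of radius 1/2
  have hstay : ∀ s ∈ Icc (0:ℝ) δ, ψ s ∈ closedBall x (1/2) := by
    refine stay' hM hψd (fun s hs hsb => hMb _ hsb) ?_ ?_
    · rw [hψ0]
      exact closedBall_subset_closedBall hδ1 hy
    · calc M * δ ≤ M * (1/(5*M)) := mul_le_mul_of_nonneg_left hδ5M hM.le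
        _ = 1/5 := by field_simp
  have hstay1 : ∀ s ∈ Icc (0:ℝ) δ, ψ s ∈ closedBall x 1 := fun s hs =>
    closedBall_subset_closedBall (by norm_num) (hstay s hs)
  have hyK : y ∈ closedBall x 1 := closedBall_subset_closedBall (by linarith) hy
  -- first-order bound : ‖ψ s - y‖ ≤ M * s
  have h1 : ∀ s ∈ Icc (0:ℝ) δ, ‖ψ s - y‖ ≤ M * s := by
    intro s hs
    have := norm_image_sub_le_of_norm_deriv_le_segment'
      (f := ψ) (f' := fun s => v (ψ s)) (C := M)
      (fun u hu => (hψd u ⟨hu.1, hu.2.trans hs.2⟩).hasDerivWithinAt)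
      (fun u hu => hMb _ (hstay1 u ⟨hu.1, hu.2.le.trans hs.2⟩)) s (right_mem_Icc.mpr hs.1)
    rwa [hψ0, sub_zero] at this
  -- second-order bound : ‖ψ s - y - s • v y‖ ≤ M' * M / 2 * s ^ 2
  have h2 : ∀ s ∈ Icc (0:ℝ) δ, ‖ψ s - y - s • v y‖ ≤ M' * M / 2 * s ^ 2 := by
    intro s hs
    have key := image_norm_le_of_norm_deriv_right_le_deriv_boundary
      (f := fun u => ψ u - y - u • v y) (f' := fun u => v (ψ u) - v y)
      (a := 0) (b := s) (B := fun u => M' * M / 2 * u ^ 2) (B' := fun u => M' * M * u)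
      ?_ ?_ ?_ ?_ ?_ (right_mem_Icc.mpr hs.1)
    · exact key
    · apply ContinuousOn.sub (ContinuousOn.sub ?_ continuousOn_const)
        ((continuousOn_id).smul continuousOn_const)
      exact fun u hu => ((hψd u ⟨hu.1, hu.2.trans hs.2⟩).continuousAt).continuousWithinAt
    · intro u hu
      have hd := (hψd u ⟨hu.1, hu.2.le.trans hs.2⟩).sub_const y
      have h2' : HasDerivAt (fun u : ℝ => u • v y) ((1:ℝ) • v y) u := (hasDerivAt_id u).smul_const _
      have := hd.sub h2'
      rw [one_smul] at this
      exact this.hasDerivWithinAt.mono (Set.subset_univ _) |>.mono_of_mem_nhdsWithin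
        (by exact Filter.univ_mem' fun _ => trivial)
    · simp [hψ0]
    · intro u
      have : HasDerivAt (fun u : ℝ => M' * M / 2 * u ^ 2) (M' * M / 2 * (2 * u ^ 1)) u :=
        (hasDerivAt_pow 2 u).const_mul _
      convert this using 1; ring
    · intro u hu
      have huI : u ∈ Icc (0:ℝ) δ := ⟨hu.1, hu.2.le.trans hs.2⟩
      have hlip : ‖v (ψ u) - v y‖ ≤ M' * ‖ψ u - y‖ := by
        have := (convex_closedBall x 1).norm_image_sub_le_of_norm_fderiv_le
          (fun z hz => hvd z) hM'b hyK (hstay1 u huI)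
        linarith [this]
      calc ‖v (ψ u) - v y‖ ≤ M' * ‖ψ u - y‖ := hlip
        _ ≤ M' * (M * u) := mul_le_mul_of_nonneg_left (h1 u huI) hM'
        _ = M' * M * u := by ring
  -- third-order refinement
  set A : E →L[ℝ] E := fderiv ℝ v y with hA
  set C₂ : ℝ := c₁ * M + M' ^ 2 * M * δ / 2 with hC₂
  have hfinal : ∀ s ∈ Icc (0:ℝ) δ, ‖ψ s - y - s • v y - (s^2/2) • A (v y)‖ ≤ C₂ * s^2 / 2 := by
    intro s hs
    have key := image_norm_le_of_norm_deriv_right_le_deriv_boundary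
      (f := fun u => ψ u - y - u • v y - (u^2/2) • A (v y))
      (f' := fun u => v (ψ u) - v y - u • A (v y))
      (a := 0) (b := s) (B := fun u => C₂ * u ^ 2 / 2) (B' := fun u => C₂ * u)
      ?_ ?_ ?_ ?_ ?_ (right_mem_Icc.mpr hs.1)
    · exact key
    · apply ContinuousOn.sub (ContinuousOn.sub (ContinuousOn.sub ?_ continuousOn_const)
        ((continuousOn_id).smul continuousOn_const))
        (((continuousOn_id.pow 2).div_const 2).smul continuousOn_const)
      exact fun u hu => ((hψd u ⟨hu.1, hu.2.trans hs.2⟩).continuousAt).continuousWithinAt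
    · intro u hu
      have hd := (hψd u ⟨hu.1, hu.2.le.trans hs.2⟩).sub_const y
      have ha : HasDerivAt (fun u : ℝ => u • v y) ((1:ℝ) • v y) u := (hasDerivAt_id u).smul_const _
      have hb : HasDerivAt (fun u : ℝ => (u^2/2) • A (v y)) ((2 * u ^ 1 / 2) • A (v y)) u :=
        ((hasDerivAt_pow 2 u).div_const 2).smul_const _
      have := (hd.sub ha).sub hb
      rw [one_smul] at this
      have he : (2 * u ^ 1 / 2 : ℝ) = u := by ring
      rw [he] at this
      exact this.hasDerivWithinAt.mono_of_mem_nhdsWithin (Filter.univ_mem' fun _ => trivial)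
    · simp [hψ0]
    · intro u
      have : HasDerivAt (fun u : ℝ => C₂ * u ^ 2 / 2) (C₂ * (2 * u ^ 1) / 2) u :=
        ((hasDerivAt_pow 2 u).const_mul C₂).div_const 2
      convert this using 1; ring
    · intro u hu
      have huI : u ∈ Icc (0:ℝ) δ := ⟨hu.1, hu.2.le.trans hs.2⟩
      have hψu : ‖ψ u - y‖ ≤ M * u := h1 u huI
      have hψuη : ‖ψ u - y‖ ≤ η/2 := by
        calc ‖ψ u - y‖ ≤ M * u := hψu
          _ ≤ M * δ := mul_le_mul_of_nonneg_left huI.2 hM.le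
          _ ≤ M * (η/(2*M)) := mul_le_mul_of_nonneg_left hδη hM.le
          _ = η/2 := by field_simp
      -- the Taylor estimate for v between y and ψ u
      have hT : ‖v (ψ u) - v y - A (ψ u - y)‖ ≤ c₁ * ‖ψ u - y‖ := by
        have hconv : Convex ℝ (closedBall y (η/2)) := convex_closedBall _ _
        have hsub : closedBall y (η/2) ⊆ closedBall x 1 := by
          apply closedBall_subset_closedBall'
          calc η/2 + dist y x ≤ (1/4)/2 + 1/5 := by
                have : η ≤ 1/4 := min_le_right _ _
                have := mem_closedBall.mp hy
                have := hδ1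
                linarith [mem_closedBall.mp hy, hδ1]
            _ ≤ 1 := by norm_num
        have hbnd : ∀ z ∈ closedBall y (η/2), ‖fderiv ℝ v z - A‖ ≤ c₁ := by
          intro z hz
          have hzK : z ∈ closedBall x 1 := hsub hz
          have : dist (fderiv ℝ v z) (fderiv ℝ v y) < c₁ := by
            apply hηb z hzK y hyK
            have hηη₀ : η ≤ η₀ := min_le_left _ _
            calc dist z y ≤ η/2 := mem_closedBall.mp hz
              _ < η₀ := by linarith
          rw [dist_eq_norm] at this
          exact this.le
        have := hconv.norm_image_sub_le_of_norm_fderiv_le' (fun z hz => hvd z) hbnd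
          (mem_closedBall_self (by positivity))
          (mem_closedBall.mpr (by rw [dist_eq_norm]; exact hψuη))
        exact this
      have hlin : ‖A (ψ u - y - u • v y)‖ ≤ M' * (M' * M / 2 * u ^ 2) := by
        calc ‖A (ψ u - y - u • v y)‖ ≤ ‖A‖ * ‖ψ u - y - u • v y‖ := A.le_opNorm _
          _ ≤ M' * (M' * M / 2 * u ^ 2) := by
              apply mul_le_mul (hM'b y hyK) (h2 u huI) (norm_nonneg _) hM'
      have hsplit : v (ψ u) - v y - u • A (v y)
          = (v (ψ u) - v y - A (ψ u - y)) + A (ψ u - y - u • v y) := by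
        simp only [map_sub, map_smul]; abel
      calc ‖v (ψ u) - v y - u • A (v y)‖
          ≤ ‖v (ψ u) - v y - A (ψ u - y)‖ + ‖A (ψ u - y - u • v y)‖ := by
            rw [hsplit]; exact norm_add_le _ _
        _ ≤ c₁ * ‖ψ u - y‖ + M' * (M' * M / 2 * u ^ 2) := add_le_add hT hlin
        _ ≤ c₁ * (M * u) + M' ^ 2 * M / 2 * (δ * u) := by
            refine add_le_add (mul_le_mul_of_nonneg_left (h1 u huI) hc₁.le) ?_
            have hu2 : u ^ 2 ≤ δ * u := by nlinarith [huI.1, huI.2]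
            have he : M' * (M' * M / 2 * u ^ 2) = M' ^ 2 * M / 2 * u ^ 2 := by ring
            rw [he]
            exact mul_le_mul_of_nonneg_left hu2 (by positivity)
        _ = C₂ * u := by rw [hC₂]; ring
  -- conclude
  have := hfinal t ht
  have hC₂c : C₂ / 2 ≤ c := by
    have h1' : c₁ * M = c := by rw [hc₁def]; field_simp
    have h2' : M' ^ 2 * M * δ / 2 ≤ c / 2 := by
      have := hδc
      have hpos : (0:ℝ) < M'^2*M+1 := by positivity
      have : (M'^2*M) * δ ≤ (M'^2*M+1) * (c/(M'^2*M+1)) := by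
        apply mul_le_mul (by linarith) hδc (by positivity) (by positivity)
      have heq : (M'^2*M+1) * (c/(M'^2*M+1)) = c := by field_simp
      nlinarith
    rw [hC₂]; linarith
  calc ‖Φ t y - y - t • v y - (t^2/2) • fderiv ℝ v y (v y)‖
      = ‖ψ t - y - t • v y - (t^2/2) • A (v y)‖ := rfl
    _ ≤ C₂ * t^2 / 2 := this
    _ ≤ c * t^2 := by nlinarith [sq_nonneg t]

lemma smulO {α : Type*} {l : Filter α} (g : α → ℝ) (a : E) :
    (fun t => g t • a) =O[l] g := by
  rw [isBigO_iff]
  exact ⟨‖a‖, Filter.Eventually.of_forall fun t => by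
    rw [norm_smul, mul_comm]⟩

lemma sq_isBigO : (fun ε : ℝ => ε ^ 2) =O[𝓝[>] (0:ℝ)] fun ε => ε := by
  rw [isBigO_iff]
  refine ⟨1, ?_⟩
  filter_upwards [Ioc_mem_nhdsGT_of_mem (left_mem_Ico.mpr one_pos)] with ε hε
  rw [Real.norm_eq_abs, Real.norm_eq_abs, abs_of_pos hε.1, abs_of_pos (pow_pos hε.1 2)]
  nlinarith [hε.1, hε.2]

lemma sq_isLittleO : (fun ε : ℝ => ε ^ 2) =o[𝓝[>] (0:ℝ)] fun ε => ε := by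
  rw [isLittleO_iff]
  intro c hc
  filter_upwards [Ioc_mem_nhdsGT_of_mem (left_mem_Ico.mpr hc)] with ε hε
  rw [Real.norm_eq_abs, Real.norm_eq_abs, abs_of_pos hε.1, abs_of_pos (pow_pos hε.1 2)]
  nlinarith [hε.1, hε.2]

lemma smul_tendsto_littleO {l : Filter ℝ} {f : ℝ → E} (hf : Tendsto f l (𝓝 0)) :
    (fun ε => ε ^ 2 • f ε) =o[l] fun ε => ε ^ 2 := by
  rw [isLittleO_iff]
  intro c hc
  filter_upwards [hf (Metric.closedBall_mem_nhds 0 hc)] with ε hε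
  rw [norm_smul]
  have : ‖f ε‖ ≤ c := by simpa [dist_eq_norm] using hε
  calc ‖ε ^ 2‖ * ‖f ε‖ ≤ ‖ε ^ 2‖ * c := by
        exact mul_le_mul_of_nonneg_left this (norm_nonneg _)
    _ = c * ‖ε ^ 2‖ := mul_comm _ _

/-- Second-order expansion of the composition of two flows. -/
lemma comp_expand [ProperSpace E] {u v : E → E} (hu : ContDiff ℝ 1 u) (hv : ContDiff ℝ 1 v)
    {Φu Φv : ℝ → E → E} (hu0 : ∀ y, Φu 0 y = y) (hv0 : ∀ y, Φv 0 y = y)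
    {ru rv : ℝ} (hru : 0 < ru) (hrv : 0 < rv)
    (hΦu : ∀ y, ∀ t : ℝ, |t| < ru → HasDerivAt (fun s => Φu s y) (u (Φu t y)) t)
    (hΦv : ∀ y, ∀ t : ℝ, |t| < rv → HasDerivAt (fun s => Φv s y) (v (Φv t y)) t)
    (x : E) :
    (fun ε : ℝ => Φv ε (Φu ε x) - x - ε • (u x + v x)
      - (ε ^ 2) • ((2⁻¹:ℝ) • fderiv ℝ u x (u x) + fderiv ℝ v x (u x)
        + (2⁻¹:ℝ) • fderiv ℝ v x (v x))) =o[𝓝[>] (0:ℝ)] fun ε => ε ^ 2 := by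
  set y : ℝ → E := fun ε => Φu ε x with hydef
  set Au : E →L[ℝ] E := fderiv ℝ u x with hAu
  set Av : E →L[ℝ] E := fderiv ℝ v x with hAv
  have hy0 : y 0 = x := hu0 x
  -- derivative of ε ↦ u (y ε) at 0
  have hd0 : HasDerivAt y (u x) 0 := by
    have := hΦu x 0 (by rwa [abs_zero])
    rwa [hu0 x] at this
  have hgd : HasDerivAt (fun t => u (y t)) (Au (u x)) 0 := by
    have hfd : HasFDerivAt u Au x := (hu.differentiable one_ne_zero x).hasFDerivAt
    exact hfd.comp_hasDerivAt_of_eq 0 hd0 hy0.symm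
  -- Taylor expansion of y
  have hy_taylor : (fun ε : ℝ => y ε - x - ε • u x - (ε ^ 2 / 2) • Au (u x))
      =o[𝓝[>] (0:ℝ)] fun ε => ε ^ 2 := by
    have := taylor2 hru (fun t ht => hΦu x t ht) hgd
    simpa only [hu0] using this
  have hy_cont : Tendsto y (𝓝[>] (0:ℝ)) (𝓝 x) := by
    have := hd0.continuousAt.tendsto
    rw [hy0] at this
    exact this.mono_left nhdsWithin_le_nhds
  -- big-O bounds on y
  have hyT2O : (fun ε : ℝ => y ε - x - ε • u x) =O[𝓝[>] (0:ℝ)] fun ε => ε ^ 2 := by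
    have h1 : (fun ε : ℝ => (ε ^ 2 / 2) • Au (u x)) =O[𝓝[>] (0:ℝ)] fun ε => ε ^ 2 := by
      refine (smulO _ _).trans ?_
      rw [isBigO_iff]
      exact ⟨1, Filter.Eventually.of_forall fun ε => by
        rw [Real.norm_eq_abs, Real.norm_eq_abs, one_mul, abs_div]
        calc |ε^2| / |2| = |ε^2| / 2 := by norm_num
          _ ≤ |ε^2| := by linarith [abs_nonneg (ε^2)]⟩
    have heq : (fun ε : ℝ => y ε - x - ε • u x)
        = fun ε => (y ε - x - ε • u x - (ε ^ 2 / 2) • Au (u x)) + (ε ^ 2 / 2) • Au (u x) := by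
      funext ε; abel
    rw [heq]
    exact hy_taylor.isBigO.add h1
  have hyO : (fun ε : ℝ => y ε - x) =O[𝓝[>] (0:ℝ)] fun ε => ε := by
    have heq : (fun ε : ℝ => y ε - x)
        = fun ε => (y ε - x - ε • u x) + ε • u x := by funext ε; abel
    rw [heq]
    exact (hyT2O.trans sq_isBigO).add (smulO _ _)
  -- P1 : uniform flow expansion along y ε
  have P1 : (fun ε : ℝ => Φv ε (y ε) - y ε - ε • v (y ε)
      - (ε ^ 2 / 2) • fderiv ℝ v (y ε) (v (y ε))) =o[𝓝[>] (0:ℝ)] fun ε => ε ^ 2 := by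
    rw [isLittleO_iff]
    intro c hc
    obtain ⟨δ, hδ, hδb⟩ := flow_unif hv hv0 hrv hΦv x hc
    filter_upwards [hy_cont (Metric.closedBall_mem_nhds x hδ),
      Ioc_mem_nhdsGT_of_mem (left_mem_Ico.mpr hδ)] with ε hε1 hε2
    have := hδb (y ε) hε1 ε ⟨hε2.1.le, hε2.2⟩
    calc ‖Φv ε (y ε) - y ε - ε • v (y ε) - (ε ^ 2 / 2) • fderiv ℝ v (y ε) (v (y ε))‖
        ≤ c * ε ^ 2 := this
      _ = c * ‖ε ^ 2‖ := by rw [Real.norm_eq_abs, abs_of_nonneg (sq_nonneg ε)]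
  -- P2 : first-order term correction
  have P2' : (fun ε : ℝ => v (y ε) - v x - ε • Av (u x)) =o[𝓝[>] (0:ℝ)] fun ε => ε := by
    have part1 : (fun ε : ℝ => v (y ε) - v x - Av (y ε - x)) =o[𝓝[>] (0:ℝ)] fun ε => y ε - x := by
      have hfd : HasFDerivAt v Av x := (hv.differentiable one_ne_zero x).hasFDerivAt
      exact hfd.isLittleO.comp_tendsto hy_cont
    have part2 : (fun ε : ℝ => Av (y ε - x - ε • u x)) =o[𝓝[>] (0:ℝ)] fun ε => ε := by
      exact (Av.isBigO_comp _ _).trans_isLittleO (hyT2O.trans_isLittleO sq_isLittleO)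
    have heq : (fun ε : ℝ => v (y ε) - v x - ε • Av (u x))
        = fun ε => (v (y ε) - v x - Av (y ε - x)) + Av (y ε - x - ε • u x) := by
      funext ε; simp only [map_sub, map_smul]; abel
    rw [heq]
    exact (part1.trans_isBigO hyO).add part2
  have P2 : (fun ε : ℝ => ε • (v (y ε) - v x - ε • Av (u x))) =o[𝓝[>] (0:ℝ)]
      fun ε => ε ^ 2 := by
    have := (isBigO_refl (fun ε : ℝ => ε) (𝓝[>] (0:ℝ))).smul_isLittleO P2'
    simpa [smul_eq_mul, sq] using this
  -- P3 : second-order coefficient continuity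
  have P3 : (fun ε : ℝ => ε ^ 2 • ((2⁻¹:ℝ) • (fderiv ℝ v (y ε) (v (y ε)) - Av (v x))))
      =o[𝓝[>] (0:ℝ)] fun ε => ε ^ 2 := by
    apply smul_tendsto_littleO
    have hcl : Continuous fun z => fderiv ℝ v z (v z) :=
      (hv.continuous_fderiv one_ne_zero).clm_apply hv.continuous
    have : Tendsto (fun ε => fderiv ℝ v (y ε) (v (y ε)) - Av (v x)) (𝓝[>] (0:ℝ)) (𝓝 0) := by
      have h1 := (hcl.tendsto x).comp hy_cont
      have h2 := h1.sub (tendsto_const_nhds (x := Av (v x)))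
      simpa [hAv] using h2
    simpa using this.const_smul (2⁻¹ : ℝ)
  -- assemble
  have heq : (fun ε : ℝ => Φv ε (Φu ε x) - x - ε • (u x + v x)
      - (ε ^ 2) • ((2⁻¹:ℝ) • Au (u x) + Av (u x) + (2⁻¹:ℝ) • Av (v x)))
      = fun ε => (Φv ε (y ε) - y ε - ε • v (y ε) - (ε ^ 2 / 2) • fderiv ℝ v (y ε) (v (y ε)))
        + (y ε - x - ε • u x - (ε ^ 2 / 2) • Au (u x))
        + ε • (v (y ε) - v x - ε • Av (u x))
        + ε ^ 2 • ((2⁻¹:ℝ) • (fderiv ℝ v (y ε) (v (y ε)) - Av (v x))) := by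
    funext ε
    module
  rw [heq]
  exact ((P1.add hy_taylor).add P2).add P3

end helpers

/-- The excess losses of the two opposite orderings of two training segments
cancel to second order:
`L(Φ₂(ε, Φ₁(ε, x))) + L(Φ₁(ε, Φ₂(ε, x))) − 2·L(Φ̄(2ε, x)) = o(ε²)` as `ε → 0⁺`,
where `Φ̄` is the flow of the averaged field `(u₁+u₂)/2`. -/
theorem ordering_excess_loss_cancellation {n : ℕ}
    (u₁ u₂ : EuclideanSpace ℝ (Fin n) → EuclideanSpace ℝ (Fin n))
    (hu₁ : ContDiff ℝ 1 u₁) (hu₂ : ContDiff ℝ 1 u₂)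
    (L : EuclideanSpace ℝ (Fin n) → ℝ) (hL : ContDiff ℝ 1 L)
    (Φ₁ Φ₂ Φavg : ℝ → EuclideanSpace ℝ (Fin n) → EuclideanSpace ℝ (Fin n))
    (hΦ₁0 : ∀ x, Φ₁ 0 x = x) (hΦ₂0 : ∀ x, Φ₂ 0 x = x)
    (hΦavg0 : ∀ x, Φavg 0 x = x)
    (hΦ₁ : ∃ r > (0 : ℝ), ∀ x, ∀ t : ℝ, |t| < r →
      HasDerivAt (fun s => Φ₁ s x) (u₁ (Φ₁ t x)) t)
    (hΦ₂ : ∃ r > (0 : ℝ), ∀ x, ∀ t : ℝ, |t| < r →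
      HasDerivAt (fun s => Φ₂ s x) (u₂ (Φ₂ t x)) t)
    (hΦavg : ∃ r > (0 : ℝ), ∀ x, ∀ t : ℝ, |t| < r →
      HasDerivAt (fun s => Φavg s x) ((2⁻¹ : ℝ) • (u₁ (Φavg t x) + u₂ (Φavg t x))) t)
    (x : EuclideanSpace ℝ (Fin n)) :
    (fun ε : ℝ =>
        L (Φ₂ ε (Φ₁ ε x)) + L (Φ₁ ε (Φ₂ ε x)) - 2 * L (Φavg (2 * ε) x))
      =o[𝓝[>] 0] fun ε : ℝ => ε ^ 2 := by
  obtain ⟨r₁, hr₁, hΦ₁'⟩ := hΦ₁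
  obtain ⟨r₂, hr₂, hΦ₂'⟩ := hΦ₂
  obtain ⟨rv, hrv, hΦv'⟩ := hΦavg
  -- expansions of the two compositions
  have Eα := comp_expand hu₁ hu₂ hΦ₁0 hΦ₂0 hr₁ hr₂ hΦ₁' hΦ₂' x
  have Eβ := comp_expand hu₂ hu₁ hΦ₂0 hΦ₁0 hr₂ hr₁ hΦ₂' hΦ₁' x
  -- expansion of the averaged flow
  have hvbc : ContDiff ℝ 1 (fun z => (2⁻¹:ℝ) • (u₁ z + u₂ z)) :=
    (hu₁.add hu₂).const_smul (2⁻¹:ℝ)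
  have hd0 : HasDerivAt (fun t => Φavg t x) ((2⁻¹:ℝ) • (u₁ x + u₂ x)) 0 := by
    have := hΦv' x 0 (by rwa [abs_zero])
    rwa [hΦavg0 x] at this
  have hgd : HasDerivAt (fun t => (2⁻¹:ℝ) • (u₁ (Φavg t x) + u₂ (Φavg t x)))
      (fderiv ℝ (fun z => (2⁻¹:ℝ) • (u₁ z + u₂ z)) x ((2⁻¹:ℝ) • (u₁ x + u₂ x))) 0 := by
    have hfd : HasFDerivAt (fun z => (2⁻¹:ℝ) • (u₁ z + u₂ z))
        (fderiv ℝ (fun z => (2⁻¹:ℝ) • (u₁ z + u₂ z)) x) x :=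
      (hvbc.differentiable one_ne_zero x).hasFDerivAt
    exact hfd.comp_hasDerivAt_of_eq 0 hd0 (hΦavg0 x).symm
  have ρ : (fun t : ℝ => Φavg t x - x - t • ((2⁻¹:ℝ) • (u₁ x + u₂ x))
      - (t ^ 2 / 2) • fderiv ℝ (fun z => (2⁻¹:ℝ) • (u₁ z + u₂ z)) x ((2⁻¹:ℝ) • (u₁ x + u₂ x)))
      =o[𝓝[>] (0:ℝ)] fun t => t ^ 2 := by
    have := taylor2 hrv (fun t ht => hΦv' x t ht) hgd
    simpa only [hΦavg0] using this
  have hcomp : Tendsto (fun ε : ℝ => 2 * ε) (𝓝[>] (0:ℝ)) (𝓝[>] (0:ℝ)) := by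
    rw [tendsto_nhdsWithin_iff]
    refine ⟨?_, eventually_mem_nhdsWithin.mono fun ε hε => Set.mem_Ioi.mpr (mul_pos two_pos hε)⟩
    have h2 : Tendsto (fun ε : ℝ => 2 * ε) (𝓝 0) (𝓝 (2 * 0)) :=
      (continuous_const.mul continuous_id).tendsto 0
    rw [mul_zero] at h2
    exact h2.mono_left nhdsWithin_le_nhds
  have hsq4 : ((fun t : ℝ => t ^ 2) ∘ fun ε : ℝ => 2 * ε) =O[𝓝[>] (0:ℝ)]
      fun ε : ℝ => ε ^ 2 := by
    rw [isBigO_iff]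
    exact ⟨4, Filter.Eventually.of_forall fun ε => by
      simp only [Function.comp_apply, Real.norm_eq_abs]
      rw [mul_pow, abs_mul, abs_pow]
      norm_num [sq_abs]⟩
  have Eγ0 := (ρ.comp_tendsto hcomp).trans_isBigO hsq4
  -- compute the derivative of the averaged field at x
  have hfvb : fderiv ℝ (fun z => (2⁻¹:ℝ) • (u₁ z + u₂ z)) x
      = (2⁻¹:ℝ) • (fderiv ℝ u₁ x + fderiv ℝ u₂ x) := by
    rw [fderiv_fun_const_smul (f := fun z => u₁ z + u₂ z) ((hu₁.differentiable one_ne_zero x).add (hu₂.differentiable one_ne_zero x))]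
    rw [fderiv_fun_add (hu₁.differentiable one_ne_zero x) (hu₂.differentiable one_ne_zero x)]
  have hqbar : fderiv ℝ (fun z => (2⁻¹:ℝ) • (u₁ z + u₂ z)) x ((2⁻¹:ℝ) • (u₁ x + u₂ x))
      = (4⁻¹:ℝ) • (fderiv ℝ u₁ x (u₁ x) + fderiv ℝ u₁ x (u₂ x)
        + fderiv ℝ u₂ x (u₁ x) + fderiv ℝ u₂ x (u₂ x)) := by
    rw [hfvb]
    simp only [ContinuousLinearMap.smul_apply, ContinuousLinearMap.add_apply, map_smul, map_add,
      smul_smul, smul_add]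
    norm_num
    module
  have Eγ : (fun ε : ℝ => Φavg (2 * ε) x - x - ε • (u₁ x + u₂ x)
      - (ε ^ 2) • ((2⁻¹:ℝ) • (fderiv ℝ u₁ x (u₁ x) + fderiv ℝ u₁ x (u₂ x)
        + fderiv ℝ u₂ x (u₁ x) + fderiv ℝ u₂ x (u₂ x)))) =o[𝓝[>] (0:ℝ)]
      fun ε => ε ^ 2 := by
    refine Eγ0.congr_left fun ε => ?_
    simp only [Function.comp_apply, hqbar]
    module
  -- abbreviations for the second-order coefficients
  obtain ⟨qα, hqα⟩ : ∃ q, ((2⁻¹:ℝ) • fderiv ℝ u₁ x (u₁ x) + fderiv ℝ u₂ x (u₁ x)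
      + (2⁻¹:ℝ) • fderiv ℝ u₂ x (u₂ x)) = q := ⟨_, rfl⟩
  obtain ⟨qβ, hqβ⟩ : ∃ q, ((2⁻¹:ℝ) • fderiv ℝ u₂ x (u₂ x) + fderiv ℝ u₁ x (u₂ x)
      + (2⁻¹:ℝ) • fderiv ℝ u₁ x (u₁ x)) = q := ⟨_, rfl⟩
  obtain ⟨qγ, hqγ⟩ : ∃ q, ((2⁻¹:ℝ) • (fderiv ℝ u₁ x (u₁ x) + fderiv ℝ u₁ x (u₂ x)
      + fderiv ℝ u₂ x (u₁ x) + fderiv ℝ u₂ x (u₂ x))) = q := ⟨_, rfl⟩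
  have hq0 : (qα - qγ) + (qβ - qγ) = 0 := by
    rw [← hqα, ← hqβ, ← hqγ]; module
  rw [hqα] at Eα
  rw [hqβ] at Eβ
  rw [hqγ] at Eγ
  -- differences of the three curves
  have Dαγ : (fun ε : ℝ => (Φ₂ ε (Φ₁ ε x) - Φavg (2 * ε) x) - ε ^ 2 • (qα - qγ))
      =o[𝓝[>] (0:ℝ)] fun ε => ε ^ 2 := by
    refine (Eα.sub Eγ).congr_left fun ε => ?_
    module
  have Dβγ : (fun ε : ℝ => (Φ₁ ε (Φ₂ ε x) - Φavg (2 * ε) x) - ε ^ 2 • (qβ - qγ))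
      =o[𝓝[>] (0:ℝ)] fun ε => ε ^ 2 := by
    refine (Eβ.sub Eγ).congr_left fun ε => ?_
    module
  have hαγO : (fun ε : ℝ => Φ₂ ε (Φ₁ ε x) - Φavg (2 * ε) x) =O[𝓝[>] (0:ℝ)]
      fun ε => ε ^ 2 := by
    have heq : (fun ε : ℝ => Φ₂ ε (Φ₁ ε x) - Φavg (2 * ε) x)
        = fun ε => ((Φ₂ ε (Φ₁ ε x) - Φavg (2 * ε) x) - ε ^ 2 • (qα - qγ))
          + ε ^ 2 • (qα - qγ) := by funext ε; abel
    rw [heq]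
    exact Dαγ.isBigO.add (smulO _ _)
  have hβγO : (fun ε : ℝ => Φ₁ ε (Φ₂ ε x) - Φavg (2 * ε) x) =O[𝓝[>] (0:ℝ)]
      fun ε => ε ^ 2 := by
    have heq : (fun ε : ℝ => Φ₁ ε (Φ₂ ε x) - Φavg (2 * ε) x)
        = fun ε => ((Φ₁ ε (Φ₂ ε x) - Φavg (2 * ε) x) - ε ^ 2 • (qβ - qγ))
          + ε ^ 2 • (qβ - qγ) := by funext ε; abel
    rw [heq]
    exact Dβγ.isBigO.add (smulO _ _)
  have Dsum : (fun ε : ℝ => (Φ₂ ε (Φ₁ ε x) - Φavg (2 * ε) x)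
      + (Φ₁ ε (Φ₂ ε x) - Φavg (2 * ε) x)) =o[𝓝[>] (0:ℝ)] fun ε => ε ^ 2 := by
    refine (Dαγ.add Dβγ).congr_left fun ε => ?_
    have h1 : ((Φ₂ ε (Φ₁ ε x) - Φavg (2 * ε) x) - ε ^ 2 • (qα - qγ))
        + ((Φ₁ ε (Φ₂ ε x) - Φavg (2 * ε) x) - ε ^ 2 • (qβ - qγ))
        = ((Φ₂ ε (Φ₁ ε x) - Φavg (2 * ε) x) + (Φ₁ ε (Φ₂ ε x) - Φavg (2 * ε) x))
          - ε ^ 2 • ((qα - qγ) + (qβ - qγ)) := by module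
    rw [h1, hq0, smul_zero, sub_zero]
  -- limits of the three curves
  have hγ_cont : Tendsto (fun ε : ℝ => Φavg (2 * ε) x) (𝓝[>] (0:ℝ)) (𝓝 x) := by
    have h0' : ContinuousAt (fun t => Φavg t x) 0 := (hΦv' x 0 (by rwa [abs_zero])).continuousAt
    have := h0'.tendsto
    rw [hΦavg0 x] at this
    have h2 : Tendsto (fun ε : ℝ => 2 * ε) (𝓝[>] (0:ℝ)) (𝓝 (0:ℝ)) :=
      hcomp.mono_right nhdsWithin_le_nhds
    exact this.comp h2
  have hsq0 : Tendsto (fun ε : ℝ => ε ^ 2) (𝓝[>] (0:ℝ)) (𝓝 (0:ℝ)) := by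
    have := ((continuous_pow 2).tendsto (0:ℝ)).mono_left (nhdsWithin_le_nhds (s := Ioi (0:ℝ)))
    simpa using this
  have hα_cont : Tendsto (fun ε : ℝ => Φ₂ ε (Φ₁ ε x)) (𝓝[>] (0:ℝ)) (𝓝 x) := by
    have h1 : Tendsto (fun ε : ℝ => Φ₂ ε (Φ₁ ε x) - Φavg (2 * ε) x) (𝓝[>] (0:ℝ)) (𝓝 0) :=
      hαγO.trans_tendsto hsq0
    have := hγ_cont.add h1
    rw [add_zero] at this
    refine this.congr fun ε => by abel
  have hβ_cont : Tendsto (fun ε : ℝ => Φ₁ ε (Φ₂ ε x)) (𝓝[>] (0:ℝ)) (𝓝 x) := by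
    have h1 : Tendsto (fun ε : ℝ => Φ₁ ε (Φ₂ ε x) - Φavg (2 * ε) x) (𝓝[>] (0:ℝ)) (𝓝 0) :=
      hβγO.trans_tendsto hsq0
    have := hγ_cont.add h1
    rw [add_zero] at this
    refine this.congr fun ε => by abel
  -- the loss function part
  have hLd : Differentiable ℝ L := hL.differentiable one_ne_zero
  have hDLc : Continuous (fderiv ℝ L) := hL.continuous_fderiv one_ne_zero
  -- S1 and S2 : Taylor estimate for L between the curves
  have S1 : (fun ε : ℝ => L (Φ₂ ε (Φ₁ ε x)) - L (Φavg (2 * ε) x)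
      - fderiv ℝ L (Φavg (2 * ε) x) (Φ₂ ε (Φ₁ ε x) - Φavg (2 * ε) x)) =o[𝓝[>] (0:ℝ)]
      fun ε => Φ₂ ε (Φ₁ ε x) - Φavg (2 * ε) x := by
    rw [isLittleO_iff]
    intro c hc
    obtain ⟨δ, hδ, hδb⟩ := Metric.continuousAt_iff.mp (hDLc.continuousAt (x := x)) (c/2)
      (half_pos hc)
    filter_upwards [hα_cont (Metric.ball_mem_nhds x hδ), hγ_cont (Metric.ball_mem_nhds x hδ)]
      with ε hε1 hε2
    have hbnd : ∀ z ∈ Metric.ball x δ, ‖fderiv ℝ L z - fderiv ℝ L (Φavg (2 * ε) x)‖ ≤ c := by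
      intro z hz
      have h1 := hδb (mem_ball.mp hz)
      have h2 := hδb (mem_ball.mp hε2)
      rw [dist_eq_norm] at h1 h2
      calc ‖fderiv ℝ L z - fderiv ℝ L (Φavg (2 * ε) x)‖
          ≤ ‖fderiv ℝ L z - fderiv ℝ L x‖ + ‖fderiv ℝ L x - fderiv ℝ L (Φavg (2 * ε) x)‖ :=
            norm_sub_le_norm_sub_add_norm_sub _ _ _
        _ ≤ c/2 + c/2 := add_le_add h1.le ((norm_sub_rev _ _).trans_lt h2).le
        _ = c := by ring
    exact (convex_ball x δ).norm_image_sub_le_of_norm_fderiv_le'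
      (fun z _ => hLd z) hbnd hε2 hε1
  have S2 : (fun ε : ℝ => L (Φ₁ ε (Φ₂ ε x)) - L (Φavg (2 * ε) x)
      - fderiv ℝ L (Φavg (2 * ε) x) (Φ₁ ε (Φ₂ ε x) - Φavg (2 * ε) x)) =o[𝓝[>] (0:ℝ)]
      fun ε => Φ₁ ε (Φ₂ ε x) - Φavg (2 * ε) x := by
    rw [isLittleO_iff]
    intro c hc
    obtain ⟨δ, hδ, hδb⟩ := Metric.continuousAt_iff.mp (hDLc.continuousAt (x := x)) (c/2)
      (half_pos hc)
    filter_upwards [hβ_cont (Metric.ball_mem_nhds x hδ), hγ_cont (Metric.ball_mem_nhds x hδ)]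
      with ε hε1 hε2
    have hbnd : ∀ z ∈ Metric.ball x δ, ‖fderiv ℝ L z - fderiv ℝ L (Φavg (2 * ε) x)‖ ≤ c := by
      intro z hz
      have h1 := hδb (mem_ball.mp hz)
      have h2 := hδb (mem_ball.mp hε2)
      rw [dist_eq_norm] at h1 h2
      calc ‖fderiv ℝ L z - fderiv ℝ L (Φavg (2 * ε) x)‖
          ≤ ‖fderiv ℝ L z - fderiv ℝ L x‖ + ‖fderiv ℝ L x - fderiv ℝ L (Φavg (2 * ε) x)‖ :=
            norm_sub_le_norm_sub_add_norm_sub _ _ _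
        _ ≤ c/2 + c/2 := add_le_add h1.le ((norm_sub_rev _ _).trans_lt h2).le
        _ = c := by ring
    exact (convex_ball x δ).norm_image_sub_le_of_norm_fderiv_le'
      (fun z _ => hLd z) hbnd hε2 hε1
  have S1' := S1.trans_isBigO hαγO
  have S2' := S2.trans_isBigO hβγO
  -- S3 : the linear term applied to the sum of differences
  have S3 : (fun ε : ℝ => fderiv ℝ L (Φavg (2 * ε) x)
      ((Φ₂ ε (Φ₁ ε x) - Φavg (2 * ε) x) + (Φ₁ ε (Φ₂ ε x) - Φavg (2 * ε) x)))
      =o[𝓝[>] (0:ℝ)] fun ε => ε ^ 2 := by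
    have hbig : (fun ε : ℝ => fderiv ℝ L (Φavg (2 * ε) x)
        ((Φ₂ ε (Φ₁ ε x) - Φavg (2 * ε) x) + (Φ₁ ε (Φ₂ ε x) - Φavg (2 * ε) x)))
        =O[𝓝[>] (0:ℝ)] fun ε =>
          (Φ₂ ε (Φ₁ ε x) - Φavg (2 * ε) x) + (Φ₁ ε (Φ₂ ε x) - Φavg (2 * ε) x) := by
      rw [isBigO_iff]
      refine ⟨‖fderiv ℝ L x‖ + 1, ?_⟩
      have htd : Tendsto (fun ε : ℝ => fderiv ℝ L (Φavg (2 * ε) x)) (𝓝[>] (0:ℝ))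
          (𝓝 (fderiv ℝ L x)) := (hDLc.tendsto x).comp hγ_cont
      have hev : ∀ᶠ ε in 𝓝[>] (0:ℝ), ‖fderiv ℝ L (Φavg (2 * ε) x)‖ ≤ ‖fderiv ℝ L x‖ + 1 := by
        filter_upwards [htd (Metric.closedBall_mem_nhds (fderiv ℝ L x) one_pos)] with ε hε
        have := mem_closedBall.mp hε
        rw [dist_eq_norm] at this
        calc ‖fderiv ℝ L (Φavg (2 * ε) x)‖
            ≤ ‖fderiv ℝ L (Φavg (2 * ε) x) - fderiv ℝ L x‖ + ‖fderiv ℝ L x‖ :=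
              by
                have := norm_add_le (fderiv ℝ L (Φavg (2 * ε) x) - fderiv ℝ L x) (fderiv ℝ L x)
                simpa using this
          _ ≤ 1 + ‖fderiv ℝ L x‖ := add_le_add this le_rfl
          _ = ‖fderiv ℝ L x‖ + 1 := by ring
      filter_upwards [hev] with ε hε
      calc ‖fderiv ℝ L (Φavg (2 * ε) x)
            ((Φ₂ ε (Φ₁ ε x) - Φavg (2 * ε) x) + (Φ₁ ε (Φ₂ ε x) - Φavg (2 * ε) x))‖
          ≤ ‖fderiv ℝ L (Φavg (2 * ε) x)‖
            * ‖(Φ₂ ε (Φ₁ ε x) - Φavg (2 * ε) x) + (Φ₁ ε (Φ₂ ε x) - Φavg (2 * ε) x)‖ :=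
            ContinuousLinearMap.le_opNorm _ _
        _ ≤ (‖fderiv ℝ L x‖ + 1)
            * ‖(Φ₂ ε (Φ₁ ε x) - Φavg (2 * ε) x) + (Φ₁ ε (Φ₂ ε x) - Φavg (2 * ε) x)‖ :=
            mul_le_mul_of_nonneg_right hε (norm_nonneg _)
    exact hbig.trans_isLittleO Dsum
  -- assemble everything
  have heqf : (fun ε : ℝ =>
      L (Φ₂ ε (Φ₁ ε x)) + L (Φ₁ ε (Φ₂ ε x)) - 2 * L (Φavg (2 * ε) x))
      = fun ε =>
        (L (Φ₂ ε (Φ₁ ε x)) - L (Φavg (2 * ε) x)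
          - fderiv ℝ L (Φavg (2 * ε) x) (Φ₂ ε (Φ₁ ε x) - Φavg (2 * ε) x))
        + (L (Φ₁ ε (Φ₂ ε x)) - L (Φavg (2 * ε) x)
          - fderiv ℝ L (Φavg (2 * ε) x) (Φ₁ ε (Φ₂ ε x) - Φavg (2 * ε) x))
        + fderiv ℝ L (Φavg (2 * ε) x)
          ((Φ₂ ε (Φ₁ ε x) - Φavg (2 * ε) x) + (Φ₁ ε (Φ₂ ε x) - Φavg (2 * ε) x)) := by
    funext ε
    simp only [map_add]
    ring
  rw [heqf]
  exact (S1'.add S2').add S3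
end

section
/- Let L, L₁, …, L_K : ℝⁿ → ℝ with each L_k three times continuously differentiable and L continuously differentiable. Fix weights w₁, …, w_K ≥ 0 with Σ_k w_k = 1, indices i ≠ j, and δ > 0. Define the vector fields u₁ = −Σ_k w_k ∇L_k − δ(∇L_i − ∇L_j), u₂ = −Σ_k w_k ∇L_k + δ(∇L_i − ∇L_j), and v = −Σ_k w_k ∇L_k, and let Φ₁, Φ₂, Φ̄ be flows of u₁, u₂, v respectively. Then for each fixed x, as ε → 0⁺, L(Φ₂(ε, Φ₁(ε, x))) − L(Φ̄(2ε, x)) = δ·ε²·⟨Hess(Σ_k w_k L_k)(x)·(∇L_i(x) − ∇L_j(x)) − Hess(L_i − L_j)(x)·(Σ_k w_k ∇L_k(x)), ∇L(x)⟩ + o(ε²). -/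
open Asymptotics Topology Set Metric Filter
open scoped RealInnerProductSpace

section Aux

variable {E : Type*} [NormedAddCommGroup E] [NormedSpace ℝ E]



lemma stays_aux (f : ℝ → E) (u : E → E) (x : E) (M c ρ : ℝ)
    (hM : 0 ≤ M) (hc : 0 < c) (hcρ : c * ρ ≤ 1)
    (hbd : ∀ z ∈ closedBall x 3, ‖u z‖ ≤ M)
    (hρ0 : 0 ≤ ρ) (hρ : M * ρ ≤ 1)
    (hf : ∀ t ∈ Icc (0:ℝ) ρ, HasDerivAt f (u (f t)) t)
    (hf0 : f 0 ∈ closedBall x 1) :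
    ∀ t ∈ Icc (0:ℝ) ρ, ‖f t - f 0‖ ≤ (M + c) * t := by
  set s : Set ℝ := {t | ‖f t - f 0‖ ≤ (M + c) * t} with hs
  have hcont : ContinuousOn (fun t => ‖f t - f 0‖ - (M + c) * t) (Icc 0 ρ) := by
    apply ContinuousOn.sub
    · exact ((continuousOn_of_forall_continuousAt
        (fun t ht => ((hf t ht).continuousAt : ContinuousAt f t))).sub
        continuousOn_const).norm
    · fun_prop
  have hclosed : IsClosed (s ∩ Icc 0 ρ) := by
    have := hcont.preimage_isClosed_of_isClosed isClosed_Icc (isClosed_Iic (a := (0:ℝ)))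
    have hset : s ∩ Icc 0 ρ = Icc 0 ρ ∩ (fun t => ‖f t - f 0‖ - (M + c) * t) ⁻¹' Iic 0 := by
      ext t; simp [hs, Set.mem_inter_iff, and_comm, sub_nonpos]
    rwa [hset]
  have key : Icc (0:ℝ) ρ ⊆ s := by
    apply hclosed.Icc_subset_of_forall_exists_gt
    · simp [hs]
    · rintro t ⟨hts, ht0, htρ⟩ T hT
      rw [Set.mem_Ioi] at hT
      have hts' : ‖f t - f 0‖ ≤ (M + c) * t := hts
      have htIcc : t ∈ Icc (0:ℝ) ρ := ⟨ht0, le_of_lt htρ⟩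
      have hftx : f t ∈ closedBall x 3 := by
        rw [mem_closedBall, dist_eq_norm]
        calc ‖f t - x‖ ≤ ‖f t - f 0‖ + ‖f 0 - x‖ := norm_sub_le_norm_sub_add_norm_sub _ _ _
        _ ≤ (M + c) * t + 1 := by
            have := mem_closedBall_iff_norm.mp hf0
            exact add_le_add hts this
        _ ≤ M * ρ + c * ρ + 1 := by
            have h1 : (M + c) * t ≤ (M + c) * ρ := by
              apply mul_le_mul_of_nonneg_left (le_of_lt htρ) (by positivity)
            nlinarith
        _ ≤ 3 := by nlinarith
      have hMft : ‖u (f t)‖ ≤ M := hbd _ hftx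
      have hder := hf t htIcc
      rw [hasDerivAt_iff_isLittleO] at hder
      have hev := hder.def hc
      rw [Metric.eventually_nhds_iff] at hev
      obtain ⟨δ', hδ', hball⟩ := hev
      refine ⟨min T (t + δ'/2), ⟨?_, lt_min (by linarith) (by linarith), min_le_left _ _⟩⟩
      set p := min T (t + δ'/2) with hp
      have hpt : t < p := lt_min hT (by linarith)
      have hpd : dist p t < δ' := by
        rw [Real.dist_eq, abs_of_pos (by linarith)]
        have : p ≤ t + δ'/2 := min_le_right _ _
        linarith
      have hest := hball hpd
      simp only [hs, Set.mem_setOf_eq]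
      have h1 : ‖f p - f t - (p - t) • u (f t)‖ ≤ c * ‖p - t‖ := hest
      have h2 : ‖f p - f 0‖ ≤ ‖f p - f t - (p - t) • u (f t)‖ + ‖(p - t) • u (f t)‖ + ‖f t - f 0‖ := by
        have := norm_add₃_le (a := f p - f t - (p - t) • u (f t)) (b := (p - t) • u (f t)) (c := f t - f 0)
        simpa using this
      have h3 : ‖(p - t) • u (f t)‖ ≤ (p - t) * M := by
        rw [norm_smul, Real.norm_eq_abs, abs_of_pos (by linarith)]
        exact mul_le_mul_of_nonneg_left hMft (by linarith)
      have h4 : ‖p - t‖ = p - t := by rw [Real.norm_eq_abs, abs_of_pos (by linarith)]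
      calc ‖f p - f 0‖ ≤ c * (p - t) + (p - t) * M + (M + c) * t := by
            rw [h4] at h1; linarith [hts']
      _ = (M + c) * p := by ring
  exact fun t ht => key ht

lemma stays (f : ℝ → E) (u : E → E) (x : E) (M ρ : ℝ)
    (hM : 0 ≤ M)
    (hbd : ∀ z ∈ closedBall x 3, ‖u z‖ ≤ M)
    (hρ0 : 0 ≤ ρ) (hρ : M * ρ ≤ 1)
    (hf : ∀ t ∈ Icc (0:ℝ) ρ, HasDerivAt f (u (f t)) t)
    (hf0 : f 0 ∈ closedBall x 1) :
    ∀ t ∈ Icc (0:ℝ) ρ, ‖f t - f 0‖ ≤ M * t := by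
  intro t ht
  apply le_of_forall_pos_le_add
  intro ε hε
  set c := min (ε / (ρ + 1)) (1 / (ρ + 1)) with hc
  have hρ1 : (0:ℝ) < ρ + 1 := by linarith
  have hc0 : 0 < c := lt_min (by positivity) (by positivity)
  have hcρ : c * ρ ≤ 1 := by
    calc c * ρ ≤ (1 / (ρ + 1)) * ρ := mul_le_mul_of_nonneg_right (min_le_right _ _) hρ0
    _ ≤ 1 := by rw [div_mul_eq_mul_div, one_mul, div_le_one hρ1]; linarith
  have := stays_aux f u x M c ρ hM hc0 hcρ hbd hρ0 hρ hf hf0 t ht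
  calc ‖f t - f 0‖ ≤ (M + c) * t := this
  _ = M * t + c * t := by ring
  _ ≤ M * t + (ε / (ρ + 1)) * ρ := by
      have h1 : c * t ≤ (ε / (ρ + 1)) * ρ := by
        apply mul_le_mul (min_le_left _ _) ht.2 ht.1 (by positivity)
      linarith
  _ ≤ M * t + ε := by
      have : (ε / (ρ + 1)) * ρ ≤ ε := by
        rw [div_mul_eq_mul_div, div_le_iff₀ hρ1]; nlinarith
      linarith

lemma taylor2_s7 (f : ℝ → E) (u : E → E) (hu : ContDiff ℝ 1 u) (ρ K : ℝ)
    (hK : 0 ≤ K)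
    (hf : ∀ t ∈ Icc (0:ℝ) ρ, HasDerivAt f (u (f t)) t)
    (hA : ∀ s ∈ Icc (0:ℝ) ρ,
      ‖fderiv ℝ u (f s) (u (f s)) - fderiv ℝ u (f 0) (u (f 0))‖ ≤ K) :
    ∀ t ∈ Icc (0:ℝ) ρ,
      ‖f t - f 0 - t • u (f 0) - (t^2/2) • fderiv ℝ u (f 0) (u (f 0))‖ ≤ K * t^2 := by
  intro t ht
  set c : E := fderiv ℝ u (f 0) (u (f 0)) with hc
  have hsub : Icc (0:ℝ) t ⊆ Icc 0 ρ := Icc_subset_Icc le_rfl ht.2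
  -- the derivative of s ↦ u (f s)
  have hh : ∀ s ∈ Icc (0:ℝ) t, HasDerivAt (fun s => u (f s))
      (fderiv ℝ u (f s) (u (f s))) s := fun s hs =>
    ((hu.differentiable one_ne_zero (f s)).hasFDerivAt).comp_hasDerivAt s (hf s (hsub hs))
  -- φ s = u (f s) - u (f 0) - s • c, bound ‖φ s‖ ≤ K s
  have hφder : ∀ s ∈ Icc (0:ℝ) t, HasDerivAt (fun s => u (f s) - u (f 0) - s • c)
      (fderiv ℝ u (f s) (u (f s)) - c) s := by
    intro s hs
    have h1 := (hh s hs).sub_const (u (f 0))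
    have h2 : HasDerivAt (fun s : ℝ => s • c) c s := by
      simpa using (hasDerivAt_id s).smul_const c
    exact h1.sub h2
  have hφbound : ∀ s ∈ Icc (0:ℝ) t, ‖u (f s) - u (f 0) - s • c‖ ≤ K * s := by
    intro s hs
    have := norm_image_sub_le_of_norm_deriv_le_segment'
      (f := fun s => u (f s) - u (f 0) - s • c)
      (f' := fun s => fderiv ℝ u (f s) (u (f s)) - c) (C := K)
      (fun s hs => (hφder s hs).hasDerivWithinAt)
      (fun s hs => hA s (hsub (Ico_subset_Icc_self hs))) s hs
    simpa using this
  -- g s = f s - f 0 - s • u (f 0) - (s²/2) • c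
  have hgder : ∀ s ∈ Icc (0:ℝ) t,
      HasDerivAt (fun s => f s - f 0 - s • u (f 0) - (s^2/2) • c)
        (u (f s) - u (f 0) - s • c) s := by
    intro s hs
    have h1 := (hf s (hsub hs)).sub_const (f 0)
    have h2 : HasDerivAt (fun s : ℝ => s • u (f 0)) (u (f 0)) s := by
      simpa using (hasDerivAt_id s).smul_const (u (f 0))
    have h3 : HasDerivAt (fun s : ℝ => (s^2/2) • c) (s • c) s := by
      have h4 : HasDerivAt (fun s : ℝ => s^2/2) s s := by
        have := (hasDerivAt_pow 2 s).div_const 2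
        refine this.congr_deriv ?_
        ring
      simpa using h4.smul_const c
    exact (h1.sub h2).sub h3
  have := norm_image_sub_le_of_norm_deriv_le_segment'
    (f := fun s => f s - f 0 - s • u (f 0) - (s^2/2) • c)
    (f' := fun s => u (f s) - u (f 0) - s • c) (C := K * t)
    (fun s hs => (hgder s hs).hasDerivWithinAt)
    (fun s hs => le_trans (hφbound s (Ico_subset_Icc_self hs))
      (mul_le_mul_of_nonneg_left (le_trans (le_of_lt hs.2) le_rfl) hK))
    t (right_mem_Icc.mpr ht.1)
  have h0 : (0:ℝ)^2/2 = 0 := by norm_num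
  simpa [h0, mul_assoc, pow_two] using this

lemma flow_expand [ProperSpace E] (u : E → E) (hu : ContDiff ℝ 1 u)
    (Φ : ℝ → E → E) (hΦ0 : ∀ y, Φ 0 y = y)
    (r : ℝ) (hr : 0 < r)
    (hΦ : ∀ y, ∀ t : ℝ, |t| < r → HasDerivAt (fun s => Φ s y) (u (Φ t y)) t)
    (x : E) :
    ∃ M : ℝ, 0 ≤ M ∧ ∀ η > (0:ℝ), ∃ ρ > (0:ℝ), ∀ y ∈ closedBall x 1, ∀ t ∈ Icc (0:ℝ) ρ,
      ‖Φ t y - y‖ ≤ M * t ∧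
      ‖Φ t y - y - t • u y - (t^2/2) • fderiv ℝ u y (u y)‖ ≤ η * t^2 := by
  obtain ⟨C, hC⟩ := (isCompact_closedBall x 3).exists_bound_of_continuousOn
    hu.continuous.continuousOn
  set M := max C 0 with hM
  have hM0 : 0 ≤ M := le_max_right _ _
  have hbd : ∀ z ∈ closedBall x 3, ‖u z‖ ≤ M := fun z hz =>
    le_trans (hC z hz) (le_max_left _ _)
  refine ⟨M, hM0, ?_⟩
  intro η hη
  -- uniform continuity of à on the compact ball
  set Atil : E → E := fun z => fderiv ℝ u z (u z) with hAtil
  have hAcont : Continuous Atil := (hu.continuous_fderiv one_ne_zero).clm_apply hu.continuous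
  obtain ⟨ζ, hζ0, hζ⟩ := (Metric.uniformContinuousOn_iff.mp
    ((isCompact_closedBall x 3).uniformContinuousOn_of_continuous hAcont.continuousOn)) η hη
  set ρ := min (r/2) (min (1/(M+1)) (ζ/(M+1))) with hρdef
  have hM1 : (0:ℝ) < M + 1 := by linarith
  have hρ0 : 0 < ρ := lt_min (by linarith) (lt_min (by positivity) (by positivity))
  have hρr : ρ < r := lt_of_le_of_lt (min_le_left _ _) (by linarith)
  have hρM : M * ρ ≤ 1 := by
    have h1 : ρ ≤ 1/(M+1) := le_trans (min_le_right _ _) (min_le_left _ _)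
    calc M * ρ ≤ M * (1/(M+1)) := mul_le_mul_of_nonneg_left h1 hM0
    _ ≤ 1 := by rw [mul_one_div, div_le_one hM1]; linarith
  have hρζ : M * ρ < ζ := by
    have h1 : ρ ≤ ζ/(M+1) := le_trans (min_le_right _ _) (min_le_right _ _)
    calc M * ρ ≤ M * (ζ/(M+1)) := mul_le_mul_of_nonneg_left h1 hM0
    _ < ζ := by
        rw [mul_div_assoc']
        rw [div_lt_iff₀ hM1]
        nlinarith
  refine ⟨ρ, hρ0, ?_⟩
  intro y hy t ht
  set f : ℝ → E := fun t => Φ t y with hfdef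
  have hf0 : f 0 = y := hΦ0 y
  have hf : ∀ s ∈ Icc (0:ℝ) ρ, HasDerivAt f (u (f s)) s := by
    intro s hs
    exact hΦ y s (by rw [abs_of_nonneg hs.1]; exact lt_of_le_of_lt hs.2 hρr)
  have hf0ball : f 0 ∈ closedBall x 1 := by rw [hf0]; exact hy
  have hstays := stays f u x M ρ hM0 hbd (le_of_lt hρ0) hρM hf hf0ball
  have hyball3 : ∀ s ∈ Icc (0:ℝ) ρ, f s ∈ closedBall x 3 := by
    intro s hs
    rw [mem_closedBall, dist_eq_norm]
    calc ‖f s - x‖ ≤ ‖f s - f 0‖ + ‖f 0 - x‖ := norm_sub_le_norm_sub_add_norm_sub _ _ _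
    _ ≤ M * s + 1 := add_le_add (hstays s hs) (by rw [hf0]; exact mem_closedBall_iff_norm.mp hy)
    _ ≤ 3 := by nlinarith [hs.2, hs.1, mul_le_mul_of_nonneg_left hs.2 hM0]
  have hA : ∀ s ∈ Icc (0:ℝ) ρ, ‖Atil (f s) - Atil (f 0)‖ ≤ η := by
    intro s hs
    have h1 : f s ∈ closedBall x 3 := hyball3 s hs
    have h2 : f 0 ∈ closedBall x 3 := hyball3 0 ⟨le_rfl, le_of_lt hρ0⟩
    have h3 : dist (f s) (f 0) < ζ := by
      rw [dist_eq_norm]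
      calc ‖f s - f 0‖ ≤ M * s := hstays s hs
      _ ≤ M * ρ := mul_le_mul_of_nonneg_left hs.2 hM0
      _ < ζ := hρζ
    have := hζ _ h1 _ h2 h3
    rw [dist_eq_norm] at this
    exact le_of_lt this
  have htay := taylor2_s7 f u hu ρ η (le_of_lt hη) hf hA t ht
  constructor
  · have := hstays t ht; rwa [hf0] at this
  · rw [hf0] at htay; exact htay

lemma position_expansion [ProperSpace E]
    (u₁ u₂ uv : E → E) (hu₁ : ContDiff ℝ 1 u₁) (hu₂ : ContDiff ℝ 1 u₂)
    (huv : ContDiff ℝ 1 uv) (x : E)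
    (hsum : u₁ x + u₂ x = (2:ℝ) • uv x)
    (Φ₁ Φ₂ Φv : ℝ → E → E)
    (hΦ₁0 : ∀ y, Φ₁ 0 y = y) (hΦ₂0 : ∀ y, Φ₂ 0 y = y) (hΦv0 : ∀ y, Φv 0 y = y)
    (r₁ : ℝ) (hr₁ : 0 < r₁)
    (hΦ₁d : ∀ y, ∀ t : ℝ, |t| < r₁ → HasDerivAt (fun s => Φ₁ s y) (u₁ (Φ₁ t y)) t)
    (r₂ : ℝ) (hr₂ : 0 < r₂)
    (hΦ₂d : ∀ y, ∀ t : ℝ, |t| < r₂ → HasDerivAt (fun s => Φ₂ s y) (u₂ (Φ₂ t y)) t)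
    (rv : ℝ) (hrv : 0 < rv)
    (hΦvd : ∀ y, ∀ t : ℝ, |t| < rv → HasDerivAt (fun s => Φv s y) (uv (Φv t y)) t) :
    ((fun ε : ℝ => Φ₂ ε (Φ₁ ε x) - Φv (2*ε) x
        - ε^2 • (fderiv ℝ u₂ x (u₁ x) + (1/2:ℝ) • fderiv ℝ u₁ x (u₁ x)
            + (1/2:ℝ) • fderiv ℝ u₂ x (u₂ x) - (2:ℝ) • fderiv ℝ uv x (uv x)))
      =o[𝓝[>] 0] fun ε : ℝ => ε^2)
    ∧ ((fun ε : ℝ => Φ₂ ε (Φ₁ ε x) - x) =O[𝓝[>] 0] fun ε : ℝ => ε)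
    ∧ ((fun ε : ℝ => Φv (2*ε) x - x) =O[𝓝[>] 0] fun ε : ℝ => ε) := by
  obtain ⟨M₁, hM₁0, hexp₁⟩ := flow_expand u₁ hu₁ Φ₁ hΦ₁0 r₁ hr₁ hΦ₁d x
  obtain ⟨M₂, hM₂0, hexp₂⟩ := flow_expand u₂ hu₂ Φ₂ hΦ₂0 r₂ hr₂ hΦ₂d x
  obtain ⟨Mv, hMv0, hexpv⟩ := flow_expand uv huv Φv hΦv0 rv hrv hΦvd x
  set l : Filter ℝ := 𝓝[>] 0 with hl
  set y : ℝ → E := fun ε => Φ₁ ε x with hy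
  have hxball : x ∈ closedBall x 1 := mem_closedBall_self (by norm_num)
  obtain ⟨ρ₁, hρ₁0, hB₁⟩ := hexp₁ 1 one_pos
  obtain ⟨ρ₂, hρ₂0, hB₂⟩ := hexp₂ 1 one_pos
  obtain ⟨ρv, hρv0, hBv⟩ := hexpv 1 one_pos
  -- first-order bound for y
  have hyB : ∀ᶠ ε in l, ‖y ε - x‖ ≤ M₁ * ε := by
    filter_upwards [Ioc_mem_nhdsGT_of_mem (⟨le_rfl, hρ₁0⟩ : (0:ℝ) ∈ Ico 0 ρ₁)] with ε hε
    exact (hB₁ x hxball ε ⟨le_of_lt hε.1, hε.2⟩).1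
  have hyO : (fun ε => y ε - x) =O[l] fun ε : ℝ => ε := by
    rw [isBigO_iff]
    refine ⟨M₁, ?_⟩
    filter_upwards [hyB, eventually_mem_nhdsWithin] with ε h1 h2
    rw [Real.norm_eq_abs, abs_of_pos h2]
    exact h1
  have hytendsto : Tendsto y l (𝓝 x) := by
    rw [← tendsto_sub_nhds_zero_iff]
    apply squeeze_zero_norm' hyB
    have : Tendsto (fun ε : ℝ => M₁ * ε) (𝓝 0) (𝓝 (M₁ * 0)) :=
      (continuous_const.mul continuous_id).tendsto 0
    simpa using this.mono_left nhdsWithin_le_nhds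
  -- y eventually in the unit ball
  have hyball : ∀ᶠ ε in l, y ε ∈ closedBall x 1 := by
    filter_upwards [hyB, Ioc_mem_nhdsGT_of_mem
      (⟨le_rfl, by positivity⟩ : (0:ℝ) ∈ Ico 0 (1/(M₁+1)))] with ε h1 h2
    rw [mem_closedBall, dist_eq_norm]
    calc ‖y ε - x‖ ≤ M₁ * ε := h1
    _ ≤ M₁ * (1/(M₁+1)) := mul_le_mul_of_nonneg_left h2.2 hM₁0
    _ ≤ 1 := by rw [mul_one_div, div_le_one (by linarith)]; linarith
  -- second order expansion of Φ₁ at x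
  have h1 : (fun ε : ℝ => y ε - x - ε • u₁ x - (ε^2/2) • fderiv ℝ u₁ x (u₁ x))
      =o[l] fun ε : ℝ => ε^2 := by
    rw [isLittleO_iff]
    intro c hc
    obtain ⟨ρ, hρ0, hB⟩ := hexp₁ c hc
    filter_upwards [Ioc_mem_nhdsGT_of_mem (⟨le_rfl, hρ0⟩ : (0:ℝ) ∈ Ico 0 ρ)] with ε hε
    have := (hB x hxball ε ⟨le_of_lt hε.1, hε.2⟩).2
    calc ‖y ε - x - ε • u₁ x - (ε^2/2) • fderiv ℝ u₁ x (u₁ x)‖ ≤ c * ε^2 := this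
    _ = c * ‖ε^2‖ := by rw [Real.norm_eq_abs, abs_of_nonneg (sq_nonneg ε)]
  -- second order expansion of Φ₂ along y ε
  have h2 : (fun ε : ℝ => Φ₂ ε (y ε) - y ε - ε • u₂ (y ε)
      - (ε^2/2) • fderiv ℝ u₂ (y ε) (u₂ (y ε))) =o[l] fun ε : ℝ => ε^2 := by
    rw [isLittleO_iff]
    intro c hc
    obtain ⟨ρ, hρ0, hB⟩ := hexp₂ c hc
    filter_upwards [Ioc_mem_nhdsGT_of_mem (⟨le_rfl, hρ0⟩ : (0:ℝ) ∈ Ico 0 ρ), hyball]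
      with ε hε hball
    have := (hB (y ε) hball ε ⟨le_of_lt hε.1, hε.2⟩).2
    calc ‖Φ₂ ε (y ε) - y ε - ε • u₂ (y ε) - (ε^2/2) • fderiv ℝ u₂ (y ε) (u₂ (y ε))‖
        ≤ c * ε^2 := this
    _ = c * ‖ε^2‖ := by rw [Real.norm_eq_abs, abs_of_nonneg (sq_nonneg ε)]
  -- second order expansion of Φv at x, at time 2ε
  have hQ : (fun ε : ℝ => Φv (2*ε) x - x - (2*ε) • uv x
      - ((2*ε)^2/2) • fderiv ℝ uv x (uv x)) =o[l] fun ε : ℝ => ε^2 := by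
    rw [isLittleO_iff]
    intro c hc
    obtain ⟨ρ, hρ0, hB⟩ := hexpv (c/4) (by positivity)
    filter_upwards [Ioc_mem_nhdsGT_of_mem (⟨le_rfl, by positivity⟩ : (0:ℝ) ∈ Ico 0 (ρ/2))]
      with ε hε
    have := (hB x hxball (2*ε) ⟨by linarith [hε.1], by linarith [hε.2]⟩).2
    calc ‖Φv (2*ε) x - x - (2*ε) • uv x - ((2*ε)^2/2) • fderiv ℝ uv x (uv x)‖
        ≤ (c/4) * (2*ε)^2 := this
    _ = c * ‖ε^2‖ := by rw [Real.norm_eq_abs, abs_of_nonneg (sq_nonneg ε)]; ring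
  -- big-O bounds for the endpoint positions
  have hQO : (fun ε : ℝ => Φv (2*ε) x - x) =O[l] fun ε : ℝ => ε := by
    rw [isBigO_iff]
    refine ⟨Mv * 2, ?_⟩
    filter_upwards [Ioc_mem_nhdsGT_of_mem (⟨le_rfl, by positivity⟩ : (0:ℝ) ∈ Ico 0 (ρv/2))]
      with ε hε
    have := (hBv x hxball (2*ε) ⟨by linarith [hε.1], by linarith [hε.2]⟩).1
    rw [Real.norm_eq_abs, abs_of_pos hε.1]
    calc ‖Φv (2*ε) x - x‖ ≤ Mv * (2*ε) := this
    _ = Mv * 2 * ε := by ring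
  have hPO : (fun ε : ℝ => Φ₂ ε (y ε) - x) =O[l] fun ε : ℝ => ε := by
    rw [isBigO_iff]
    refine ⟨M₂ + M₁, ?_⟩
    filter_upwards [Ioc_mem_nhdsGT_of_mem (⟨le_rfl, hρ₂0⟩ : (0:ℝ) ∈ Ico 0 ρ₂), hyball, hyB]
      with ε hε hball hyb
    have h := (hB₂ (y ε) hball ε ⟨le_of_lt hε.1, hε.2⟩).1
    rw [Real.norm_eq_abs, abs_of_pos hε.1]
    calc ‖Φ₂ ε (y ε) - x‖ ≤ ‖Φ₂ ε (y ε) - y ε‖ + ‖y ε - x‖ :=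
          norm_sub_le_norm_sub_add_norm_sub _ _ _
    _ ≤ M₂ * ε + M₁ * ε := add_le_add h hyb
    _ = (M₂ + M₁) * ε := by ring
  -- expansion of u₂ along y ε
  have hu2y : (fun ε : ℝ => u₂ (y ε) - u₂ x - fderiv ℝ u₂ x (y ε - x))
      =o[l] fun ε : ℝ => ε := by
    have hd := ((hu₂.differentiable one_ne_zero) x).hasFDerivAt
    have hlo := hd.isLittleO
    have := hlo.comp_tendsto hytendsto
    exact this.trans_isBigO hyO
  have h3' : (fun ε : ℝ => ε • (u₂ (y ε) - u₂ x - fderiv ℝ u₂ x (y ε - x)))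
      =o[l] fun ε : ℝ => ε^2 := by
    have := (isBigO_refl (fun ε : ℝ => ε) l).smul_isLittleO hu2y
    refine this.congr (fun ε => rfl) (fun ε => ?_)
    simp [smul_eq_mul, sq]
  have h4' : (fun ε : ℝ => ε • fderiv ℝ u₂ x (y ε - x - ε • u₁ x))
      =o[l] fun ε : ℝ => ε^2 := by
    have hinner : (fun ε : ℝ => y ε - x - ε • u₁ x) =O[l] fun ε : ℝ => ε^2 := by
      have ha : (fun ε : ℝ => y ε - x - ε • u₁ x - (ε^2/2) • fderiv ℝ u₁ x (u₁ x))
          =O[l] fun ε : ℝ => ε^2 := h1.isBigO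
      have hb : (fun ε : ℝ => (ε^2/2) • fderiv ℝ u₁ x (u₁ x)) =O[l] fun ε : ℝ => ε^2 := by
        rw [isBigO_iff]
        refine ⟨‖fderiv ℝ u₁ x (u₁ x)‖ / 2, Eventually.of_forall fun ε => ?_⟩
        rw [norm_smul, Real.norm_eq_abs (ε^2/2), abs_of_nonneg (by positivity),
          Real.norm_eq_abs (ε^2), abs_of_nonneg (sq_nonneg ε)]
        exact le_of_eq (by ring)
      have := ha.add hb
      refine this.congr_left fun ε => by abel
    have happ : (fun ε : ℝ => fderiv ℝ u₂ x (y ε - x - ε • u₁ x)) =O[l] fun ε : ℝ => ε^2 :=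
      ((fderiv ℝ u₂ x).isBigO_comp _ _).trans hinner
    have := (isBigO_refl (fun ε : ℝ => ε) l).smul happ
    have hcube : (fun ε : ℝ => ε • ε^2) =o[l] fun ε : ℝ => ε^2 := by
      have := (isLittleO_pow_pow (by norm_num : 2 < 3) (𝕜 := ℝ)).mono
        (nhdsWithin_le_nhds : 𝓝[>] (0:ℝ) ≤ 𝓝 0)
      refine this.congr (fun ε => by simp [smul_eq_mul]; ring) (fun ε => rfl)
    exact this.trans_isLittleO hcube
  have h5' : (fun ε : ℝ => (ε^2/2) • (fderiv ℝ u₂ (y ε) (u₂ (y ε)) - fderiv ℝ u₂ x (u₂ x)))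
      =o[l] fun ε : ℝ => ε^2 := by
    rw [isLittleO_iff]
    intro c hc
    have hAcont : Continuous fun z => fderiv ℝ u₂ z (u₂ z) :=
      (hu₂.continuous_fderiv one_ne_zero).clm_apply hu₂.continuous
    have htd : Tendsto (fun ε => fderiv ℝ u₂ (y ε) (u₂ (y ε))) l
        (𝓝 (fderiv ℝ u₂ x (u₂ x))) := (hAcont.tendsto x).comp hytendsto
    have hev : ∀ᶠ ε in l, ‖fderiv ℝ u₂ (y ε) (u₂ (y ε)) - fderiv ℝ u₂ x (u₂ x)‖ ≤ c := by
      have := htd (Metric.closedBall_mem_nhds _ hc)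
      filter_upwards [this] with ε hε
      rw [← dist_eq_norm]
      exact hε
    filter_upwards [hev] with ε hε
    rw [norm_smul, Real.norm_eq_abs (ε^2/2), abs_of_nonneg (by positivity),
      Real.norm_eq_abs (ε^2), abs_of_nonneg (sq_nonneg ε)]
    nlinarith [sq_nonneg ε, norm_nonneg (fderiv ℝ u₂ (y ε) (u₂ (y ε)) - fderiv ℝ u₂ x (u₂ x))]
  -- assemble
  refine ⟨?_, hPO, hQO⟩
  have hassem := ((((h2.add h1).add h3').add h4').add h5').sub hQ
  refine hassem.congr' (Eventually.of_forall fun ε => ?_) (Eventually.of_forall fun ε => rfl)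
  have hu2x : u₂ x = (2:ℝ) • uv x - u₁ x := by rw [← hsum]; abel
  simp only [hu2x, map_sub, map_smul, map_add]
  module

end Aux

set_option maxHeartbeats 1000000 in
/-- Excess loss from perturbing a constant weight schedule: training first with
the weight of domain `i` increased by `δ` (and that of `j` decreased by `δ`)
for time `ε`, then with the opposite perturbation for time `ε`, compared to the
unperturbed schedule for time `2ε`, changes the loss `L` by
`δ·ε²·P(L_i − L_j, Σ_k w_k L_k; L)(x) + o(ε²)` as `ε → 0⁺`. -/
theorem weight_schedule_perturbation_excess_loss {n K : ℕ}
    (L : EuclideanSpace ℝ (Fin n) → ℝ)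
    (Lk : Fin K → EuclideanSpace ℝ (Fin n) → ℝ)
    (hL : ContDiff ℝ 1 L) (hLk : ∀ k, ContDiff ℝ 3 (Lk k))
    (w : Fin K → ℝ) (hw : ∀ k, 0 ≤ w k) (hw1 : ∑ k, w k = 1)
    (i j : Fin K) (hij : i ≠ j) (δ : ℝ) (hδ : 0 < δ)
    (Φ₁ Φ₂ Φbar : ℝ → EuclideanSpace ℝ (Fin n) → EuclideanSpace ℝ (Fin n))
    (hΦ₁0 : ∀ x, Φ₁ 0 x = x) (hΦ₂0 : ∀ x, Φ₂ 0 x = x)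
    (hΦbar0 : ∀ x, Φbar 0 x = x)
    (hΦ₁ : ∃ r > (0 : ℝ), ∀ x, ∀ t : ℝ, |t| < r →
      HasDerivAt (fun s => Φ₁ s x)
        (-(∑ k, w k • gradient (Lk k) (Φ₁ t x))
          - δ • (gradient (Lk i) (Φ₁ t x) - gradient (Lk j) (Φ₁ t x))) t)
    (hΦ₂ : ∃ r > (0 : ℝ), ∀ x, ∀ t : ℝ, |t| < r →
      HasDerivAt (fun s => Φ₂ s x)
        (-(∑ k, w k • gradient (Lk k) (Φ₂ t x))
          + δ • (gradient (Lk i) (Φ₂ t x) - gradient (Lk j) (Φ₂ t x))) t)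
    (hΦbar : ∃ r > (0 : ℝ), ∀ x, ∀ t : ℝ, |t| < r →
      HasDerivAt (fun s => Φbar s x)
        (-(∑ k, w k • gradient (Lk k) (Φbar t x))) t)
    (x : EuclideanSpace ℝ (Fin n)) :
    (fun ε : ℝ =>
        L (Φ₂ ε (Φ₁ ε x)) - L (Φbar (2 * ε) x)
          - δ * ε ^ 2 *
            ⟪fderiv ℝ (gradient (fun y => ∑ k, w k * Lk k y)) x
                (gradient (Lk i) x - gradient (Lk j) x)
              - fderiv ℝ (gradient (fun y => Lk i y - Lk j y)) x
                (∑ k, w k • gradient (Lk k) x),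
              gradient L x⟫)
      =o[𝓝[>] 0] fun ε : ℝ => ε ^ 2 := by
  obtain ⟨r₁, hr₁, hΦ₁d⟩ := hΦ₁
  obtain ⟨r₂, hr₂, hΦ₂d⟩ := hΦ₂
  obtain ⟨rv, hrv, hΦvd⟩ := hΦbar
  -- smoothness of gradients
  have hgradc : ∀ (f : EuclideanSpace ℝ (Fin n) → ℝ), ContDiff ℝ 3 f → ContDiff ℝ 2 (gradient f) := by
    intro f hf
    have h1 : ContDiff ℝ 2 (fderiv ℝ f) := hf.fderiv_right (by norm_num)
    exact (InnerProductSpace.toDual ℝ (EuclideanSpace ℝ (Fin n))).symm.contDiff.comp h1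
  have hGk : ∀ k, ContDiff ℝ 2 (gradient (Lk k)) := fun k => hgradc _ (hLk k)
  -- the three vector fields
  set u₁ : EuclideanSpace ℝ (Fin n) → EuclideanSpace ℝ (Fin n) := fun z => -(∑ k, w k • gradient (Lk k) z)
      - δ • (gradient (Lk i) z - gradient (Lk j) z) with hu₁def
  set u₂ : EuclideanSpace ℝ (Fin n) → EuclideanSpace ℝ (Fin n) := fun z => -(∑ k, w k • gradient (Lk k) z)
      + δ • (gradient (Lk i) z - gradient (Lk j) z) with hu₂def
  set uv : EuclideanSpace ℝ (Fin n) → EuclideanSpace ℝ (Fin n) := fun z => -(∑ k, w k • gradient (Lk k) z) with huvdef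
  have hgWc : ContDiff ℝ 2 (fun z : EuclideanSpace ℝ (Fin n) => ∑ k, w k • gradient (Lk k) z) :=
    ContDiff.sum fun k _ => (hGk k).const_smul (w k)
  have hgDc : ContDiff ℝ 2 (fun z : EuclideanSpace ℝ (Fin n) => gradient (Lk i) z - gradient (Lk j) z) :=
    (hGk i).sub (hGk j)
  have hu₁ : ContDiff ℝ 1 u₁ :=
    ((hgWc.neg).sub (hgDc.const_smul δ)).of_le (by norm_num)
  have hu₂ : ContDiff ℝ 1 u₂ :=
    ((hgWc.neg).add (hgDc.const_smul δ)).of_le (by norm_num)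
  have huv : ContDiff ℝ 1 uv := (hgWc.neg).of_le (by norm_num)
  have hsum : u₁ x + u₂ x = (2:ℝ) • uv x := by
    simp only [hu₁def, hu₂def, huvdef]
    module
  obtain ⟨key1, hPO, hQO⟩ := position_expansion u₁ u₂ uv hu₁ hu₂ huv x hsum
    Φ₁ Φ₂ Φbar hΦ₁0 hΦ₂0 hΦbar0 r₁ hr₁ hΦ₁d r₂ hr₂ hΦ₂d rv hrv hΦvd
  set l : Filter ℝ := 𝓝[>] (0:ℝ) with hldef
  -- gradient of the combined functions
  have hWfun : gradient (fun y => ∑ k, w k * Lk k y)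
      = fun z : EuclideanSpace ℝ (Fin n) => ∑ k, w k • gradient (Lk k) z := by
    funext z
    have hf : HasFDerivAt (fun y => ∑ k, w k * Lk k y)
        (∑ k, w k • fderiv ℝ (Lk k) z) z :=
      HasFDerivAt.fun_sum fun k _ =>
        ((((hLk k).differentiable (by norm_num)) z).hasFDerivAt).const_mul (w k)
    calc gradient (fun y => ∑ k, w k * Lk k y) z
        = (InnerProductSpace.toDual ℝ (EuclideanSpace ℝ (Fin n))).symm
            (fderiv ℝ (fun y => ∑ k, w k * Lk k y) z) := rfl
      _ = (InnerProductSpace.toDual ℝ (EuclideanSpace ℝ (Fin n))).symm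
            (∑ k, w k • fderiv ℝ (Lk k) z) := by rw [hf.fderiv]
      _ = ∑ k, w k • gradient (Lk k) z := by
          rw [map_sum]
          exact Finset.sum_congr rfl fun k _ => by rw [map_smul]; rfl
  have hDfun : gradient (fun y => Lk i y - Lk j y)
      = fun z : EuclideanSpace ℝ (Fin n) => gradient (Lk i) z - gradient (Lk j) z := by
    funext z
    have hf : HasFDerivAt (fun y => Lk i y - Lk j y)
        (fderiv ℝ (Lk i) z - fderiv ℝ (Lk j) z) z :=
      ((((hLk i).differentiable (by norm_num)) z).hasFDerivAt).sub
        ((((hLk j).differentiable (by norm_num)) z).hasFDerivAt)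
    calc gradient (fun y => Lk i y - Lk j y) z
        = (InnerProductSpace.toDual ℝ (EuclideanSpace ℝ (Fin n))).symm
            (fderiv ℝ (fun y => Lk i y - Lk j y) z) := rfl
      _ = (InnerProductSpace.toDual ℝ (EuclideanSpace ℝ (Fin n))).symm
            (fderiv ℝ (Lk i) z - fderiv ℝ (Lk j) z) := by rw [hf.fderiv]
      _ = gradient (Lk i) z - gradient (Lk j) z := by rw [map_sub]; rfl
  -- fderiv decompositions at x
  have hDgW : DifferentiableAt ℝ
      (fun z : EuclideanSpace ℝ (Fin n) => ∑ k, w k • gradient (Lk k) z) x :=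
    (hgWc.differentiable (by norm_num)) x
  have hDgD : DifferentiableAt ℝ
      (fun z : EuclideanSpace ℝ (Fin n) => gradient (Lk i) z - gradient (Lk j) z) x :=
    (hgDc.differentiable (by norm_num)) x
  have hA1 : fderiv ℝ u₁ x
      = -(fderiv ℝ (fun z : EuclideanSpace ℝ (Fin n) => ∑ k, w k • gradient (Lk k) z) x)
        - δ • fderiv ℝ (fun z : EuclideanSpace ℝ (Fin n) =>
            gradient (Lk i) z - gradient (Lk j) z) x := by
    rw [hu₁def]
    exact ((hDgW.hasFDerivAt.neg).sub (hDgD.hasFDerivAt.const_smul δ)).fderiv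
  have hA2 : fderiv ℝ u₂ x
      = -(fderiv ℝ (fun z : EuclideanSpace ℝ (Fin n) => ∑ k, w k • gradient (Lk k) z) x)
        + δ • fderiv ℝ (fun z : EuclideanSpace ℝ (Fin n) =>
            gradient (Lk i) z - gradient (Lk j) z) x := by
    rw [hu₂def]
    exact ((hDgW.hasFDerivAt.neg).add (hDgD.hasFDerivAt.const_smul δ)).fderiv
  have hAv : fderiv ℝ uv x
      = -(fderiv ℝ (fun z : EuclideanSpace ℝ (Fin n) => ∑ k, w k • gradient (Lk k) z) x) := by
    rw [huvdef]
    exact (hDgW.hasFDerivAt.neg).fderiv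
  -- the target vector
  set Hvec : EuclideanSpace ℝ (Fin n) :=
    fderiv ℝ (gradient (fun y => ∑ k, w k * Lk k y)) x
        (gradient (Lk i) x - gradient (Lk j) x)
      - fderiv ℝ (gradient (fun y => Lk i y - Lk j y)) x
        (∑ k, w k • gradient (Lk k) x) with hHdef
  have key2 : (fun ε : ℝ => Φ₂ ε (Φ₁ ε x) - Φbar (2*ε) x - ε^2 • (δ • Hvec))
      =o[l] fun ε : ℝ => ε^2 := by
    refine key1.congr (fun ε => ?_) (fun ε => rfl)
    congr 2
    rw [hA1, hA2, hAv, hHdef, hWfun, hDfun]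
    simp only [hu₁def, hu₂def, huvdef, ContinuousLinearMap.sub_apply,
      ContinuousLinearMap.add_apply, ContinuousLinearMap.neg_apply,
      ContinuousLinearMap.smul_apply, map_sub, map_add, map_neg, map_smul]
    module
  -- continuity of the gradient of L
  have hGLc : Continuous (gradient L) := by
    have : Continuous fun z : EuclideanSpace ℝ (Fin n) =>
        (InnerProductSpace.toDual ℝ (EuclideanSpace ℝ (Fin n))).symm (fderiv ℝ L z) :=
      (InnerProductSpace.toDual ℝ (EuclideanSpace ℝ (Fin n))).symm.continuous.comp
        (hL.continuous_fderiv one_ne_zero)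
    exact this
  have hfd : ∀ (z dv : EuclideanSpace ℝ (Fin n)), fderiv ℝ L z dv = ⟪gradient L z, dv⟫ := by
    intro z dv
    rw [show gradient L z
        = (InnerProductSpace.toDual ℝ (EuclideanSpace ℝ (Fin n))).symm (fderiv ℝ L z) from rfl,
      ← InnerProductSpace.toDual_apply_apply, LinearIsometryEquiv.apply_symm_apply]
  -- limits of the endpoints
  have h0 : Tendsto (fun ε : ℝ => ε) l (𝓝 0) := tendsto_id.mono_left nhdsWithin_le_nhds
  have hPt : Tendsto (fun ε : ℝ => Φ₂ ε (Φ₁ ε x)) l (𝓝 x) := by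
    have := hPO.trans_tendsto h0
    rwa [tendsto_sub_nhds_zero_iff] at this
  have hQt : Tendsto (fun ε : ℝ => Φbar (2*ε) x) l (𝓝 x) := by
    have := hQO.trans_tendsto h0
    rwa [tendsto_sub_nhds_zero_iff] at this
  -- the difference of endpoints is O(ε²)
  have hDO : (fun ε : ℝ => Φ₂ ε (Φ₁ ε x) - Φbar (2*ε) x) =O[l] fun ε : ℝ => ε^2 := by
    have hb : (fun ε : ℝ => ε^2 • (δ • Hvec)) =O[l] fun ε : ℝ => ε^2 := by
      apply IsBigO.of_bound (‖δ • Hvec‖)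
      filter_upwards with ε
      rw [norm_smul, mul_comm]
    exact (key2.isBigO.add hb).congr_left fun ε => by abel
  obtain ⟨Cd', hCd'⟩ := hDO.bound
  set Cd : ℝ := max Cd' 0 with hCddef
  have hCd0 : 0 ≤ Cd := le_max_right _ _
  have hCd : ∀ᶠ ε in l, ‖Φ₂ ε (Φ₁ ε x) - Φbar (2*ε) x‖ ≤ Cd * ε^2 := by
    filter_upwards [hCd'] with ε hε
    calc ‖Φ₂ ε (Φ₁ ε x) - Φbar (2*ε) x‖ ≤ Cd' * ‖ε^2‖ := hε
    _ ≤ Cd * ‖ε^2‖ := mul_le_mul_of_nonneg_right (le_max_left _ _) (norm_nonneg _)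
    _ = Cd * ε^2 := by rw [Real.norm_eq_abs, abs_of_nonneg (sq_nonneg ε)]
  -- Term A : mean value estimate
  have hTermA : (fun ε : ℝ => L (Φ₂ ε (Φ₁ ε x)) - L (Φbar (2*ε) x)
      - ⟪gradient L x, Φ₂ ε (Φ₁ ε x) - Φbar (2*ε) x⟫) =o[l] fun ε : ℝ => ε^2 := by
    rw [isLittleO_iff]
    intro c hc
    set η : ℝ := c / (Cd + 1) with hηdef
    have hη : 0 < η := by positivity
    obtain ⟨ζ, hζ0, hζ⟩ := Metric.continuousAt_iff.mp (hGLc.continuousAt (x := x)) η hη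
    have hPev : ∀ᶠ ε in l, dist (Φ₂ ε (Φ₁ ε x)) x < ζ := hPt (Metric.ball_mem_nhds x hζ0)
    have hQev : ∀ᶠ ε in l, dist (Φbar (2*ε) x) x < ζ := hQt (Metric.ball_mem_nhds x hζ0)
    filter_upwards [hPev, hQev, hCd] with ε hPε hQε hDε
    set P := Φ₂ ε (Φ₁ ε x) with hPdef
    set Q := Φbar (2*ε) x with hQdef
    set D := P - Q with hDdef
    set GLx := gradient L x with hGLxdef
    clear_value P Q D GLx
    have hcurve : ∀ s : ℝ, HasDerivAt (fun s : ℝ => Q + s • D) D s := by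
      intro s
      simpa using ((hasDerivAt_id s).smul_const D).const_add Q
    have hφ : ∀ s ∈ Icc (0:ℝ) 1, HasDerivAt
        (fun s : ℝ => L (Q + s • D) - s * ⟪GLx, D⟫)
        (⟪gradient L (Q + s • D), D⟫ - ⟪GLx, D⟫) s := by
      intro s _
      have h1 : HasDerivAt (fun s : ℝ => L (Q + s • D)) (fderiv ℝ L (Q + s • D) D) s :=
        ((hL.differentiable one_ne_zero) (Q + s • D)).hasFDerivAt.comp_hasDerivAt s (hcurve s)
      have h2 : HasDerivAt (fun s : ℝ => s * ⟪GLx, D⟫) (⟪GLx, D⟫) s := by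
        simpa using (hasDerivAt_id s).mul_const (⟪GLx, D⟫)
      have := h1.sub h2
      rwa [hfd] at this
    have hseg : ∀ s ∈ Ico (0:ℝ) 1, ‖Q + s • D - x‖ < ζ := by
      intro s hs
      have hid : Q + s • D - x = (1-s) • (Q - x) + s • (P - x) := by
        rw [hDdef]; simp only [smul_sub, sub_smul, one_smul]; abel
      rw [hid]
      calc ‖(1-s) • (Q - x) + s • (P - x)‖
          ≤ ‖(1-s) • (Q - x)‖ + ‖s • (P - x)‖ := norm_add_le _ _
      _ = (1-s) * ‖Q - x‖ + s * ‖P - x‖ := by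
          rw [norm_smul, norm_smul, Real.norm_eq_abs, Real.norm_eq_abs,
            abs_of_nonneg (by linarith [hs.2] : (0:ℝ) ≤ 1 - s), abs_of_nonneg hs.1]
      _ < ζ := by
          have h1 : ‖Q - x‖ < ζ := by rw [← dist_eq_norm]; exact hQε
          have h2 : ‖P - x‖ < ζ := by rw [← dist_eq_norm]; exact hPε
          nlinarith [hs.1, hs.2]
    have hbound : ∀ s ∈ Ico (0:ℝ) 1,
        ‖⟪gradient L (Q + s • D), D⟫ - ⟪GLx, D⟫‖ ≤ η * (Cd * ε^2) := by
      intro s hs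
      have h1 : ⟪gradient L (Q + s • D), D⟫ - ⟪GLx, D⟫
          = ⟪gradient L (Q + s • D) - GLx, D⟫ := by
        rw [inner_sub_left]
      rw [h1, Real.norm_eq_abs]
      calc |⟪gradient L (Q + s • D) - GLx, D⟫|
          ≤ ‖gradient L (Q + s • D) - GLx‖ * ‖D‖ := abs_real_inner_le_norm _ _
      _ ≤ η * (Cd * ε^2) := by
          apply mul_le_mul _ hDε (norm_nonneg _) (le_of_lt hη)
          have := hζ (show dist (Q + s • D) x < ζ by rw [dist_eq_norm]; exact hseg s hs)
          rw [dist_eq_norm] at this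
          exact le_of_lt this
    have hmv := norm_image_sub_le_of_norm_deriv_le_segment_01'
      (f := fun s : ℝ => L (Q + s • D) - s * ⟪GLx, D⟫)
      (f' := fun s : ℝ => ⟪gradient L (Q + s • D), D⟫ - ⟪GLx, D⟫)
      (C := η * (Cd * ε^2))
      (fun s hs => (hφ s hs).hasDerivWithinAt) hbound
    simp only [one_smul, zero_smul, add_zero, one_mul, zero_mul, sub_zero] at hmv
    rw [show Q + D = P from by rw [hDdef]; abel] at hmv
    calc ‖L P - L Q - ⟪GLx, D⟫‖ = ‖L P - ⟪GLx, D⟫ - L Q‖ := by congr 1; ring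
    _ ≤ η * (Cd * ε^2) := hmv
    _ ≤ c * ‖ε^2‖ := by
        rw [Real.norm_eq_abs, abs_of_nonneg (sq_nonneg ε)]
        have : η * Cd ≤ c := by
          rw [hηdef, div_mul_eq_mul_div, div_le_iff₀ (by linarith)]
          nlinarith
        nlinarith [sq_nonneg ε]
  -- Term B
  have key2' : (fun ε : ℝ => Φ₂ ε (Φ₁ ε x) - Φbar (2*ε) x - (δ * ε^2) • Hvec)
      =o[l] fun ε : ℝ => ε^2 :=
    key2.congr (fun ε => by rw [smul_smul, mul_comm (ε^2) δ]) (fun ε => rfl)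
  have hTermB : (fun ε : ℝ =>
      ⟪gradient L x, Φ₂ ε (Φ₁ ε x) - Φbar (2*ε) x - (δ * ε^2) • Hvec⟫)
      =o[l] fun ε : ℝ => ε^2 := by
    rw [isLittleO_iff]
    intro c hc
    have hc' : 0 < c / (‖gradient L x‖ + 1) := by positivity
    filter_upwards [key2'.def hc'] with ε hε
    rw [Real.norm_eq_abs]
    calc |⟪gradient L x, Φ₂ ε (Φ₁ ε x) - Φbar (2*ε) x - (δ * ε^2) • Hvec⟫|
        ≤ ‖gradient L x‖ * ‖Φ₂ ε (Φ₁ ε x) - Φbar (2*ε) x - (δ * ε^2) • Hvec‖ :=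
          abs_real_inner_le_norm _ _
    _ ≤ ‖gradient L x‖ * (c / (‖gradient L x‖ + 1) * ‖ε^2‖) :=
          mul_le_mul_of_nonneg_left hε (norm_nonneg _)
    _ ≤ c * ‖ε^2‖ := by
        have h1 : (0:ℝ) ≤ ‖ε^2‖ := norm_nonneg _
        have h2 : (0:ℝ) ≤ ‖gradient L x‖ := norm_nonneg _
        rw [div_mul_eq_mul_div, ← mul_div_assoc]
        rw [div_le_iff₀ (by linarith)]
        nlinarith
  -- combine
  have := hTermA.add hTermB
  refine this.congr (fun ε => ?_) (fun ε => rfl)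
  simp only [inner_sub_right, real_inner_smul_right]
  rw [real_inner_comm (gradient L x) Hvec]
  ring
end
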